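/- arXiv:1709.06334 — 4 statements merged into one kernel-verified Lean document; each statement's English description precedes it below -/
import Mathlib

section
/- For every positive integer n, r_{3,2}(n) = d(n² + 1)/2 - 1. -/
/-- The `c`-th `m`-gonal number: `P(m,c) = c((m-2)c - (m-4))/2`. -/
def polygonal (m c : ℤ) : ℤ := c * ((m - 2) * c - (m - 4)) / 2

/-- `r_{m,t}(n)`: the number of unordered pairs `{a,b}` of positive integers with
`a + b = n` such that `ab = t·P(m,c)` for some `c`, where `c` ranges over positive
integers if `m = 3` or `m = 4`, and over all integers if `m > 4`. -/
noncomputable def rmt (m t n : ℕ) : ℕ :=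
  Set.ncard {p : ℕ × ℕ | 0 < p.1 ∧ p.1 ≤ p.2 ∧ p.1 + p.2 = n ∧
    ∃ c : ℤ, ((m = 3 ∨ m = 4) → 0 < c) ∧ (p.1 : ℤ) * p.2 = t * polygonal m c}

/-- `r'_{m,t}(n)`: the number of pairs `(x,y)` of nonnegative integers with
`2(m-2)n² + t(m-4)² = 2(m-2)x² + t y²`. -/
noncomputable def rmt' (m t n : ℕ) : ℕ :=
  Set.ncard {p : ℕ × ℕ |
    2 * ((m : ℤ) - 2) * (n : ℤ) ^ 2 + t * ((m : ℤ) - 4) ^ 2 =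
    2 * ((m : ℤ) - 2) * (p.1 : ℤ) ^ 2 + t * (p.2 : ℤ) ^ 2}

/-- `d_A(n)`: the number of positive divisors of `n` not divisible by any prime in `A`.
Equivalently, `∏_{p prime, p ∉ A} (1 + ord_p(n))`. -/
def dA (A : Finset ℕ) (n : ℕ) : ℕ :=
  (n.divisors.filter (fun d => ∀ p ∈ A, ¬ p ∣ d)).card


open EuclideanDomain

set_option linter.unusedSectionVars false

namespace SqCount

abbrev GI := GaussianInt

lemma norm_nng (a : GI) : 0 ≤ a.norm := Zsqrtd.norm_nonneg (by norm_num) a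

lemma norm_zero_iff {a : GI} : a.norm = 0 ↔ a = 0 :=
  Zsqrtd.norm_eq_zero (by intro n; nlinarith [sq_nonneg n, sq_nonneg (n-1), sq_nonneg (n+1)]) a

lemma snorm_dvd {a b : GI} (h : a ∣ b) : a.norm ∣ b.norm := by
  obtain ⟨c, rfl⟩ := h; rw [Zsqrtd.norm_mul]; exact Dvd.intro _ rfl

lemma star_dvd' {a b : GI} (h : a ∣ b) : star a ∣ star b := by
  obtain ⟨c, rfl⟩ := h; exact ⟨star c, by rw [star_mul, mul_comm]⟩

lemma norm_unit {a : GI} (h : IsUnit a) : a.norm = 1 := by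
  have h1 := Zsqrtd.norm_eq_one_iff.mpr h
  have h2 := norm_nng a
  omega

lemma unit_of_norm {a : GI} (h : a.norm = 1) : IsUnit a :=
  Zsqrtd.norm_eq_one_iff.mp (by rw [h]; rfl)

lemma assoc_norm {a b : GI} (h : Associated a b) : a.norm = b.norm := by
  obtain ⟨u, rfl⟩ := h
  rw [Zsqrtd.norm_mul, norm_unit u.isUnit, mul_one]

lemma assoc_of_dvd_of_norm {a b : GI} (h : a ∣ b) (hn : a.norm = b.norm) (h0 : a ≠ 0) :
    Associated a b := by
  obtain ⟨c, rfl⟩ := h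
  have ha : a.norm ≠ 0 := fun hh => h0 (norm_zero_iff.mp hh)
  have hc : IsUnit c := by
    apply unit_of_norm
    rw [Zsqrtd.norm_mul] at hn
    exact mul_left_cancel₀ ha (by rw [← hn, mul_one])
  exact ⟨hc.unit, by rw [IsUnit.unit_spec]⟩

lemma coprime_of_gcd_unit {a b : GI} (h : IsUnit (gcd a b)) : IsCoprime a b := by
  obtain ⟨u, hu⟩ := h.exists_right_inv
  exact ⟨u * gcdA a b, u * gcdB a b, by
    linear_combination (-u) * (EuclideanDomain.gcd_eq_gcd_ab a b) + hu⟩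

lemma dvd_gcd_mul_gcd {d u w : GI} (h : d ∣ u * w) : d ∣ gcd d u * gcd d w := by
  obtain ⟨e, he⟩ := h
  exact ⟨gcdA d u * gcd d w + gcdB d u * u * gcdA d w + gcdB d u * gcdB d w * e, by
    linear_combination (gcd d w) * EuclideanDomain.gcd_eq_gcd_ab d u +
      (gcdB d u * u) * EuclideanDomain.gcd_eq_gcd_ab d w + (gcdB d u * gcdB d w) * he⟩

lemma gcd_comm_assoc (a b : GI) : Associated (gcd a b) (gcd b a) :=
  associated_of_dvd_dvd (dvd_gcd (gcd_dvd_right _ _) (gcd_dvd_left _ _))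
    (dvd_gcd (gcd_dvd_right _ _) (gcd_dvd_left _ _))

lemma star_gcd (a b : GI) : Associated (star (gcd a b)) (gcd (star a) (star b)) := by
  refine associated_of_dvd_dvd
    (dvd_gcd (star_dvd' (gcd_dvd_left _ _)) (star_dvd' (gcd_dvd_right _ _))) ?_
  have h1 : star (gcd (star a) (star b)) ∣ gcd a b := by
    refine dvd_gcd ?_ ?_
    · have := star_dvd' (gcd_dvd_left (star a) (star b)); rwa [star_star] at this
    · have := star_dvd' (gcd_dvd_right (star a) (star b)); rwa [star_star] at this
  have := star_dvd' h1
  rwa [star_star] at this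

lemma assoc_gcd_left {a a' : GI} (b : GI) (h : Associated a a') :
    Associated (gcd a b) (gcd a' b) :=
  associated_of_dvd_dvd (dvd_gcd ((gcd_dvd_left a b).trans h.dvd) (gcd_dvd_right _ _))
    (dvd_gcd ((gcd_dvd_left a' b).trans h.symm.dvd) (gcd_dvd_right _ _))

/-! ### The divisor parametrization -/

noncomputable def g (v : GI) (d : ℕ) : GI := gcd ((d : ℤ) : GI) v

noncomputable def wD (v : GI) (d : ℕ) : GI := (((d : ℤ) : GI) * v) / (g v d) ^ 2

section Main

variable {M : ℕ} {v : GI} (hM : Odd M) (hv : v.norm = M) (hcop : IsUnit (gcd v (star v)))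

include hM hv hcop

lemma vsv : v * star v = ((M : ℤ) : GI) := by rw [← Zsqrtd.norm_eq_mul_conj, hv]

lemma norm_g {d : ℕ} (hd : d ∣ M) : (g v d).norm = d := by
  set α := g v d with hα
  set β := gcd ((d : ℤ) : GI) (star v) with hβ
  have hsd : star (((d:ℤ)) : GI) = ((d:ℤ) : GI) := star_intCast _
  have hsα : star α ∣ β := by
    refine dvd_gcd ?_ (star_dvd' (gcd_dvd_right _ _))
    have := star_dvd' (gcd_dvd_left ((d:ℤ):GI) v); rwa [hsd] at this
  have hsβ : star β ∣ α := by
    refine dvd_gcd ?_ ?_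
    · have := star_dvd' (gcd_dvd_left ((d:ℤ):GI) (star v)); rwa [hsd] at this
    · have := star_dvd' (gcd_dvd_right ((d:ℤ):GI) (star v)); rwa [star_star] at this
  have hne : α.norm = β.norm := by
    refine Int.dvd_antisymm (norm_nng _) (norm_nng _) ?_ ?_
    · have := snorm_dvd hsα; rwa [Zsqrtd.norm_conj] at this
    · have := snorm_dvd hsβ; rwa [Zsqrtd.norm_conj] at this
  have hunit : IsUnit (gcd α β) :=
    isUnit_of_dvd_unit (dvd_gcd ((gcd_dvd_left α β).trans (gcd_dvd_right _ _))
      ((gcd_dvd_right α β).trans (gcd_dvd_right _ _))) hcop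
  have h1 : α * β ∣ ((d:ℤ) : GI) :=
    (coprime_of_gcd_unit hunit).mul_dvd (gcd_dvd_left _ _) (gcd_dvd_left _ _)
  have h2 : ((d:ℤ):GI) ∣ α * β := by
    apply dvd_gcd_mul_gcd
    rw [vsv hM hv hcop]
    have h2' : ((d:ℤ) : GI) ∣ ((M:ℤ) : GI) :=
      (Zsqrtd.intCast_dvd_intCast _ _).mpr (Int.natCast_dvd_natCast.mpr hd)
    exact h2'
  have h3 : α.norm * β.norm = (d:ℤ) * (d:ℤ) := by
    have := assoc_norm (associated_of_dvd_dvd h2 h1)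
    rw [Zsqrtd.norm_mul, Zsqrtd.norm_intCast] at this
    exact this.symm
  rw [← hne] at h3
  have h4 : (α.norm - (d:ℤ)) * (α.norm + (d:ℤ)) = 0 := by linear_combination h3
  have h5 := norm_nng α
  rcases mul_eq_zero.mp h4 with h | h
  · omega
  · have : (0:ℤ) ≤ (d:ℤ) := by positivity
    omega

lemma d_pos {d : ℕ} (hd : d ∣ M) : 0 < d := by
  rcases Nat.eq_zero_or_pos d with h | h
  · subst h; rw [zero_dvd_iff] at hd; subst hd; rw [Nat.odd_iff] at hM; omega
  · exact h

lemma g_ne_zero {d : ℕ} (hd : d ∣ M) : g v d ≠ 0 := by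
  intro h
  have h1 := norm_g hM hv hcop hd
  rw [h] at h1
  simp only [Zsqrtd.norm_zero] at h1
  have h2 := d_pos hM hv hcop hd
  omega

lemma wD_mul {d : ℕ} (hd : d ∣ M) : wD v d * (g v d) ^ 2 = ((d : ℤ) : GI) * v := by
  have hdvd : (g v d) ^ 2 ∣ ((d:ℤ):GI) * v := by
    rw [sq]; exact mul_dvd_mul (gcd_dvd_left _ _) (gcd_dvd_right _ _)
  rw [wD, mul_comm]
  exact EuclideanDomain.mul_div_cancel' (pow_ne_zero 2 (g_ne_zero hM hv hcop hd)) hdvd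

lemma norm_wD {d : ℕ} (hd : d ∣ M) : (wD v d).norm = M := by
  have h := congrArg Zsqrtd.norm (wD_mul hM hv hcop hd)
  rw [Zsqrtd.norm_mul, sq, Zsqrtd.norm_mul, norm_g hM hv hcop hd, Zsqrtd.norm_mul,
    Zsqrtd.norm_intCast, hv] at h
  have hd0 : ((d:ℤ) * (d:ℤ)) ≠ 0 := by
    have := d_pos hM hv hcop hd; positivity
  refine mul_right_cancel₀ hd0 ?_
  linarith

lemma wD_eq {d : ℕ} (hd : d ∣ M) :
    ∃ v₁ : GI, v = g v d * v₁ ∧ wD v d = star (g v d) * v₁ := by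
  obtain ⟨v₁, hv₁⟩ := (gcd_dvd_right ((d:ℤ):GI) v : g v d ∣ v)
  have hv₂ : v = g v d * v₁ := hv₁
  refine ⟨v₁, hv₂, ?_⟩
  have hgg : ((d:ℤ):GI) = g v d * star (g v d) := by
    have := Zsqrtd.norm_eq_mul_conj (g v d)
    rw [norm_g hM hv hcop hd] at this
    exact this
  apply mul_right_cancel₀ (pow_ne_zero 2 (g_ne_zero hM hv hcop hd))
  rw [wD_mul hM hv hcop hd]
  calc ((d:ℤ):GI) * v = (g v d * star (g v d)) * (g v d * v₁) := by rw [← hgg, ← hv₂]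
    _ = star (g v d) * v₁ * (g v d) ^ 2 := by ring

end Main

section Main2

variable {M : ℕ} {v : GI} (hM : Odd M) (hv : v.norm = M) (hcop : IsUnit (gcd v (star v)))

include hM hv hcop

lemma norm_gcd_wD_star {d : ℕ} (hd : d ∣ M) :
    (gcd (wD v d) (star v)).norm = d := by
  obtain ⟨v₁, hv1, hw⟩ := wD_eq hM hv hcop hd
  have hv1' : star v = star (g v d) * star v₁ := by
    conv_lhs => rw [hv1, star_mul, mul_comm]
  have hu1 : IsUnit (gcd v₁ (star v₁)) := by
    refine isUnit_of_dvd_unit (dvd_gcd ?_ ?_) hcop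
    · exact (EuclideanDomain.gcd_dvd_left v₁ (star v₁)).trans
        ⟨g v d, by linear_combination hv1⟩
    · exact (EuclideanDomain.gcd_dvd_right v₁ (star v₁)).trans
        ⟨star (g v d), by linear_combination hv1'⟩
  obtain ⟨x, y, hxy⟩ := coprime_of_gcd_unit hu1
  have h1 : star (g v d) ∣ gcd (wD v d) (star v) :=
    dvd_gcd (by rw [hw]; exact dvd_mul_right _ _) (by rw [hv1']; exact dvd_mul_right _ _)
  have h2 : gcd (wD v d) (star v) ∣ star (g v d) := by
    have d1 : gcd (wD v d) (star v) ∣ star (g v d) * v₁ := by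
      rw [← hw]; exact gcd_dvd_left _ _
    have d2 : gcd (wD v d) (star v) ∣ star (g v d) * star v₁ := by
      rw [← hv1']; exact gcd_dvd_right _ _
    have h3 := dvd_add (d1.mul_left x) (d2.mul_left y)
    have heq : x * (star (g v d) * v₁) + y * (star (g v d) * star v₁) = star (g v d) := by
      linear_combination (star (g v d)) * hxy
    rwa [heq] at h3
  have := assoc_norm (associated_of_dvd_dvd h2 h1)
  rw [this, Zsqrtd.norm_conj, norm_g hM hv hcop hd]

lemma wD_inj {d d' : ℕ} (hd : d ∣ M) (hd' : d' ∣ M)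
    (h : Associated (wD v d) (wD v d')) : d = d' := by
  have h1 := norm_gcd_wD_star hM hv hcop hd
  have h2 := norm_gcd_wD_star hM hv hcop hd'
  have h3 := assoc_norm (assoc_gcd_left (star v) h)
  rw [h1, h2] at h3
  exact_mod_cast h3

lemma wD_surj {z : GI} (hz : z.norm = M) :
    ∃ d : ℕ, d ∣ M ∧ Associated (wD v d) z := by
  have hM0 : M ≠ 0 := by rintro rfl; rw [Nat.odd_iff] at hM; omega
  have hv0 : v ≠ 0 := by
    intro h; rw [h] at hv; simp only [Zsqrtd.norm_zero] at hv
    exact hM0 (by exact_mod_cast hv.symm)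
  have hzz : z * star z = v * star v := by
    rw [← Zsqrtd.norm_eq_mul_conj, ← Zsqrtd.norm_eq_mul_conj, hz, hv]
  have h1 : z ∣ gcd z v * gcd z (star v) :=
    dvd_gcd_mul_gcd (by rw [← hzz]; exact ⟨star z, rfl⟩)
  set γ := gcd z v with hγ
  set δ := gcd z (star v) with hδ
  have hcγδ : IsCoprime γ δ := coprime_of_gcd_unit (isUnit_of_dvd_unit
    (dvd_gcd ((EuclideanDomain.gcd_dvd_left γ δ).trans (gcd_dvd_right z v))
             ((EuclideanDomain.gcd_dvd_right γ δ).trans (gcd_dvd_right z (star v)))) hcop)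
  have h2 : γ * δ ∣ z := hcγδ.mul_dvd (gcd_dvd_left _ _) (gcd_dvd_left _ _)
  have hassoc : Associated z (γ * δ) := associated_of_dvd_dvd h1 h2
  have hnorm : γ.norm * δ.norm = (M : ℤ) := by
    have := assoc_norm hassoc
    rw [Zsqrtd.norm_mul] at this
    rw [← this, hz]
  have hδ0 : δ.norm ≠ 0 := by
    intro h
    have : (M:ℤ) = 0 := by rw [← hnorm, h, mul_zero]
    exact hM0 (by exact_mod_cast this)
  set d : ℕ := δ.norm.toNat with hd_def
  have hdd : (d : ℤ) = δ.norm := Int.toNat_of_nonneg (norm_nng δ)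
  have hdM : d ∣ M := by
    have h5 : δ.norm ∣ (M:ℤ) := by
      have := snorm_dvd (gcd_dvd_right z (star v))
      rwa [Zsqrtd.norm_conj, hv] at this
    rw [← hdd] at h5
    exact_mod_cast h5
  have hv2 : v ∣ gcd v z * gcd v (star z) :=
    dvd_gcd_mul_gcd (by rw [hzz]; exact ⟨star v, rfl⟩)
  have e1 : Associated (gcd v z) γ := gcd_comm_assoc _ _
  have e2 : Associated (gcd v (star z)) (star δ) := by
    have hsg := star_gcd z (star v)
    rw [star_star] at hsg
    exact (gcd_comm_assoc v (star z)).trans hsg.symm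
  have h3 : v ∣ γ * star δ := hv2.trans (e1.mul_mul e2).dvd
  have h4 : Associated v (γ * star δ) := by
    refine assoc_of_dvd_of_norm h3 ?_ hv0
    rw [hv, Zsqrtd.norm_mul, Zsqrtd.norm_conj, hnorm]
  have hδne : δ ≠ 0 := fun h => hδ0 (by rw [h]; simp)
  have hsδ : star δ ≠ 0 := fun h => hδne (by simpa using congrArg star h)
  have hdeq : ((d:ℤ):GI) = δ * star δ := by rw [hdd]; exact Zsqrtd.norm_eq_mul_conj δ
  have hgd : Associated (star δ) (g v d) := by
    refine assoc_of_dvd_of_norm (dvd_gcd ?_ ?_) ?_ hsδ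
    · rw [hdeq]; exact dvd_mul_left _ _
    · have := star_dvd' (gcd_dvd_right z (star v)); rwa [star_star] at this
    · rw [Zsqrtd.norm_conj, norm_g hM hv hcop hdM, hdd]
  have hpow : Associated ((g v d) ^ 2) ((star δ) ^ 2) := by
    rw [sq, sq]; exact hgd.symm.mul_mul hgd.symm
  have c1 : Associated (z * (g v d) ^ 2) ((γ * δ) * (star δ) ^ 2) := hassoc.mul_mul hpow
  have c2 : (γ * δ) * (star δ) ^ 2 = (δ * star δ) * (γ * star δ) := by ring
  have c3 : Associated ((δ * star δ) * (γ * star δ)) (((d:ℤ):GI) * v) := by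
    rw [hdeq]
    exact (Associated.refl _).mul_mul h4.symm
  have h5 : Associated (z * (g v d) ^ 2) (wD v d * (g v d) ^ 2) := by
    rw [wD_mul hM hv hcop hdM]
    exact (c1.trans (c2 ▸ c3))
  have hgne := g_ne_zero hM hv hcop hdM
  exact ⟨d, hdM, (Associated.of_mul_right h5 (Associated.refl _)
    (pow_ne_zero 2 hgne)).symm⟩

end Main2

/-! ### Fundamental-domain representatives -/

def fdrep (z : GI) : GI :=
  if |z.im| < z.re then z
  else if |z.re| < z.im then ⟨z.im, -z.re⟩
  else if |z.im| < -z.re then -z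
  else ⟨-z.im, z.re⟩

lemma sq_sum_one {r i : ℤ} (h : r * r + i * i = 1) :
    (r = 0 ∧ (i = 1 ∨ i = -1)) ∨ (i = 0 ∧ (r = 1 ∨ r = -1)) := by
  have hr1 : -1 ≤ r := by nlinarith
  have hr2 : r ≤ 1 := by nlinarith
  have hi1 : -1 ≤ i := by nlinarith
  have hi2 : i ≤ 1 := by nlinarith
  interval_cases r <;> interval_cases i <;> omega

lemma unit_cases {u : GI} (h : IsUnit u) :
    u = 1 ∨ u = -1 ∨ u = ⟨0, 1⟩ ∨ u = ⟨0, -1⟩ := by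
  have h1 := norm_unit h
  rw [Zsqrtd.norm_def] at h1
  have h2 : u.re * u.re + u.im * u.im = 1 := by linarith
  rcases sq_sum_one h2 with ⟨ha, hb | hb⟩ | ⟨ha, hb | hb⟩
  · right; right; left; exact Zsqrtd.ext ha hb
  · right; right; right; exact Zsqrtd.ext ha hb
  · left; exact Zsqrtd.ext hb ha
  · right; left; exact Zsqrtd.ext hb ha

lemma unit_i : IsUnit (⟨0, 1⟩ : GI) := by
  apply unit_of_norm; simp [Zsqrtd.norm_def]

lemma unit_negi : IsUnit (⟨0, -1⟩ : GI) := by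
  apply unit_of_norm; simp [Zsqrtd.norm_def]

lemma mul_i (z : GI) : z * ⟨0, 1⟩ = ⟨-z.im, z.re⟩ := by
  refine Zsqrtd.ext ?_ ?_ <;> simp [Zsqrtd.re_mul, Zsqrtd.im_mul]

lemma mul_negi (z : GI) : z * ⟨0, -1⟩ = ⟨z.im, -z.re⟩ := by
  refine Zsqrtd.ext ?_ ?_ <;> simp [Zsqrtd.re_mul, Zsqrtd.im_mul]

lemma fdrep_spec {z : GI} (hodd : Odd z.norm) :
    Associated z (fdrep z) ∧ |(fdrep z).im| < (fdrep z).re := by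
  have hne1 : z.re ≠ z.im := by
    intro h; rw [Zsqrtd.norm_def, h] at hodd
    exact ((fun he => Int.not_odd_iff_even.mpr he) ⟨z.im * z.im, by ring⟩) hodd
  have hne2 : z.re ≠ -z.im := by
    intro h; rw [Zsqrtd.norm_def, h] at hodd
    exact ((fun he => Int.not_odd_iff_even.mpr he) ⟨z.im * z.im, by ring⟩) hodd
  unfold fdrep
  split_ifs with h1 h2 h3
  · exact ⟨Associated.refl z, h1⟩
  · refine ⟨⟨unit_negi.unit, ?_⟩, ?_⟩
    · rw [IsUnit.unit_spec, mul_negi]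
    · show |(-z.re)| < z.im
      rwa [abs_neg]
  · refine ⟨⟨(-1 : GIˣ), by simp⟩, ?_⟩
    show |(-z).im| < (-z).re
    rwa [Zsqrtd.im_neg, Zsqrtd.re_neg, abs_neg]
  · refine ⟨⟨unit_i.unit, ?_⟩, ?_⟩
    · rw [IsUnit.unit_spec, mul_i]
    · show |z.re| < -z.im
      push_neg at h1 h2 h3
      rcases abs_cases z.re with ⟨e1, _⟩ | ⟨e1, _⟩ <;>
        rcases abs_cases z.im with ⟨f1, _⟩ | ⟨f1, _⟩ <;>
        rw [e1] at h2 ⊢ <;> rw [f1] at h1 h3 <;> omega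

lemma fd_unique {z w : GI} (hz : |z.im| < z.re) (hw : |w.im| < w.re)
    (h : Associated z w) : z = w := by
  obtain ⟨u, rfl⟩ := h
  rcases unit_cases u.isUnit with h1 | h1 | h1 | h1 <;> rw [h1] at hw ⊢
  · rw [mul_one]
  · exfalso
    rw [show z * (-1) = -z by ring, Zsqrtd.im_neg, Zsqrtd.re_neg, abs_neg] at hw
    have := abs_nonneg z.im
    omega
  · exfalso
    rw [mul_i] at hw
    show False
    have h2 : |z.re| < -z.im := by simpa using hw
    rcases abs_cases z.re with ⟨e1, _⟩ | ⟨e1, _⟩ <;>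
      rcases abs_cases z.im with ⟨f1, _⟩ | ⟨f1, _⟩ <;> rw [e1] at h2 <;>
      rw [f1] at hz <;> omega
  · exfalso
    rw [mul_negi] at hw
    have h2 : |z.re| < z.im := by simpa [abs_neg] using hw
    rcases abs_cases z.re with ⟨e1, _⟩ | ⟨e1, _⟩ <;>
      rcases abs_cases z.im with ⟨f1, _⟩ | ⟨f1, _⟩ <;> rw [e1] at h2 <;>
      rw [f1] at hz <;> omega

/-! ### Counting -/

def FD (m : ℕ) : Set GI := {z : GI | z.norm = m ∧ |z.im| < z.re}

lemma FD_finite (m : ℕ) : (FD m).Finite := by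
  have hsub : FD m ⊆ ↑((Finset.Icc (-(m:ℤ)) m ×ˢ Finset.Icc (-(m:ℤ)) m).image
      (fun p : ℤ × ℤ => (⟨p.1, p.2⟩ : GI))) := by
    intro z hz
    obtain ⟨h1, _⟩ := hz
    rw [Zsqrtd.norm_def] at h1
    have hm0 : (0:ℤ) ≤ (m:ℤ) := Int.natCast_nonneg m
    simp only [Finset.coe_image, Set.mem_image, Finset.mem_coe, Finset.mem_product,
      Finset.mem_Icc]
    refine ⟨(z.re, z.im), ⟨⟨?_, ?_⟩, ?_, ?_⟩, Zsqrtd.ext rfl rfl⟩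
    · show -(m:ℤ) ≤ z.re
      nlinarith [sq_nonneg (z.re + (m:ℤ)), sq_nonneg z.im, sq_nonneg (z.re - (m:ℤ))]
    · show z.re ≤ (m:ℤ)
      nlinarith [sq_nonneg (z.re + (m:ℤ)), sq_nonneg z.im, sq_nonneg (z.re - (m:ℤ))]
    · show -(m:ℤ) ≤ z.im
      nlinarith [sq_nonneg (z.im + (m:ℤ)), sq_nonneg z.re, sq_nonneg (z.im - (m:ℤ))]
    · show z.im ≤ (m:ℤ)
      nlinarith [sq_nonneg (z.im + (m:ℤ)), sq_nonneg z.re, sq_nonneg (z.im - (m:ℤ))]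
  exact Set.Finite.subset (Finset.finite_toSet _) hsub

theorem card_FD {M : ℕ} {v : GI} (hM : Odd M) (hv : v.norm = M)
    (hcop : IsUnit (gcd v (star v))) :
    (FD M).ncard = M.divisors.card := by
  have hM0 : M ≠ 0 := by rintro rfl; rw [Nat.odd_iff] at hM; omega
  have hoddw : ∀ d : ℕ, d ∣ M → Odd (wD v d).norm := by
    intro d hd
    rw [norm_wD hM hv hcop hd]
    exact (Int.odd_coe_nat M).mpr hM
  have key : Set.BijOn (fun d => fdrep (wD v d)) ↑M.divisors (FD M) := by
    refine ⟨?_, ?_, ?_⟩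
    · intro d hd
      rw [Finset.mem_coe, Nat.mem_divisors] at hd
      obtain ⟨ha, hf⟩ := fdrep_spec (hoddw d hd.1)
      refine ⟨?_, hf⟩
      rw [← assoc_norm ha, norm_wD hM hv hcop hd.1]
    · intro d hd d' hd' heq
      rw [Finset.mem_coe, Nat.mem_divisors] at hd hd'
      simp only at heq
      have h1 := (fdrep_spec (hoddw d hd.1)).1
      have h2 := (fdrep_spec (hoddw d' hd'.1)).1
      exact wD_inj hM hv hcop hd.1 hd'.1 (h1.trans (heq ▸ h2.symm))
    · intro z hz
      obtain ⟨hzn, hzf⟩ := hz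
      obtain ⟨d, hdM, ha⟩ := wD_surj hM hv hcop hzn
      refine ⟨d, ?_, ?_⟩
      · rw [Finset.mem_coe, Nat.mem_divisors]; exact ⟨hdM, hM0⟩
      · obtain ⟨ha2, hf2⟩ := fdrep_spec (hoddw d hdM)
        exact fd_unique hf2 hzf (ha2.symm.trans ha)
  rw [← key.image_eq, Set.ncard_image_of_injOn key.injOn, Set.ncard_coe_finset]


def Pairs (n : ℕ) : Set (ℕ × ℕ) :=
  {p | 0 < p.1 ∧ p.1 ≤ p.2 ∧ p.1 + p.2 = n ∧ ∃ c : ℤ, 0 < c ∧ (p.1 : ℤ) * p.2 = c * (c + 1)}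

noncomputable def sq2 (p : ℕ × ℕ) : ℤ := Int.sqrt (4 * (p.1 : ℤ) * p.2 + 1)

lemma pair_facts {n : ℕ} {p : ℕ × ℕ} (hp : p ∈ Pairs n) :
    (0:ℤ) ≤ (p.2:ℤ) - p.1 ∧ (p.2:ℤ) - p.1 ≤ (n:ℤ) - 2 ∧
    3 ≤ sq2 p ∧ Odd (sq2 p) ∧
    sq2 p * sq2 p = 4 * (p.1:ℤ) * p.2 + 1 ∧
    ((p.2:ℤ) - p.1) + 2 * (p.1:ℤ) = n ∧
    ((p.2:ℤ) - p.1) * ((p.2:ℤ) - p.1) + sq2 p * sq2 p = (n:ℤ) * n + 1 := by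
  obtain ⟨ha, hab, hsum, c, hc0, hcc⟩ := hp
  have h4 : 4 * (p.1:ℤ) * p.2 + 1 = (2*c+1) * (2*c+1) := by linear_combination 4 * hcc
  have hs : sq2 p = 2*c+1 := by
    rw [sq2, h4, Int.sqrt_eq, Int.natAbs_of_nonneg (by omega)]
  have hn : (p.1 : ℤ) + p.2 = n := by exact_mod_cast congrArg (Nat.cast : ℕ → ℤ) hsum
  refine ⟨by omega, ?_, by omega, by rw [hs]; exact ⟨c, by ring⟩, by rw [hs]; linarith [h4],
    by omega, ?_⟩
  · have h1 : (1:ℤ) ≤ p.1 := by exact_mod_cast ha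
    have h2 : (p.1:ℤ) ≤ p.2 := by exact_mod_cast hab
    omega
  · rw [hs]; linear_combination (-4) * hcc + ((p.1:ℤ) + p.2 + (n:ℤ)) * hn

lemma not_square {n : ℕ} (hn : 0 < n) (x : ℤ) : x * x ≠ (n:ℤ) * n + 1 := by
  intro h
  have h2 : (x - (n:ℤ)) * (x + (n:ℤ)) = 1 := by linear_combination h
  have hn1 : (1:ℤ) ≤ (n:ℤ) := by exact_mod_cast hn
  rcases Int.eq_one_or_neg_one_of_mul_eq_one' h2 with ⟨h3, h4⟩ | ⟨h3, h4⟩ <;> omega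

noncomputable def phiE (p : ℕ × ℕ) : GI :=
  if ((p.2:ℤ) - p.1) < sq2 p then ⟨sq2 p, (p.2:ℤ) - p.1⟩ else ⟨(p.2:ℤ) - p.1, sq2 p⟩

noncomputable def phiO (p : ℕ × ℕ) : GI :=
  ⟨(sq2 p + ((p.2:ℤ) - p.1)) / 2, (sq2 p - ((p.2:ℤ) - p.1)) / 2⟩

lemma build_pair {n : ℕ} {k s : ℤ} (hk0 : 0 < k) (hkn : k % 2 = (n:ℤ) % 2)
    (hs3 : 3 ≤ s) (hsodd : s % 2 = 1) (hks : k * k + s * s = (n:ℤ) * n + 1) :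
    ∃ p : ℕ × ℕ, p ∈ Pairs n ∧ (p.2:ℤ) - p.1 = k ∧ sq2 p = s := by
  have hn0 : (0:ℤ) ≤ (n:ℤ) := Int.natCast_nonneg n
  have hn3 : 3 ≤ (n:ℤ) := by nlinarith
  have hkltn : k < (n:ℤ) := by nlinarith
  set a : ℕ := (n - k.toNat) / 2 with ha
  set b : ℕ := n - a with hb
  have hkt : (k.toNat : ℤ) = k := Int.toNat_of_nonneg hk0.le
  have h2a : 2 * a + k.toNat = n := by omega
  have hA : 2 * (a:ℤ) = (n:ℤ) - k := by omega
  have hB : 2 * (b:ℤ) = (n:ℤ) + k := by omega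
  obtain ⟨c, hc⟩ : Odd s := Int.odd_iff.mpr hsodd
  have hc1 : 0 < c := by omega
  have hab4 : 4 * ((a:ℤ) * (b:ℤ)) = 4 * (c * (c+1)) := by
    linear_combination (2*(b:ℤ)) * hA + ((n:ℤ) - k) * hB - hks + (s + 2*c + 1) * hc
  have habc : (a:ℤ) * b = c * (c+1) := by
    have h4 : (4:ℤ) ≠ 0 := by norm_num
    exact mul_left_cancel₀ h4 hab4
  have hmem : (a, b) ∈ Pairs n := ⟨by omega, by omega, by omega, c, hc1, habc⟩
  have hss : sq2 (a, b) = s := by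
    have h1 : 4 * ((a:ℤ)) * b + 1 = s * s := by
      linear_combination hab4 - (s + 2*c + 1) * hc
    rw [sq2]
    show Int.sqrt (4 * ((a:ℤ)) * (b:ℤ) + 1) = s
    rw [h1, Int.sqrt_eq, Int.natAbs_of_nonneg (by omega)]
  exact ⟨(a, b), hmem, by omega, hss⟩

lemma bijE {n : ℕ} (hn : 2 ≤ n) (he : Even n) :
    Set.BijOn phiE (Pairs n)
      ({z : GI | z.norm = (n:ℤ) * n + 1 ∧ |z.im| < z.re ∧ 0 < z.im} \ {(⟨(n:ℤ), 1⟩ : GI)}) := by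
  have hne : n % 2 = 0 := Nat.even_iff.mp he
  refine ⟨?_, ?_, ?_⟩
  · rintro p hp
    obtain ⟨hk0, hkn, hs3, hsodd, hss, hkn2, hsum2⟩ := pair_facts hp
    have hso : sq2 p % 2 = 1 := Int.odd_iff.mp hsodd
    have hkev : ((p.2:ℤ) - p.1) % 2 = 0 := by omega
    have hkpos : 0 < (p.2:ℤ) - p.1 := by
      rcases lt_or_eq_of_le hk0 with h | h
      · exact h
      · exfalso
        refine not_square (show 0 < n by omega) (sq2 p) ?_
        linear_combination hsum2 + ((p.2:ℤ) - p.1) * h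
    constructor
    · unfold phiE
      split_ifs with hlt
      · refine ⟨?_, ?_, ?_⟩
        · show Zsqrtd.norm ⟨sq2 p, (p.2:ℤ) - p.1⟩ = (n:ℤ) * n + 1
          rw [Zsqrtd.norm_def]
          dsimp only
          linear_combination hsum2
        · show |(p.2:ℤ) - p.1| < sq2 p
          rw [abs_of_nonneg hk0]; exact hlt
        · exact hkpos
      · refine ⟨?_, ?_, ?_⟩
        · show Zsqrtd.norm ⟨(p.2:ℤ) - p.1, sq2 p⟩ = (n:ℤ) * n + 1
          rw [Zsqrtd.norm_def]
          dsimp only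
          linear_combination hsum2
        · show |sq2 p| < (p.2:ℤ) - p.1
          rw [abs_of_nonneg (by omega : (0:ℤ) ≤ sq2 p)]
          omega
        · show (0:ℤ) < sq2 p
          omega
    · intro hu
      rw [Set.mem_singleton_iff] at hu
      have him := congrArg Zsqrtd.im hu
      unfold phiE at him
      split_ifs at him <;> dsimp only at him <;> omega
  · intro p hp q hq heq
    obtain ⟨hk0p, hknp, hs3p, hsoddp, hssp, hkn2p, hsum2p⟩ := pair_facts hp
    obtain ⟨hk0q, hknq, hs3q, hsoddq, hssq, hkn2q, hsum2q⟩ := pair_facts hq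
    have hsop := Int.odd_iff.mp hsoddp
    have hsoq := Int.odd_iff.mp hsoddq
    unfold phiE at heq
    split_ifs at heq <;>
    · obtain ⟨h1, h2⟩ := Zsqrtd.ext_iff.mp heq
      dsimp only at h1 h2
      have hpq : p.1 = q.1 ∧ p.2 = q.2 := by omega
      exact Prod.ext hpq.1 hpq.2
  · rintro z ⟨⟨hzn, hzf, hzp⟩, hzu⟩
    rw [Set.mem_singleton_iff] at hzu
    have hxy : z.re * z.re + z.im * z.im = (n:ℤ) * n + 1 := by
      rw [Zsqrtd.norm_def] at hzn; linarith
    have hyx : z.im < z.re := lt_of_abs_lt hzf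
    have hy0 : 0 < z.im := hzp
    have hx0 : 0 < z.re := hy0.trans hyx
    obtain ⟨r, hr⟩ := he
    have hrz : (n:ℤ) = (r:ℤ) + r := by exact_mod_cast congrArg (Nat.cast : ℕ → ℤ) hr
    have hnodd : (z.re % 2 = 0 ∧ z.im % 2 = 1) ∨ (z.re % 2 = 1 ∧ z.im % 2 = 0) := by
      rcases Int.even_or_odd z.re with hx | hx <;> rcases Int.even_or_odd z.im with hy | hy
      · exfalso
        obtain ⟨a, ha⟩ := hx; obtain ⟨b, hb⟩ := hy
        have h6 : (1:ℤ) = 4 * (a*a + b*b - (r:ℤ)*r) := by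
          linear_combination -hxy + (z.re + a + a) * ha + (z.im + b + b) * hb -
            ((n:ℤ) + r + r) * hrz
        have : (4:ℤ) ∣ 1 := ⟨a*a + b*b - (r:ℤ)*r, h6⟩
        norm_num at this
      · exact Or.inl ⟨Int.even_iff.mp hx, Int.odd_iff.mp hy⟩
      · exact Or.inr ⟨Int.odd_iff.mp hx, Int.even_iff.mp hy⟩
      · exfalso
        obtain ⟨a, ha⟩ := hx; obtain ⟨b, hb⟩ := hy
        have h6 : (1:ℤ) = 4 * ((r:ℤ)*r - a*a - a - b*b - b) := by
          linear_combination hxy - (z.re + 2*a + 1) * ha - (z.im + 2*b + 1) * hb +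
            ((n:ℤ) + r + r) * hrz
        have : (4:ℤ) ∣ 1 := ⟨(r:ℤ)*r - a*a - a - b*b - b, h6⟩
        norm_num at this
    rcases hnodd with ⟨hxe, hyo⟩ | ⟨hxo, hye⟩
    · -- k = z.re (even), s = z.im (odd)
      have hy1 : z.im ≠ 1 := by
        intro h1
        apply hzu
        have hxn : z.re = (n:ℤ) := by
          have h2 : (z.re - (n:ℤ)) * (z.re + (n:ℤ)) = 0 := by
            linear_combination hxy - (z.im + 1) * h1
          rcases mul_eq_zero.mp h2 with h | h
          · omega
          · omega
        exact Zsqrtd.ext hxn h1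
      have hy3 : 3 ≤ z.im := by omega
      obtain ⟨p, hpm, hpk, hps⟩ := build_pair (n := n) hx0 (by omega) hy3 hyo
        (by linear_combination hxy)
      refine ⟨p, hpm, ?_⟩
      unfold phiE
      rw [if_neg (by omega)]
      refine Zsqrtd.ext ?_ ?_ <;> dsimp only <;> omega
    · -- k = z.im (even), s = z.re (odd)
      have hx3 : 3 ≤ z.re := by omega
      obtain ⟨p, hpm, hpk, hps⟩ := build_pair (n := n) hy0 (by omega) hx3 hxo
        (by linear_combination hxy)
      refine ⟨p, hpm, ?_⟩
      unfold phiE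
      rw [if_pos (by omega)]
      refine Zsqrtd.ext ?_ ?_ <;> dsimp only <;> omega

lemma bijO {n t : ℕ} (hnt : n = 2*t + 1) :
    Set.BijOn phiO (Pairs n)
      ({z : GI | z.norm = 2*(t:ℤ)*t + 2*t + 1 ∧ |z.im| < z.re} \
        {(⟨(t:ℤ)+1, -(t:ℤ)⟩ : GI)}) := by
  have hnz : (n:ℤ) = 2*(t:ℤ) + 1 := by exact_mod_cast congrArg (Nat.cast : ℕ → ℤ) hnt
  refine ⟨?_, ?_, ?_⟩
  · rintro p hp
    obtain ⟨hk0, hkn, hs3, hsodd, hss, hkn2, hsum2⟩ := pair_facts hp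
    have hso : sq2 p % 2 = 1 := Int.odd_iff.mp hsodd
    have hkodd : ((p.2:ℤ) - p.1) % 2 = 1 := by omega
    have h2x : 2 * ((sq2 p + ((p.2:ℤ) - p.1)) / 2) = sq2 p + ((p.2:ℤ) - p.1) :=
      Int.mul_ediv_cancel' (by omega)
    have h2y : 2 * ((sq2 p - ((p.2:ℤ) - p.1)) / 2) = sq2 p - ((p.2:ℤ) - p.1) :=
      Int.mul_ediv_cancel' (by omega)
    constructor
    · refine ⟨?_, ?_⟩
      · show Zsqrtd.norm ⟨(sq2 p + ((p.2:ℤ) - p.1)) / 2, (sq2 p - ((p.2:ℤ) - p.1)) / 2⟩ =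
          2*(t:ℤ)*t + 2*t + 1
        rw [Zsqrtd.norm_def]
        dsimp only
        set X := (sq2 p + ((p.2:ℤ) - p.1)) / 2 with hX
        set Y := (sq2 p - ((p.2:ℤ) - p.1)) / 2 with hY
        have key : (4:ℤ) * (X*X + Y*Y) = 4 * (2*(t:ℤ)*t + 2*t + 1) := by
          linear_combination (2*X + sq2 p + ((p.2:ℤ) - p.1)) * h2x +
            (2*Y + sq2 p - ((p.2:ℤ) - p.1)) * h2y + 2 * hsum2 +
            (2*(n:ℤ) + 4*(t:ℤ) + 2) * hnz
        linarith
      · show |(sq2 p - ((p.2:ℤ) - p.1)) / 2| < (sq2 p + ((p.2:ℤ) - p.1)) / 2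
        rw [abs_lt]
        constructor <;> omega
    · intro hu
      rw [Set.mem_singleton_iff] at hu
      obtain ⟨h1, h2⟩ := Zsqrtd.ext_iff.mp hu
      dsimp only [phiO] at h1 h2
      omega
  · intro p hp q hq heq
    obtain ⟨hk0p, hknp, hs3p, hsoddp, hssp, hkn2p, hsum2p⟩ := pair_facts hp
    obtain ⟨hk0q, hknq, hs3q, hsoddq, hssq, hkn2q, hsum2q⟩ := pair_facts hq
    have hsop := Int.odd_iff.mp hsoddp
    have hsoq := Int.odd_iff.mp hsoddq
    have hkop : ((p.2:ℤ) - p.1) % 2 = 1 := by omega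
    have hkoq : ((q.2:ℤ) - q.1) % 2 = 1 := by omega
    obtain ⟨h1, h2⟩ := Zsqrtd.ext_iff.mp heq
    dsimp only [phiO] at h1 h2
    have hpq : p.1 = q.1 ∧ p.2 = q.2 := by omega
    exact Prod.ext hpq.1 hpq.2
  · rintro z ⟨⟨hzn, hzf⟩, hzu⟩
    rw [Set.mem_singleton_iff] at hzu
    have hxy : z.re * z.re + z.im * z.im = 2*(t:ℤ)*t + 2*t + 1 := by
      rw [Zsqrtd.norm_def] at hzn; linarith
    have hyx : z.im < z.re := lt_of_abs_lt hzf
    have hyx2 : -z.re < z.im := neg_lt_of_abs_lt hzf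
    have hks : (z.re - z.im) * (z.re - z.im) + (z.re + z.im) * (z.re + z.im) =
        (n:ℤ) * n + 1 := by linear_combination 2 * hxy - ((n:ℤ) + 2*(t:ℤ) + 1) * hnz
    have hpar : (z.re - z.im) % 2 = 1 := by
      rcases Int.even_or_odd (z.re - z.im) with hev | hod
      · exfalso
        obtain ⟨a, ha⟩ := hev
        have h6 : (1:ℤ) = 2 * (2*a*a + 2*a*z.im + z.im*z.im - (t:ℤ)*t - t) := by
          linear_combination -hxy + (z.re + z.im + 2*a) * ha
        have : (2:ℤ) ∣ 1 := ⟨_, h6⟩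
        norm_num at this
      · exact Int.odd_iff.mp hod
    have hspar : (z.re + z.im) % 2 = 1 := by omega
    have hk1 : 0 < z.re - z.im := by omega
    have hs1 : 0 < z.re + z.im := by omega
    have hsne1 : z.re + z.im ≠ 1 := by
      intro h1
      apply hzu
      have hkn' : z.re - z.im = (n:ℤ) := by
        have h2 : ((z.re - z.im) - (n:ℤ)) * ((z.re - z.im) + (n:ℤ)) = 0 := by
          linear_combination hks - ((z.re + z.im) + 1) * h1
        rcases mul_eq_zero.mp h2 with h | h
        · omega
        · omega
      exact Zsqrtd.ext (show z.re = (t:ℤ)+1 by omega) (show z.im = -(t:ℤ) by omega)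
    have hs3 : 3 ≤ z.re + z.im := by omega
    obtain ⟨p, hpm, hpk, hps⟩ := build_pair (n := n) hk1 (by omega) hs3
      (by omega) hks
    refine ⟨p, hpm, ?_⟩
    refine Zsqrtd.ext ?_ ?_ <;> dsimp only [phiO] <;> omega

lemma gcd_star_unit {v : GI} (hodd : Odd v.norm) (hcp : IsCoprime v.re v.im) :
    IsUnit (EuclideanDomain.gcd v (star v)) := by
  set e := EuclideanDomain.gcd v (star v) with he
  have h1 : e ∣ v := EuclideanDomain.gcd_dvd_left _ _
  have h2 : e ∣ star v := EuclideanDomain.gcd_dvd_right _ _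
  have hsum : v + star v = ((2 * v.re : ℤ) : GI) := by
    refine Zsqrtd.ext ?_ ?_ <;>
      simp [Zsqrtd.re_add, Zsqrtd.im_add, Zsqrtd.re_star, Zsqrtd.im_star] <;> ring
  have hdiff : v - star v = ((2 * v.im : ℤ) : GI) * ⟨0, 1⟩ := by
    refine Zsqrtd.ext ?_ ?_ <;>
      simp [Zsqrtd.re_sub, Zsqrtd.im_sub, Zsqrtd.re_star, Zsqrtd.im_star,
        Zsqrtd.re_mul, Zsqrtd.im_mul] <;> ring
  have hd1 : e ∣ ((2 * v.re : ℤ) : GI) := hsum ▸ dvd_add h1 h2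
  have hd2 : e ∣ ((2 * v.im : ℤ) : GI) := by
    have h3 : e ∣ v - star v := dvd_sub h1 h2
    rw [hdiff] at h3
    have key : ((2 * v.im : ℤ) : GI) * ⟨0, 1⟩ * ⟨0, -1⟩ = ((2 * v.im : ℤ) : GI) := by
      refine Zsqrtd.ext ?_ ?_ <;> simp [Zsqrtd.re_mul, Zsqrtd.im_mul]
    exact key ▸ h3.mul_right _
  obtain ⟨a, b, hab⟩ := hcp
  have hd : e ∣ ((2 : ℤ) : GI) := by
    have h5 : ((2:ℤ) : GI) = ((a:ℤ):GI) * ((2 * v.re : ℤ) : GI) +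
        ((b:ℤ):GI) * ((2 * v.im : ℤ) : GI) := by
      have h6 : (2:ℤ) = a * (2 * v.re) + b * (2 * v.im) := by linear_combination (-2) * hab
      calc ((2:ℤ):GI) = (((a * (2 * v.re) + b * (2 * v.im)) : ℤ) : GI) := by rw [← h6]
        _ = _ := by push_cast; ring
    rw [h5]
    exact dvd_add (hd1.mul_left _) (hd2.mul_left _)
  have h6 : e.norm ∣ 4 := by
    have := snorm_dvd hd
    rw [Zsqrtd.norm_intCast] at this
    exact this.trans ⟨1, by norm_num⟩
  have h8 : Odd e.norm := by
    rcases Int.even_or_odd e.norm with hev | hod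
    · exfalso
      obtain ⟨c2, hc2⟩ := hev
      have h9a : (2:ℤ) ∣ e.norm := ⟨c2, by omega⟩
      have h9 : (2:ℤ) ∣ v.norm := dvd_trans h9a (snorm_dvd h1)
      rcases hodd with ⟨c, hc⟩
      omega
    · exact hod
  have hk4 : e.norm.natAbs ∣ 4 := by
    have := Int.natAbs_dvd_natAbs.mpr h6
    simpa using this
  have hkodd : e.norm.natAbs % 2 = 1 := Nat.odd_iff.mp (Int.natAbs_odd.mpr h8)
  have hkle : e.norm.natAbs ≤ 4 := Nat.le_of_dvd (by norm_num) hk4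
  have hk1 : e.norm.natAbs = 1 := by
    set k := e.norm.natAbs with hkdef
    interval_cases k <;> omega
  exact Zsqrtd.norm_eq_one_iff.mp hk1

lemma even_case {n : ℕ} (hn : 0 < n) (he : Even n) :
    (n ^ 2 + 1).divisors.card = 2 * ((Pairs n).ncard + 1) := by
  have hn2 : 2 ≤ n := by rcases he with ⟨r, hr⟩; omega
  have hNodd : Odd (n ^ 2 + 1) := by
    obtain ⟨r, hr⟩ := he
    exact ⟨2 * r * r, by subst hr; ring⟩
  have hNcast : ((n ^ 2 + 1 : ℕ) : ℤ) = (n:ℤ) * n + 1 := by push_cast; ring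
  have hnorm : (⟨(n:ℤ), 1⟩ : GI).norm = ((n ^ 2 + 1 : ℕ) : ℤ) := by
    rw [Zsqrtd.norm_def, hNcast]; dsimp only; ring
  have hcop : IsUnit (EuclideanDomain.gcd (⟨(n:ℤ), 1⟩ : GI) (star (⟨(n:ℤ), 1⟩ : GI))) := by
    apply gcd_star_unit
    · rw [hnorm]; exact (Int.odd_coe_nat _).mpr hNodd
    · exact isCoprime_one_right
  have hFD := card_FD hNodd hnorm hcop
  have hsub : FD (n ^ 2 + 1) =
      {z : GI | z.norm = (n:ℤ) * n + 1 ∧ |z.im| < z.re ∧ 0 < z.im} ∪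
      {z : GI | z.norm = (n:ℤ) * n + 1 ∧ |z.im| < z.re ∧ z.im < 0} := by
    ext z
    simp only [FD, Set.mem_setOf_eq, Set.mem_union, hNcast]
    constructor
    · rintro ⟨h1, h2⟩
      rcases lt_trichotomy z.im 0 with h | h | h
      · exact Or.inr ⟨h1, h2, h⟩
      · exfalso
        refine not_square hn z.re ?_
        rw [Zsqrtd.norm_def] at h1
        linear_combination h1 - z.im * h
      · exact Or.inl ⟨h1, h2, h⟩
    · rintro (⟨h1, h2, _⟩ | ⟨h1, h2, _⟩) <;> exact ⟨h1, h2⟩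
  have hfinp : {z : GI | z.norm = (n:ℤ) * n + 1 ∧ |z.im| < z.re ∧ 0 < z.im}.Finite :=
    Set.Finite.subset (FD_finite (n ^ 2 + 1))
      (by rw [hsub]; exact Set.subset_union_left)
  have hfinm : {z : GI | z.norm = (n:ℤ) * n + 1 ∧ |z.im| < z.re ∧ z.im < 0}.Finite :=
    Set.Finite.subset (FD_finite (n ^ 2 + 1))
      (by rw [hsub]; exact Set.subset_union_right)
  have hdisj : Disjoint {z : GI | z.norm = (n:ℤ) * n + 1 ∧ |z.im| < z.re ∧ 0 < z.im}
      {z : GI | z.norm = (n:ℤ) * n + 1 ∧ |z.im| < z.re ∧ z.im < 0} := by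
    rw [Set.disjoint_left]
    rintro z ⟨_, _, h⟩ ⟨_, _, h'⟩
    omega
  have hul : (FD (n ^ 2 + 1)).ncard =
      {z : GI | z.norm = (n:ℤ) * n + 1 ∧ |z.im| < z.re ∧ 0 < z.im}.ncard +
      {z : GI | z.norm = (n:ℤ) * n + 1 ∧ |z.im| < z.re ∧ z.im < 0}.ncard := by
    rw [hsub]; exact Set.ncard_union_eq hdisj hfinp hfinm
  have himg : star '' {z : GI | z.norm = (n:ℤ) * n + 1 ∧ |z.im| < z.re ∧ 0 < z.im} =
      {z : GI | z.norm = (n:ℤ) * n + 1 ∧ |z.im| < z.re ∧ z.im < 0} := by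
    ext z
    simp only [Set.mem_image, Set.mem_setOf_eq]
    constructor
    · rintro ⟨w, ⟨h1, h2, h3⟩, rfl⟩
      refine ⟨by rw [Zsqrtd.norm_conj]; exact h1, ?_, ?_⟩
      · rw [Zsqrtd.im_star, Zsqrtd.re_star, abs_neg]; exact h2
      · rw [Zsqrtd.im_star]; omega
    · rintro ⟨h1, h2, h3⟩
      refine ⟨star z, ⟨by rw [Zsqrtd.norm_conj]; exact h1, ?_, ?_⟩, star_star z⟩
      · rw [Zsqrtd.im_star, Zsqrtd.re_star, abs_neg]; exact h2
      · rw [Zsqrtd.im_star]; omega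
  have hmp : {z : GI | z.norm = (n:ℤ) * n + 1 ∧ |z.im| < z.re ∧ z.im < 0}.ncard =
      {z : GI | z.norm = (n:ℤ) * n + 1 ∧ |z.im| < z.re ∧ 0 < z.im}.ncard := by
    rw [← himg]
    exact Set.ncard_image_of_injOn (fun a _ b _ h => by
      have := congrArg star h; rwa [star_star, star_star] at this)
  have huSp : (⟨(n:ℤ), 1⟩ : GI) ∈
      {z : GI | z.norm = (n:ℤ) * n + 1 ∧ |z.im| < z.re ∧ 0 < z.im} := by
    refine ⟨by rw [hnorm, hNcast], ?_, by norm_num⟩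
    show |(1:ℤ)| < (n:ℤ)
    rw [abs_one]
    exact_mod_cast hn2
  have hbij := bijE hn2 he
  have hdiffc : ({z : GI | z.norm = (n:ℤ) * n + 1 ∧ |z.im| < z.re ∧ 0 < z.im} \
      {(⟨(n:ℤ), 1⟩ : GI)}).ncard = (Pairs n).ncard := by
    rw [← hbij.image_eq, Set.ncard_image_of_injOn hbij.injOn]
  have hSpcard : {z : GI | z.norm = (n:ℤ) * n + 1 ∧ |z.im| < z.re ∧ 0 < z.im}.ncard =
      (Pairs n).ncard + 1 := by
    rw [← hdiffc]
    exact (Set.ncard_diff_singleton_add_one huSp hfinp).symm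
  rw [← hFD, hul, hmp, hSpcard]
  ring

lemma odd_case {n : ℕ} (hn : 0 < n) (ho : Odd n) :
    (n ^ 2 + 1).divisors.card = 2 * ((Pairs n).ncard + 1) := by
  obtain ⟨t, hnt⟩ := ho
  have hM2 : n ^ 2 + 1 = 2 * (2 * t * t + 2 * t + 1) := by subst hnt; ring
  have hModd : Odd (2 * t * t + 2 * t + 1) := ⟨t * t + t, by ring⟩
  have hMcast : ((2 * t * t + 2 * t + 1 : ℕ) : ℤ) = 2 * (t:ℤ) * t + 2 * t + 1 := by
    push_cast; ring
  have hdiv : (n ^ 2 + 1).divisors.card = 2 * (2 * t * t + 2 * t + 1).divisors.card := by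
    rw [hM2, Nat.Coprime.card_divisors_mul, Nat.Prime.divisors Nat.prime_two]
    · rfl
    · refine (Nat.Prime.coprime_iff_not_dvd Nat.prime_two).mpr ?_
      have := Nat.odd_iff.mp hModd
      omega
  have hnorm : (⟨(t:ℤ) + 1, (t:ℤ)⟩ : GI).norm = ((2 * t * t + 2 * t + 1 : ℕ) : ℤ) := by
    rw [Zsqrtd.norm_def, hMcast]; dsimp only; ring
  have hcop : IsUnit (EuclideanDomain.gcd (⟨(t:ℤ) + 1, (t:ℤ)⟩ : GI)
      (star (⟨(t:ℤ) + 1, (t:ℤ)⟩ : GI))) := by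
    apply gcd_star_unit
    · rw [hnorm]; exact (Int.odd_coe_nat _).mpr hModd
    · exact ⟨1, -1, by dsimp only; ring⟩
  have hFD := card_FD hModd hnorm hcop
  have hFDeq : FD (2 * t * t + 2 * t + 1) =
      {z : GI | z.norm = 2 * (t:ℤ) * t + 2 * t + 1 ∧ |z.im| < z.re} := by
    ext z
    simp only [FD, Set.mem_setOf_eq, hMcast]
  have hfin : {z : GI | z.norm = 2 * (t:ℤ) * t + 2 * t + 1 ∧ |z.im| < z.re}.Finite :=
    hFDeq ▸ FD_finite (2 * t * t + 2 * t + 1)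
  have hz1 : (⟨(t:ℤ) + 1, -(t:ℤ)⟩ : GI) ∈
      {z : GI | z.norm = 2 * (t:ℤ) * t + 2 * t + 1 ∧ |z.im| < z.re} := by
    refine ⟨by rw [Zsqrtd.norm_def]; dsimp only; ring, ?_⟩
    show |-(t:ℤ)| < (t:ℤ) + 1
    rw [abs_neg, abs_of_nonneg (Int.natCast_nonneg t)]
    omega
  have hbij := bijO hnt
  have hdiffc : ({z : GI | z.norm = 2 * (t:ℤ) * t + 2 * t + 1 ∧ |z.im| < z.re} \
      {(⟨(t:ℤ) + 1, -(t:ℤ)⟩ : GI)}).ncard = (Pairs n).ncard := by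
    rw [← hbij.image_eq, Set.ncard_image_of_injOn hbij.injOn]
  have hcard : {z : GI | z.norm = 2 * (t:ℤ) * t + 2 * t + 1 ∧ |z.im| < z.re}.ncard =
      (Pairs n).ncard + 1 := by
    rw [← hdiffc]
    exact (Set.ncard_diff_singleton_add_one hz1 hfin).symm
  rw [hdiv, ← hFD, hFDeq, hcard]

lemma divisors_eq {n : ℕ} (hn : 0 < n) :
    (n ^ 2 + 1).divisors.card = 2 * ((Pairs n).ncard + 1) :=
  (Nat.even_or_odd n).elim (even_case hn) (odd_case hn)


lemma poly3 (c : ℤ) : ((2:ℕ):ℤ) * polygonal ((3:ℕ):ℤ) c = c * (c + 1) := by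
  obtain ⟨r, hr⟩ := Int.even_mul_succ_self c
  have h1 : polygonal ((3:ℕ):ℤ) c = r := by
    unfold polygonal
    have h2 : ((((3:ℕ)):ℤ) - 2) * c - ((((3:ℕ)):ℤ) - 4) = c + 1 := by push_cast; ring
    rw [h2, hr]
    omega
  rw [h1]
  push_cast
  linarith [hr]

lemma rmt_eq (n : ℕ) : rmt 3 2 n = (Pairs n).ncard := by
  unfold rmt
  congr 1
  ext p
  simp only [Pairs, Set.mem_setOf_eq]
  constructor
  · rintro ⟨h1, h2, h3, c, hc, h4⟩
    exact ⟨h1, h2, h3, c, hc (Or.inl trivial), by rw [h4]; exact poly3 c⟩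
  · rintro ⟨h1, h2, h3, c, hc, h4⟩
    exact ⟨h1, h2, h3, c, fun _ => hc, by rw [poly3]; exact h4⟩

end SqCount

theorem stmt_9 (n : ℕ) (hn : 0 < n) :
    rmt 3 2 n = (n ^ 2 + 1).divisors.card / 2 - 1 := by
  rw [SqCount.rmt_eq, SqCount.divisors_eq hn]
  omega
end

section
/- For every positive integer n, r_{3,29}(n) = ⌊(d_{{29}}(2n² + 29) - 1)/2⌋. -/
/-- `Tf a b c p q r s a' b' c'` : the quadratic form `(a',b',c')` is obtained from
`(a,b,c)` by substituting `(x,y) ↦ (p x + q y, r x + s y)`. -/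
def Tf (a b c p q r s a' b' c' : ℤ) : Prop :=
  a' = a*p^2 + b*p*r + c*r^2 ∧ b' = 2*a*p*q + b*(p*s + q*r) + 2*c*r*s ∧
    c' = a*q^2 + b*q*s + c*s^2

lemma tf_comp {a b c p q r s a' b' c' P Q R S a'' b'' c'' : ℤ}
    (h1 : Tf a b c p q r s a' b' c') (h2 : Tf a' b' c' P Q R S a'' b'' c'') :
    Tf a b c (p*P+q*R) (p*Q+q*S) (r*P+s*R) (r*Q+s*S) a'' b'' c'' := by
  obtain ⟨e1, e2, e3⟩ := h1
  obtain ⟨f1, f2, f3⟩ := h2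
  refine ⟨?_, ?_, ?_⟩ <;> (subst f1 f2 f3; subst e1 e2 e3) <;> ring

lemma tf_reduce : ∀ (m : ℕ) (a b c : ℤ), a.natAbs ≤ m → 0 < a → b^2 + 232 = 4*a*c →
    ∃ p q r s a' b' c', p*s - q*r = 1 ∧ Tf a' b' c' p q r s a b c ∧
      b'^2 + 232 = 4*a'*c' ∧ 0 < a' ∧ |b'| ≤ a' ∧ a' ≤ c' := by
  intro m
  induction m with
  | zero => intro a b c hm ha _; exfalso; omega
  | succ m IH =>
    intro a b c hm ha hdisc
    -- translation
    set k : ℤ := -((b+a)/(2*a)) with hk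
    have h2a : 0 < 2*a := by omega
    have hr1 : 0 ≤ (b+a) % (2*a) := Int.emod_nonneg _ (by omega)
    have hr2 : (b+a) % (2*a) < 2*a := Int.emod_lt_of_pos _ h2a
    have hbk : b + 2*a*k = (b+a) % (2*a) - a := by
      have := Int.mul_ediv_add_emod (b+a) (2*a)
      rw [hk]; linarith
    set b1 : ℤ := b + 2*a*k with hb1
    set c1 : ℤ := a*k^2 + b*k + c with hc1
    have hT1 : Tf a b1 c1 1 (-k) 0 1 a b c := by
      refine ⟨by ring, by rw [hb1]; ring, by rw [hc1, hb1]; ring⟩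
    have hdisc1 : b1^2 + 232 = 4*a*c1 := by rw [hb1, hc1]; linear_combination hdisc
    have habs : |b1| ≤ a := by
      rw [abs_le, hb1]; omega
    have hc1pos : 0 < c1 := by nlinarith [sq_nonneg b1]
    rcases le_or_gt a c1 with hle | hlt
    · exact ⟨1, -k, 0, 1, a, b1, c1, by ring, hT1, hdisc1, ha, habs, hle⟩
    · have hT2 : Tf c1 (-b1) a 0 1 (-1) 0 a b1 c1 := ⟨by ring, by ring, by ring⟩
      have hm' : c1.natAbs ≤ m := by omega
      obtain ⟨p, q, r, s, a', b', c', hdet, hT, hd, h1, h2, h3⟩ :=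
        IH c1 (-b1) a hm' hc1pos (by linear_combination hdisc1)
      refine ⟨(p*0+q*(-1))*1 + (p*1+q*0)*0,
              (p*0+q*(-1))*(-k) + (p*1+q*0)*1,
              (r*0+s*(-1))*1 + (r*1+s*0)*0,
              (r*0+s*(-1))*(-k) + (r*1+s*0)*1, a', b', c', ?_, ?_, hd, h1, h2, h3⟩
      · nlinarith [hdet]
      · exact tf_comp (tf_comp hT hT2) hT1

lemma tf_classify {a b c : ℤ} (hdisc : b^2 + 232 = 4*a*c) (ha : 0 < a)
    (h1 : |b| ≤ a) (h2 : a ≤ c) :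
    (a = 1 ∧ b = 0 ∧ c = 58) ∨ (a = 2 ∧ b = 0 ∧ c = 29) := by
  have hb2 : b^2 ≤ a^2 := sq_le_sq' (neg_le_of_abs_le h1) (le_of_abs_le h1)
  have ha8 : a ≤ 8 := by nlinarith
  have hb' : -a ≤ b ∧ b ≤ a := abs_le.mp h1
  obtain ⟨hbl, hbr⟩ := hb'
  have hb9 : -8 ≤ b ∧ b ≤ 8 := ⟨by omega, by omega⟩
  interval_cases a <;> interval_cases b <;> omega

lemma tf_key (M s : ℤ) (hM : 0 < M) (h8 : M % 8 = 5 ∨ M % 8 = 7) (hd : M ∣ s^2 + 58) :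
    ∃ α β γ δ : ℤ, α*δ - β*γ = 1 ∧ 2*α^2 + 29*γ^2 = M ∧ 4*α*β + 58*γ*δ = 2*s := by
  obtain ⟨c, hc⟩ := hd
  obtain ⟨p, q, r, t, a', b', c', hdet, hT, hdisc, h1, h2, h3⟩ :=
    tf_reduce M.natAbs M (2*s) c le_rfl hM (by linear_combination 4*hc)
  rcases tf_classify hdisc h1 h2 h3 with ⟨ea, eb, ec⟩ | ⟨ea, eb, ec⟩
  · -- principal form: contradiction mod 8
    exfalso
    obtain ⟨e1, _, _⟩ := hT
    rw [ea, eb, ec] at e1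
    have hcast : (M : ZMod 8) = (p : ZMod 8)^2 + 58*(r : ZMod 8)^2 := by
      have : ((M : ℤ) : ZMod 8) = ((1*p^2 + 0*p*r + 58*r^2 : ℤ) : ZMod 8) := by
        exact_mod_cast congrArg (Int.cast : ℤ → ZMod 8) e1
      push_cast at this; rw [this]; ring
    have h58 : ∀ P R : ZMod 8, P^2 + 58*R^2 ≠ 5 ∧ P^2 + 58*R^2 ≠ 7 := by decide
    rcases h8 with h5 | h7
    · have : (M : ZMod 8) = ((5 : ℤ) : ZMod 8) :=
        (ZMod.intCast_eq_intCast_iff _ _ _).mpr (by unfold Int.ModEq; omega)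
      rw [hcast] at this
      exact (h58 p r).1 (by push_cast at this ⊢; exact this)
    · have : (M : ZMod 8) = ((7 : ℤ) : ZMod 8) :=
        (ZMod.intCast_eq_intCast_iff _ _ _).mpr (by unfold Int.ModEq; omega)
      rw [hcast] at this
      exact (h58 p r).2 (by push_cast at this ⊢; exact this)
  · obtain ⟨e1, e2, _⟩ := hT
    rw [ea, eb, ec] at e1 e2
    exact ⟨p, q, r, t, hdet, by linear_combination -e1, by linear_combination -e2⟩

def NN (n : ℕ) : ℕ := 2*n^2+29

noncomputable def PhiAux (n : ℕ) (v : ℤ) : ℕ :=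
  if 29 ∣ Int.gcd v (NN n : ℤ) then Int.gcd v (NN n : ℤ) / 29 else Int.gcd v (NN n : ℤ)

lemma NN_pos (n : ℕ) : 0 < NN n := by unfold NN; omega

lemma NN_odd (n : ℕ) : NN n % 2 = 1 := by
  obtain ⟨m, hm⟩ : ∃ m, NN n = 2*m+29 := ⟨n^2, rfl⟩; omega

lemma NN_mod8 (n : ℕ) : NN n % 8 = 5 ∨ NN n % 8 = 7 := by
  rcases Nat.even_or_odd n with ⟨k, hk⟩ | ⟨k, hk⟩
  · obtain ⟨m, hm⟩ : ∃ m, NN n = 8*m+29 := ⟨k^2, by subst hk; unfold NN; ring⟩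
    omega
  · obtain ⟨m, hm⟩ : ∃ m, NN n = 8*m+31 := ⟨k^2+k, by subst hk; unfold NN; ring⟩
    omega

lemma NN_not_29sq (n : ℕ) : ¬ (29*29 ∣ NN n) := by
  intro h
  have h1 : (29:ℕ) ∣ NN n := dvd_trans ⟨29, rfl⟩ h
  have h29 : (29:ℕ) ∣ 2*n^2 := by
    have h2 := Nat.dvd_sub h1 (dvd_refl 29)
    have h3 : NN n - 29 = 2*n^2 := by unfold NN; omega
    rwa [h3] at h2
  have hn29 : (29:ℕ) ∣ n := by
    have h4 : (29:ℕ) ∣ n^2 := (Nat.Coprime.dvd_of_dvd_mul_left (by norm_num) h29)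
    exact Nat.Prime.dvd_of_dvd_pow (by norm_num) h4
  obtain ⟨k, hk⟩ := hn29
  obtain ⟨t, ht⟩ := h
  obtain ⟨m, hm⟩ : ∃ m, 2*n^2 = 841*(2*m) := ⟨k^2, by subst hk; ring⟩
  have ht' : 2*n^2+29 = 841*t := ht
  omega

lemma prime_ne29_not_dvd_2n (n : ℕ) {p : ℕ} (pp : p.Prime) (hpN : p ∣ NN n)
    (hp29 : p ≠ 29) : ¬ p ∣ 2*n := by
  intro h
  rcases (Nat.Prime.dvd_mul pp).mp h with h2 | hn
  · have he : p = 2 := (Nat.prime_dvd_prime_iff_eq pp Nat.prime_two).mp h2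
    subst he
    have h3 := NN_odd n
    obtain ⟨t, ht⟩ := hpN
    omega
  · have hdvd : p ∣ 2*n^2 := Dvd.dvd.mul_left (dvd_pow hn two_ne_zero) 2
    have h5 : p ∣ 29 := by
      have h2 := Nat.dvd_sub hpN hdvd
      have h3 : NN n - 2*n^2 = 29 := by unfold NN; omega
      rwa [h3] at h2
    exact hp29 ((Nat.prime_dvd_prime_iff_eq pp (by norm_num)).mp h5)

-- facts about solutions
lemma sol_y_odd {n : ℕ} {x y : ℤ} (h : 2*x^2 + 29*y^2 = (NN n : ℤ)) : Odd y := by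
  rcases Int.even_or_odd y with ⟨t, ht⟩ | ho
  · exfalso
    have hNodd := NN_odd n
    obtain ⟨s, hs⟩ : ∃ s, (NN n : ℤ) = 2*s := ⟨x^2 + 58*t^2, by rw [← h, ht]; ring⟩
    have : (NN n : ℕ) % 2 = 0 := by
      have h2 : (2:ℤ) ∣ (NN n : ℤ) := ⟨s, hs⟩
      have h3 : (2:ℕ) ∣ NN n := by exact_mod_cast h2
      omega
    omega
  · exact ho

lemma sol_sub_even {n : ℕ} {x y : ℤ} (h : 2*x^2 + 29*y^2 = (NN n : ℤ)) :
    (2:ℤ) ∣ ((n:ℤ) - x) := by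
  obtain ⟨t, ht⟩ := sol_y_odd h
  obtain ⟨u, hu⟩ := Int.even_mul_succ_self t
  have hNN : (NN n : ℤ) = 2*(n:ℤ)^2 + 29 := by unfold NN; push_cast; ring
  have key : x^2 + 116*u = (n:ℤ)^2 := by
    have : y^2 = 8*u + 1 := by rw [ht]; linear_combination 4*hu
    nlinarith [h, this]
  have h2 : Even (((n:ℤ) - x) * ((n:ℤ) + x)) := by
    refine ⟨58*u, ?_⟩; linear_combination -key
  rcases Int.even_mul.mp h2 with he | he
  · exact he.two_dvd
  · obtain ⟨v, hv⟩ := he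
    exact ⟨v - x, by omega⟩

lemma sol_y_one {n : ℕ} {x : ℤ} (hx : 0 ≤ x) (h : 2*x^2 + 29*1^2 = (NN n : ℤ)) :
    x = n := by
  have hNN : (NN n : ℤ) = 2*(n:ℤ)^2 + 29 := by unfold NN; push_cast; ring
  have h2 : (x - n) * (x + n) = 0 := by
    have h3 : 2*((x - n) * (x + n)) = 0 := by linear_combination h + hNN
    linarith
  rcases mul_eq_zero.mp h2 with h3 | h3
  · omega
  · have : 0 ≤ (n:ℤ) := Int.natCast_nonneg n
    omega

lemma sol_vw {n : ℕ} {x y : ℤ} (h : 2*x^2 + 29*y^2 = (NN n : ℤ)) :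
    (NN n : ℤ) ∣ (x - n*y) * (x + n*y) := by
  have hNN : (NN n : ℤ) = 2*(n:ℤ)^2 + 29 := by unfold NN; push_cast; ring
  rw [hNN] at h
  have key : 2*((x - n*y) * (x + n*y)) = (NN n : ℤ) * (1 - y^2) := by
    rw [hNN]; linear_combination h
  have hodd : IsCoprime (2:ℤ) (NN n : ℤ) := by
    obtain ⟨m, hm⟩ : ∃ m, (NN n:ℤ) = 2*m+29 := ⟨(n:ℤ)^2, by unfold NN; push_cast; ring⟩
    exact ⟨-(m+14), 1, by rw [hm]; ring⟩
  have hdvd : (NN n : ℤ) ∣ 2*((x - n*y) * (x + n*y)) := ⟨1 - y^2, key⟩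
  exact hodd.symm.dvd_of_dvd_mul_left hdvd

-- PhiAux basics
lemma phiAux_mul (n : ℕ) (v : ℤ) :
    (if 29 ∣ Int.gcd v (NN n : ℤ) then 29 else 1) * PhiAux n v = Int.gcd v (NN n : ℤ) := by
  unfold PhiAux
  by_cases h : 29 ∣ Int.gcd v (NN n : ℤ) <;> simp [h]
  exact (Nat.mul_div_cancel' h)

lemma gcd_NN_ne_zero (n : ℕ) (v : ℤ) : Int.gcd v (NN n : ℤ) ≠ 0 := by
  intro h
  rw [Int.gcd_eq_zero_iff] at h
  have := NN_pos n
  have h2 := h.2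
  simp at h2
  omega

lemma phiAux_pos (n : ℕ) (v : ℤ) : 0 < PhiAux n v := by
  have h := phiAux_mul n v
  have h2 := gcd_NN_ne_zero n v
  rcases Nat.eq_zero_or_pos (PhiAux n v) with h3 | h3
  · rw [h3, mul_zero] at h; omega
  · exact h3

lemma phiAux_not29 (n : ℕ) (v : ℤ) : ¬ (29 ∣ PhiAux n v) := by
  intro h
  have hmul := phiAux_mul n v
  have hgdvd : (Int.gcd v (NN n : ℤ) : ℕ) ∣ NN n := by
    have := Int.gcd_dvd_right (a := v) (b := (NN n : ℤ))
    exact_mod_cast this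
  by_cases hc : 29 ∣ Int.gcd v (NN n : ℤ)
  · rw [if_pos hc] at hmul
    obtain ⟨t, ht⟩ := h
    have : 29*29 ∣ NN n := by
      refine dvd_trans ?_ hgdvd
      exact ⟨t, by rw [← hmul, ht]; ring⟩
    exact NN_not_29sq n this
  · rw [if_neg hc, one_mul] at hmul
    rw [hmul] at h
    exact hc h

lemma phiAux_neg (n : ℕ) (v : ℤ) : PhiAux n (-v) = PhiAux n v := by
  unfold PhiAux
  rw [Int.neg_gcd]

lemma phiAux_dvd (n : ℕ) (v : ℤ) : PhiAux n v ∣ NN n := by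
  have hmul := phiAux_mul n v
  have hgdvd : (Int.gcd v (NN n : ℤ) : ℕ) ∣ NN n := by
    have := Int.gcd_dvd_right (a := v) (b := (NN n : ℤ))
    exact_mod_cast this
  calc PhiAux n v ∣ Int.gcd v (NN n : ℤ) := ⟨_, by rw [← hmul]; ring⟩
    _ ∣ NN n := hgdvd

lemma phiAux_pow_dvd (n : ℕ) (v : ℤ) {p : ℕ} (pp : p.Prime) (hp : p ≠ 29) (t : ℕ) :
    (p^t ∣ PhiAux n v ↔ p^t ∣ Int.gcd v (NN n : ℤ)) := by
  have hmul := phiAux_mul n v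
  by_cases hc : 29 ∣ Int.gcd v (NN n : ℤ)
  · rw [if_pos hc] at hmul
    constructor
    · intro h; exact dvd_trans h ⟨29, by rw [← hmul]; ring⟩
    · intro h
      rw [← hmul] at h
      refine (Nat.Coprime.dvd_of_dvd_mul_left ?_ h)
      exact Nat.Coprime.pow_left _ ((Nat.coprime_primes pp (by norm_num)).mpr hp)
  · rw [if_neg hc, one_mul] at hmul
    rw [hmul]

lemma nat_dvd_of_prime_pow {N m : ℕ} (hN : N ≠ 0)
    (h : ∀ p, p.Prime → p ∣ N → p ^ N.factorization p ∣ m) : N ∣ m := by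
  rcases Nat.eq_zero_or_pos m with rfl | hm
  · exact dvd_zero N
  refine (Nat.factorization_le_iff_dvd hN (by omega)).mp ?_
  rw [Finsupp.le_iff]
  intro p hp
  rw [Nat.support_factorization] at hp
  have pp : p.Prime := Nat.prime_of_mem_primeFactors hp
  have pd : p ∣ N := Nat.dvd_of_mem_primeFactors hp
  exact (pp.pow_dvd_iff_le_factorization (by omega)).mp (h p pp pd)

/-- splitting of a solution at an odd prime power of `NN n` according to the gcd. -/
lemma sol_split {n : ℕ} {x y : ℤ} (hs : 2*x^2+29*y^2 = (NN n : ℤ)) {p : ℕ}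
    (pp : p.Prime) (hpN : p ∣ NN n) :
    (p:ℤ)^((Int.gcd (x - n*y) (NN n:ℤ)).factorization p) ∣ (x - n*y) ∧
    (p:ℤ)^((NN n).factorization p - (Int.gcd (x - n*y) (NN n:ℤ)).factorization p)
      ∣ (x + n*y) := by
  set v : ℤ := x - n*y with hv
  set w : ℤ := x + n*y with hw
  set g : ℕ := Int.gcd v (NN n:ℤ) with hg
  set j : ℕ := g.factorization p with hj
  set a : ℕ := (NN n).factorization p with ha
  have hg0 : g ≠ 0 := gcd_NN_ne_zero n v
  have hN0 : NN n ≠ 0 := (NN_pos n).ne'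
  have hgd : g ∣ NN n := by
    have := Int.gcd_dvd_right (a := v) (b := (NN n : ℤ))
    exact_mod_cast this
  have hja : j ≤ a := by
    have := (Nat.factorization_le_iff_dvd hg0 hN0).mpr hgd
    exact Finsupp.le_def.mp this p
  have hpj : (p:ℤ)^j ∣ v := by
    have h1 : (p:ℕ)^j ∣ g := Nat.ordProj_dvd g p
    have h2 : ((p^j : ℕ) : ℤ) ∣ (g:ℤ) := Int.natCast_dvd_natCast.mpr h1
    have h3 : (g:ℤ) ∣ v := Int.gcd_dvd_left _ _
    have := h2.trans h3
    exact_mod_cast this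
  refine ⟨hpj, ?_⟩
  rcases eq_or_lt_of_le hja with heq | hlt
  · rw [heq, Nat.sub_self, pow_zero]; exact one_dvd _
  -- j < a
  have hv1 : ¬ ((p:ℤ)^(j+1) ∣ v) := by
    intro hdd
    have hdN : (p:ℤ)^(j+1) ∣ ((NN n : ℕ):ℤ) := by
      have : (p:ℕ)^(j+1) ∣ NN n :=
        (pp.pow_dvd_iff_le_factorization hN0).mpr (by omega)
      exact_mod_cast Int.natCast_dvd_natCast.mpr this
    have hgg : (p:ℕ)^(j+1) ∣ g := by
      have := Int.dvd_gcd hdd hdN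
      rw [← hg] at this
      exact_mod_cast this
    have := (pp.pow_dvd_iff_le_factorization hg0).mp hgg
    omega
  have hv0 : v ≠ 0 := fun h0 => hv1 (h0 ▸ dvd_zero _)
  have hvabs0 : v.natAbs ≠ 0 := fun h0 => hv0 (Int.natAbs_eq_zero.mp h0)
  have hvord : v.natAbs.factorization p = j := by
    have hle : j ≤ v.natAbs.factorization p :=
      (pp.pow_dvd_iff_le_factorization hvabs0).mp (Int.natCast_dvd.mp (by exact_mod_cast hpj : ((p^j : ℕ):ℤ) ∣ v))
    have hlt2 : ¬ (j+1 ≤ v.natAbs.factorization p) := by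
      intro hc
      refine hv1 ?_
      have hc2 := (pp.pow_dvd_iff_le_factorization hvabs0).mpr hc
      have h2 : ((p^(j+1) : ℕ) : ℤ) ∣ v := Int.natCast_dvd.mpr hc2
      exact_mod_cast h2
    omega
  have hvw : p^a ∣ v.natAbs * w.natAbs := by
    have h1 : (NN n : ℤ) ∣ v * w := sol_vw hs
    have h2 : (p:ℕ)^a ∣ NN n := Nat.ordProj_dvd _ p
    have h3 : ((p^a : ℕ) : ℤ) ∣ v * w := (Int.natCast_dvd_natCast.mpr h2).trans h1
    have h4 : (p:ℕ)^a ∣ (v*w).natAbs := Int.natCast_dvd.mp h3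
    rwa [Int.natAbs_mul] at h4
  set u : ℕ := v.natAbs / p^j with hu
  have hvu : v.natAbs = p^j * u := by
    rw [hu, ← hvord]; exact (Nat.ordProj_mul_ordCompl_eq_self v.natAbs p).symm
  have hpu : ¬ p ∣ u := by
    rw [hu, ← hvord]; exact Nat.not_dvd_ordCompl pp hvabs0
  have hcanc : p^(a-j) ∣ u * w.natAbs := by
    have h5 : p^j * p^(a-j) ∣ p^j * (u * w.natAbs) := by
      rw [← pow_add]
      have : j + (a - j) = a := by omega
      rw [this, ← mul_assoc, ← hvu]
      exact hvw
    exact (mul_dvd_mul_iff_left (pow_ne_zero j pp.pos.ne')).mp h5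
  have hcop : Nat.Coprime (p^(a-j)) u :=
    Nat.Coprime.pow_left _ (pp.coprime_iff_not_dvd.mpr hpu)
  have h6 : p^(a-j) ∣ w.natAbs := hcop.dvd_of_dvd_mul_left hcanc
  have h7 : ((p^(a-j) : ℕ) : ℤ) ∣ w := Int.natCast_dvd.mpr h6
  exact_mod_cast h7

lemma cross_prime_pow {n : ℕ} {x y x' y' : ℤ}
    (hs : 2*x^2+29*y^2 = (NN n : ℤ)) (hs' : 2*x'^2+29*y'^2 = (NN n : ℤ))
    (hphi : PhiAux n (x - n*y) = PhiAux n (x' - n*y'))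
    {p : ℕ} (pp : p.Prime) (hpN : p ∣ NN n) :
    (p:ℤ)^((NN n).factorization p) ∣ (x*y' - x'*y) := by
  have hN0 : NN n ≠ 0 := (NN_pos n).ne'
  have hNZ : (NN n : ℤ) = 2*(n:ℤ)^2 + 29 := by unfold NN; push_cast; ring
  by_cases hp29 : p = 29
  · subst hp29
    have ha : (NN n).factorization 29 ≤ 1 := by
      by_contra hgt
      push_neg at hgt
      have h2 : (29:ℕ)^2 ∣ NN n :=
        (Nat.Prime.pow_dvd_iff_le_factorization (by norm_num) hN0).mpr (by omega)
      exact NN_not_29sq n (by rw [← pow_two]; exact h2)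
    have h29 : Prime (29:ℤ) := Int.prime_iff_natAbs_prime.mpr (by norm_num)
    have hx : ∀ X Y : ℤ, 2*X^2+29*Y^2 = (NN n : ℤ) → (29:ℤ) ∣ X := by
      intro X Y hXY
      have h1 : (29:ℤ) ∣ (NN n : ℤ) := by exact_mod_cast Int.natCast_dvd_natCast.mpr hpN
      have h2 : (29:ℤ) ∣ 2*X^2 := by
        have h3 : 2*X^2 = (NN n : ℤ) - 29*Y^2 := by linarith
        rw [h3]; exact dvd_sub h1 ⟨Y^2, rfl⟩
      rcases (h29.dvd_mul).mp h2 with h4 | h4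
      · norm_num at h4
      · exact h29.dvd_of_dvd_pow h4
    rcases Nat.le_one_iff_eq_zero_or_eq_one.mp ha with h0 | h1
    · rw [h0, pow_zero]; exact one_dvd _
    · rw [h1, pow_one]
      exact dvd_sub (Dvd.dvd.mul_right (hx x y hs) y') (Dvd.dvd.mul_right (hx x' y' hs') y)
  · -- odd prime different from 29
    set a : ℕ := (NN n).factorization p with ha
    set g : ℕ := Int.gcd (x - n*y) (NN n:ℤ) with hgdef
    set g' : ℕ := Int.gcd (x' - n*y') (NN n:ℤ) with hg'def
    have hg0 : g ≠ 0 := gcd_NN_ne_zero n _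
    have hg'0 : g' ≠ 0 := gcd_NN_ne_zero n _
    have hiff : ∀ t : ℕ, p^t ∣ g ↔ p^t ∣ g' := by
      intro t
      rw [← phiAux_pow_dvd n (x - n*y) pp hp29 t, ← phiAux_pow_dvd n (x' - n*y') pp hp29 t,
        hphi]
    have hordeq : g'.factorization p = g.factorization p := by
      apply le_antisymm
      · exact (pp.pow_dvd_iff_le_factorization hg0).mp
          ((hiff _).mpr (Nat.ordProj_dvd g' p))
      · exact (pp.pow_dvd_iff_le_factorization hg'0).mp
          ((hiff _).mp (Nat.ordProj_dvd g p))
    obtain ⟨hv, hw⟩ := sol_split hs pp hpN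
    obtain ⟨hv', hw'⟩ := sol_split hs' pp hpN
    rw [← hgdef] at hv hw
    rw [← hg'def, hordeq] at hv' hw'
    set j : ℕ := g.factorization p with hj
    have hja : j ≤ a := by
      have hgd : g ∣ NN n := by
        have := Int.gcd_dvd_right (a := x - n*y) (b := (NN n : ℤ))
        exact_mod_cast this
      have := (Nat.factorization_le_iff_dvd hg0 hN0).mpr hgd
      exact Finsupp.le_def.mp this p
    have hsplit : (p:ℤ)^a = (p:ℤ)^j * (p:ℤ)^(a-j) := by
      rw [← pow_add]; congr 1; omega
    have ht1 : (p:ℤ)^a ∣ (x - n*y) * (x' + n*y') := by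
      rw [hsplit]; exact mul_dvd_mul hv hw'
    have ht2 : (p:ℤ)^a ∣ (x + n*y) * (x' - n*y') := by
      rw [hsplit, mul_comm ((p:ℤ)^j) _]; exact mul_dvd_mul hw hv'
    have hid : (x - n*y) * (x' + n*y') - (x + n*y) * (x' - n*y')
        = 2*(n:ℤ)*(x*y' - x'*y) := by ring
    have ht3 : (p:ℤ)^a ∣ 2*(n:ℤ)*(x*y' - x'*y) := by rw [← hid]; exact dvd_sub ht1 ht2
    -- cancel the factor 2n
    have hcop : Nat.Coprime (p^a) (2*n) :=
      Nat.Coprime.pow_left _ (pp.coprime_iff_not_dvd.mpr (prime_ne29_not_dvd_2n n pp hpN hp29))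
    have ht4 : p^a ∣ (2*n) * (x*y' - x'*y).natAbs := by
      have h5 : p^a ∣ (2*(n:ℤ)*(x*y' - x'*y)).natAbs := Int.natCast_dvd.mp (by exact_mod_cast ht3)
      rw [Int.natAbs_mul] at h5
      have h6 : (2*(n:ℤ)).natAbs = 2*n := by simp [Int.natAbs_mul]
      rwa [h6] at h5
    have h7 : p^a ∣ (x*y' - x'*y).natAbs := hcop.dvd_of_dvd_mul_left ht4
    have h8 : ((p^a : ℕ):ℤ) ∣ (x*y' - x'*y) := Int.natCast_dvd.mpr h7
    exact_mod_cast h8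

lemma inj_pm {n : ℕ} {x y x' y' : ℤ}
    (hs : 2*x^2+29*y^2 = (NN n : ℤ)) (hs' : 2*x'^2+29*y'^2 = (NN n : ℤ))
    (hphi : PhiAux n (x - n*y) = PhiAux n (x' - n*y')) :
    (x' = x ∧ y' = y) ∨ (x' = -x ∧ y' = -y) := by
  have hN0 : NN n ≠ 0 := (NN_pos n).ne'
  have hNpos : (0:ℤ) < (NN n : ℤ) := by exact_mod_cast NN_pos n
  set C : ℤ := x*y' - x'*y with hC
  have hdvd : (NN n : ℤ) ∣ C := by
    have h1 : NN n ∣ C.natAbs := by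
      apply nat_dvd_of_prime_pow hN0
      intro p pp pd
      have := cross_prime_pow hs hs' hphi pp pd
      exact Int.natCast_dvd.mp (by exact_mod_cast this)
    exact Int.natCast_dvd.mpr h1
  have hbound : (2*x*x'+29*y*y')^2 + 58*C^2 = (NN n:ℤ)^2 := by
    rw [hC]
    linear_combination (2*x'^2 + 29*y'^2) * hs + (NN n : ℤ) * hs'
  have hC0 : C = 0 := by
    by_contra hne
    have h2 : (NN n : ℤ) ≤ |C| := Int.le_of_dvd (abs_pos.mpr hne) ((dvd_abs _ _).mpr hdvd)
    have h3 : (NN n : ℤ)^2 ≤ C^2 := by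
      have := sq_abs C
      nlinarith [abs_nonneg C]
    nlinarith [sq_nonneg (2*x*x'+29*y*y')]
  have hxy : x*y' = x'*y := by rw [hC] at hC0; linarith
  have hsq : x^2*y'^2 = x'^2*y^2 := by
    have : (x*y')^2 = (x'*y)^2 := by rw [hxy]
    linear_combination this
  have hyy : (NN n : ℤ) * y'^2 = (NN n : ℤ) * y^2 := by
    linear_combination -y'^2*hs + y^2*hs' + 2*hsq
  have hy2 : y'^2 = y^2 := mul_left_cancel₀ hNpos.ne' hyy
  have hy0 : y ≠ 0 := by
    rcases sol_y_odd hs with ⟨t, ht⟩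
    omega
  have hfac : (y' - y)*(y' + y) = 0 := by linear_combination hy2
  rcases mul_eq_zero.mp hfac with h4 | h4
  · left
    have hyy' : y' = y := by linarith
    subst hyy'
    exact ⟨mul_right_cancel₀ hy0 (by linarith), rfl⟩
  · right
    have hyy' : y' = -y := by linarith
    subst hyy'
    refine ⟨?_, rfl⟩
    have : x * (-y) = x' * y := by linarith [hxy]
    have h5 : (x' + x) * y = 0 := by linarith [this]
    rcases mul_eq_zero.mp h5 with h6 | h6
    · linarith
    · exact absurd h6 hy0

lemma odd_divisor_NN (n : ℕ) {d : ℕ} (hd : d ∣ NN n) : d % 2 = 1 := by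
  have hodd := NN_odd n
  by_contra h
  have h2 : (2:ℕ) ∣ d := by omega
  have h3 : (2:ℕ) ∣ NN n := h2.trans hd
  omega

lemma isCoprime_two_of_odd {d : ℕ} (hd : d % 2 = 1) : IsCoprime (2:ℤ) (d:ℤ) := by
  obtain ⟨t, ht⟩ : ∃ t, d = 2*t+1 := ⟨d/2, by omega⟩
  exact ⟨-(t:ℤ), 1, by rw [ht]; push_cast; ring⟩

lemma surj_core (n : ℕ) {δ : ℕ} (hδN : δ ∣ NN n) (hδ29 : ¬ 29 ∣ δ) :
    ∃ x y : ℤ, 2*x^2 + 29*y^2 = (NN n : ℤ) ∧ 0 < y ∧ PhiAux n (x - n*y) = δ := by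
  have hN0 : NN n ≠ 0 := (NN_pos n).ne'
  have hNZ : (NN n : ℤ) = 2*(n:ℤ)^2 + 29 := by unfold NN; push_cast; ring
  have hδ0 : δ ≠ 0 := by rintro rfl; exact hN0 (Nat.eq_zero_of_zero_dvd hδN)
  -- split off the ramified prime 29
  set P : ℕ := if 29 ∣ NN n then 29 else 1 with hP
  obtain ⟨N₀, hN₀, hN₀29⟩ : ∃ N₀, NN n = P * N₀ ∧ ¬ 29 ∣ N₀ := by
    by_cases hc : 29 ∣ NN n
    · have hP29 : P = 29 := if_pos hc
      obtain ⟨t, ht⟩ := hc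
      refine ⟨t, by rw [hP29]; exact ht, ?_⟩
      rintro ⟨u, hu⟩
      exact NN_not_29sq n ⟨u, by rw [ht, hu]; ring⟩
    · exact ⟨NN n, by rw [hP, if_neg hc, one_mul], hc⟩
  have hP0 : P ≠ 0 := by rw [hP]; split <;> norm_num
  have hN₀0 : N₀ ≠ 0 := by rintro rfl; rw [mul_zero] at hN₀; exact hN0 hN₀
  have hδN₀ : δ ∣ N₀ := by
    by_cases hc : 29 ∣ NN n
    · have hP29 : P = 29 := if_pos hc
      rw [hP29] at hN₀
      have hcop : Nat.Coprime δ 29 :=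
        Nat.Coprime.symm ((Nat.Prime.coprime_iff_not_dvd (by norm_num)).mpr hδ29)
      exact hcop.dvd_of_dvd_mul_left (hN₀ ▸ hδN)
    · have hP1 : P = 1 := if_neg hc
      rw [hP1, one_mul] at hN₀
      exact hN₀ ▸ hδN
  set δ' : ℕ := N₀ / δ with hδ'def
  have hδδ' : N₀ = δ * δ' := (Nat.mul_div_cancel' hδN₀).symm
  have hδ'0 : δ' ≠ 0 := by intro h0; rw [h0, mul_zero] at hδδ'; exact hN₀0 hδδ'
  set f : ℕ := Nat.gcd δ δ' with hfdef
  have hf0 : f ≠ 0 := Nat.gcd_ne_zero_left hδ0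
  set A : ℕ := δ / f with hAdef
  set B : ℕ := δ' / f with hBdef
  have hfδ : δ = f * A := (Nat.mul_div_cancel' (Nat.gcd_dvd_left _ _)).symm
  have hfδ' : δ' = f * B := (Nat.mul_div_cancel' (Nat.gcd_dvd_right _ _)).symm
  have hA0 : A ≠ 0 := by intro h0; rw [h0, mul_zero] at hfδ; exact hδ0 hfδ
  have hB0 : B ≠ 0 := by intro h0; rw [h0, mul_zero] at hfδ'; exact hδ'0 hfδ'
  have hAB : Nat.Coprime A B := Nat.coprime_div_gcd_div_gcd (Nat.pos_of_ne_zero hf0)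
  set M : ℕ := P * (A * B) with hMdef
  have hM0 : M ≠ 0 := by
    rw [hMdef]; exact Nat.mul_ne_zero hP0 (Nat.mul_ne_zero hA0 hB0)
  have hNM : NN n = (f*f) * M := by
    rw [hMdef, hN₀, hδδ', hfδ, hfδ']; ring
  have hMd : M ∣ NN n := ⟨f*f, by rw [hNM]; ring⟩
  have hAd : A ∣ NN n := by
    refine dvd_trans ?_ (dvd_trans hδN₀ ⟨P, by rw [hN₀]; ring⟩)
    exact ⟨f, by rw [hfδ]; ring⟩
  have hBd : B ∣ NN n := by
    refine dvd_trans ?_ (dvd_trans (⟨δ, by rw [hδδ']; ring⟩ : δ' ∣ N₀) ⟨P, by rw [hN₀]; ring⟩)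
    exact ⟨f, by rw [hfδ']; ring⟩
  have hfd : f ∣ NN n := dvd_trans ⟨A, hfδ⟩ hδN
  -- M mod 8
  have hfodd : f % 2 = 1 := odd_divisor_NN n hfd
  have hM8 : M % 8 = 5 ∨ M % 8 = 7 := by
    obtain ⟨t, ht⟩ : ∃ t, f = 2*t+1 := ⟨f/2, by omega⟩
    obtain ⟨u, hu⟩ := Nat.even_mul_succ_self t
    have hff : f*f = 4*(t*(t+1))+1 := by rw [ht]; ring
    have h8 := NN_mod8 n
    have hNN8 : NN n = 8*(u*M) + M := by rw [hNM, hff, hu]; ring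
    omega
  -- Bezout data
  have hABZ : IsCoprime (A:ℤ) (B:ℤ) := Nat.isCoprime_iff_coprime.mpr hAB
  obtain ⟨ua, ub, hbez⟩ := hABZ
  set s₁ : ℤ := 2*n*((A:ℤ)*ua - (B:ℤ)*ub) with hs₁def
  have hA1 : (A:ℤ) ∣ s₁ + 2*n := ⟨4*(n:ℤ)*ua, by rw [hs₁def]; linear_combination (-2*(n:ℤ))*hbez⟩
  have hB1 : (B:ℤ) ∣ s₁ - 2*n := ⟨-(4*(n:ℤ)*ub), by rw [hs₁def]; linear_combination (2*(n:ℤ))*hbez⟩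
  obtain ⟨u2, v2, h2⟩ : ∃ u2 v2 : ℤ, u2*((A:ℤ)*(B:ℤ)) + v2*(P:ℤ) = 1 := by
    by_cases hc : 29 ∣ NN n
    · have hP29 : P = 29 := if_pos hc
      have hAB29 : ¬ (29 ∣ A*B) := by
        intro hdd
        exact hN₀29 (dvd_trans hdd ⟨f*f, by rw [hδδ', hfδ, hfδ']; ring⟩)
      have : Nat.Coprime (A*B) 29 :=
        Nat.Coprime.symm ((Nat.Prime.coprime_iff_not_dvd (by norm_num)).mpr hAB29)
      obtain ⟨u, v, huv⟩ := Nat.isCoprime_iff_coprime.mpr this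
      exact ⟨u, v, by rw [hP29]; push_cast at huv ⊢; linear_combination huv⟩
    · have hP1 : P = 1 := if_neg hc
      exact ⟨0, 1, by rw [hP1]; push_cast; ring⟩
  set s : ℤ := s₁*v2*(P:ℤ) with hsdef
  have hsA : (A:ℤ) ∣ s - s₁ := ⟨-(s₁*u2*(B:ℤ)), by rw [hsdef]; linear_combination s₁*h2⟩
  have hsB : (B:ℤ) ∣ s - s₁ := ⟨-(s₁*u2*(A:ℤ)), by rw [hsdef]; linear_combination s₁*h2⟩
  have hsP : (P:ℤ) ∣ s := ⟨s₁*v2, by rw [hsdef]; ring⟩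
  have hsA2 : (A:ℤ) ∣ s + 2*n := by
    have : s + 2*n = (s - s₁) + (s₁ + 2*n) := by ring
    rw [this]; exact dvd_add hsA hA1
  have hsB2 : (B:ℤ) ∣ s - 2*n := by
    have : s - 2*n = (s - s₁) + (s₁ - 2*n) := by ring
    rw [this]; exact dvd_add hsB hB1
  -- M ∣ s^2 + 58
  have hkey : s^2 + 58 = (s + 2*n)*(s - 2*n) + 2*(NN n : ℤ) := by rw [hNZ]; ring
  have hs58 : (M:ℤ) ∣ s^2 + 58 := by
    have hA58 : (A:ℤ) ∣ s^2 + 58 := by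
      rw [hkey]
      exact dvd_add (hsA2.mul_right _) ((Int.natCast_dvd_natCast.mpr hAd).mul_left 2)
    have hB58 : (B:ℤ) ∣ s^2 + 58 := by
      rw [hkey]
      exact dvd_add (hsB2.mul_left _) ((Int.natCast_dvd_natCast.mpr hBd).mul_left 2)
    have hP58 : (P:ℤ) ∣ s^2 + 58 := by
      have hP58n : P ∣ 58 := by rw [hP]; split <;> norm_num
      refine dvd_add (by rw [sq]; exact hsP.mul_left s) ?_
      exact_mod_cast Int.natCast_dvd_natCast.mpr hP58n
    have hABdvd : ((A:ℤ)*(B:ℤ)) ∣ s^2+58 :=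
      IsCoprime.mul_dvd ⟨ua, ub, hbez⟩ hA58 hB58
    have hcopABP : IsCoprime ((A:ℤ)*(B:ℤ)) ((P:ℤ)) := ⟨u2, v2, h2⟩
    have hfin : ((A:ℤ)*(B:ℤ)*(P:ℤ)) ∣ s^2+58 := hcopABP.mul_dvd hABdvd hP58
    have hMcast : (M:ℤ) = (A:ℤ)*(B:ℤ)*(P:ℤ) := by rw [hMdef]; push_cast; ring
    rwa [hMcast]
  -- apply the key representation lemma
  have hMpos : (0:ℤ) < (M:ℤ) := by exact_mod_cast Nat.pos_of_ne_zero hM0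
  have hM8Z : (M:ℤ) % 8 = 5 ∨ (M:ℤ) % 8 = 7 := by
    rcases hM8 with h | h
    · left; omega
    · right; omega
  obtain ⟨α, β, γ, δm, hdet, hMrep, hb⟩ := tf_key (M:ℤ) s hMpos hM8Z hs58
  have hModdZ : (M:ℤ) % 2 = 1 := by omega
  -- the basic congruence : s*γ = δm*M - 2*α
  have hcong : s*γ = δm*(M:ℤ) - 2*α := by
    have h2' : 2*(s*γ) = 2*(δm*(M:ℤ) - 2*α) := by
      linear_combination (-γ)*hb + (2*δm)*hMrep + (-4*α)*hdet
    linarith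
  have hγ0 : γ ≠ 0 := by
    intro h0
    rw [h0] at hMrep
    have : (2:ℤ) ∣ (M:ℤ) := ⟨α^2, by linarith⟩
    omega
  have hAM : (A:ℤ) ∣ (M:ℤ) := by
    have : A ∣ M := ⟨P*B, by rw [hMdef]; ring⟩
    exact_mod_cast Int.natCast_dvd_natCast.mpr this
  have hBM : (B:ℤ) ∣ (M:ℤ) := by
    have : B ∣ M := ⟨P*A, by rw [hMdef]; ring⟩
    exact_mod_cast Int.natCast_dvd_natCast.mpr this
  have hAodd : A % 2 = 1 := odd_divisor_NN n hAd
  have hBodd : B % 2 = 1 := odd_divisor_NN n hBd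
  have hAv0 : (A:ℤ) ∣ 2*(α - n*γ) := by
    have heq : 2*(α - n*γ) = δm*(M:ℤ) - (s + 2*n)*γ := by linear_combination hcong
    rw [heq]
    exact dvd_sub (hAM.mul_left δm) (hsA2.mul_right γ)
  have hBw0 : (B:ℤ) ∣ 2*(α + n*γ) := by
    have heq : 2*(α + n*γ) = δm*(M:ℤ) - (s - 2*n)*γ := by linear_combination hcong
    rw [heq]
    exact dvd_sub (hBM.mul_left δm) (hsB2.mul_right γ)
  have hAv : (A:ℤ) ∣ (α - n*γ) :=
    ((isCoprime_two_of_odd hAodd).symm).dvd_of_dvd_mul_left hAv0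
  have hBw : (B:ℤ) ∣ (α + n*γ) :=
    ((isCoprime_two_of_odd hBodd).symm).dvd_of_dvd_mul_left hBw0
  have hcopαγ : IsCoprime α γ := ⟨δm, -β, by linear_combination hdet⟩
  -- normalize sign so that γ > 0
  obtain ⟨α', γ', hMrep', hAv', hBw', hcop', hγpos⟩ :
      ∃ α' γ' : ℤ, 2*α'^2 + 29*γ'^2 = (M:ℤ) ∧ (A:ℤ) ∣ (α' - n*γ') ∧
        (B:ℤ) ∣ (α' + n*γ') ∧ IsCoprime α' γ' ∧ 0 < γ' := by
    rcases lt_or_gt_of_ne hγ0 with hneg | hpos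
    · refine ⟨-α, -γ, by linear_combination hMrep, ?_, ?_, hcopαγ.neg_neg, by omega⟩
      · have : -α - n*(-γ) = -(α - n*γ) := by ring
        rw [this]; exact hAv.neg_right
      · have : -α + n*(-γ) = -(α + n*γ) := by ring
        rw [this]; exact hBw.neg_right
    · exact ⟨α, γ, hMrep, hAv, hBw, hcopαγ, hpos⟩
  -- the solution
  have hNMZ : (NN n : ℤ) = ((f:ℤ)*(f:ℤ))*(M:ℤ) := by exact_mod_cast hNM
  have hfpos : (0:ℤ) < (f:ℤ) := by exact_mod_cast Nat.pos_of_ne_zero hf0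
  refine ⟨(f:ℤ)*α', (f:ℤ)*γ', ?_, by positivity, ?_⟩
  · rw [hNMZ]; linear_combination ((f:ℤ)*(f:ℤ))*hMrep'
  -- now the value of PhiAux
  have harg : (f:ℤ)*α' - (n:ℤ)*((f:ℤ)*γ') = (f:ℤ)*(α' - n*γ') := by ring
  rw [harg]
  set v₀ : ℤ := α' - n*γ' with hv₀def
  set w₀ : ℤ := α' + n*γ' with hw₀def
  set G : ℕ := PhiAux n ((f:ℤ)*v₀) with hGdef
  have hG0 : G ≠ 0 := (phiAux_pos n _).ne'
  have hGd : G ∣ NN n := phiAux_dvd n _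
  have hG29 : ¬ 29 ∣ G := phiAux_not29 n _
  have hid : 2*(v₀*w₀) = (M:ℤ) - (NN n:ℤ)*γ'^2 := by
    rw [hNZ, hv₀def, hw₀def]; linear_combination hMrep'
  have claim : ∀ p : ℕ, p.Prime → p ≠ 29 →
      (p ^ (δ.factorization p) ∣ G ∧ G.factorization p ≤ δ.factorization p) := by
    intro p pp hp29
    by_cases hpN : p ∣ NN n
    swap
    · have h1 : δ.factorization p = 0 :=
        Nat.factorization_eq_zero_of_not_dvd (fun h => hpN (h.trans hδN))
      have h2 : G.factorization p = 0 :=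
        Nat.factorization_eq_zero_of_not_dvd (fun h => hpN (h.trans hGd))
      rw [h1, h2, pow_zero]
      exact ⟨one_dvd _, le_refl _⟩
    set a : ℕ := (NN n).factorization p with hadef
    set j : ℕ := δ.factorization p with hjdef
    set j' : ℕ := δ'.factorization p with hj'def
    set k : ℕ := f.factorization p with hkdef
    have hPfact : P.factorization p = 0 := by
      apply Nat.factorization_eq_zero_of_not_dvd
      intro hdvd
      rw [hP] at hdvd
      by_cases hc : 29 ∣ NN n
      · rw [if_pos hc] at hdvd
        exact hp29 ((Nat.prime_dvd_prime_iff_eq pp (by norm_num)).mp hdvd)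
      · rw [if_neg hc] at hdvd
        exact pp.ne_one (Nat.dvd_one.mp hdvd)
    have hasplit : a = j + j' := by
      have e1 : (NN n).factorization = P.factorization + N₀.factorization := by
        rw [hN₀]; exact Nat.factorization_mul hP0 hN₀0
      have e2 : N₀.factorization = δ.factorization + δ'.factorization := by
        rw [hδδ']; exact Nat.factorization_mul hδ0 hδ'0
      have := congrArg (fun F => F p) e1
      simp only [Finsupp.add_apply] at this
      have h2' := congrArg (fun F => F p) e2
      simp only [Finsupp.add_apply] at h2'
      rw [hadef, this, h2', hPfact]
      omega
    have hkmin : k = min j j' := by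
      have e3 : f.factorization = δ.factorization ⊓ δ'.factorization := by
        rw [hfdef]; exact Nat.factorization_gcd hδ0 hδ'0
      have := congrArg (fun F => F p) e3
      simp only [Finsupp.inf_apply] at this
      exact this
    have hAfact : A.factorization p = j - k := by
      have e4 : A.factorization = δ.factorization - f.factorization := by
        rw [hAdef]; exact Nat.factorization_div (Nat.gcd_dvd_left _ _)
      have := congrArg (fun F => F p) e4
      simp only [Finsupp.tsub_apply] at this
      exact this
    have hBfact : B.factorization p = j' - k := by
      have e5 : B.factorization = δ'.factorization - f.factorization := by
        rw [hBdef]; exact Nat.factorization_div (Nat.gcd_dvd_right _ _)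
      have := congrArg (fun F => F p) e5
      simp only [Finsupp.tsub_apply] at this
      exact this
    have hMfact : M.factorization p = (j-k) + (j'-k) := by
      have e6 : M.factorization = P.factorization + (A.factorization + B.factorization) := by
        rw [hMdef, Nat.factorization_mul hP0 (Nat.mul_ne_zero hA0 hB0),
          Nat.factorization_mul hA0 hB0]
      have := congrArg (fun F => F p) e6
      simp only [Finsupp.add_apply] at this
      rw [this, hPfact, hAfact, hBfact]
      omega
    have hkj : k ≤ j := by omega
    have hfpk : (p:ℤ)^k ∣ (f:ℤ) := by
      have : p^k ∣ f := (pp.pow_dvd_iff_le_factorization hf0).mpr (le_of_eq hkdef)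
      exact_mod_cast Int.natCast_dvd_natCast.mpr this
    have hAv₀ : (p:ℤ)^(j-k) ∣ v₀ := by
      have h1 : p^(j-k) ∣ A := (pp.pow_dvd_iff_le_factorization hA0).mpr (le_of_eq hAfact.symm)
      have h2 : ((p^(j-k) : ℕ):ℤ) ∣ (A:ℤ) := Int.natCast_dvd_natCast.mpr h1
      have h3 := h2.trans hAv'
      exact_mod_cast h3
    constructor
    · -- p^j ∣ G
      rw [hGdef, phiAux_pow_dvd n _ pp hp29]
      have hvdvd : (p:ℤ)^j ∣ (f:ℤ)*v₀ := by
        have : (p:ℤ)^j = (p:ℤ)^k * (p:ℤ)^(j-k) := by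
          rw [← pow_add]; congr 1; omega
        rw [this]
        exact mul_dvd_mul hfpk hAv₀
      have hNdvd : (p:ℤ)^j ∣ ((NN n : ℕ):ℤ) := by
        have : p^j ∣ NN n := (pp.pow_dvd_iff_le_factorization hN0).mpr (by omega)
        exact_mod_cast Int.natCast_dvd_natCast.mpr this
      have := Int.dvd_gcd hvdvd hNdvd
      exact_mod_cast this
    · -- G.factorization p ≤ j
      have hGa : G.factorization p ≤ a := by
        have := (Nat.factorization_le_iff_dvd hG0 hN0).mpr hGd
        exact Finsupp.le_def.mp this p
      by_cases hja : a ≤ j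
      · omega
      push_neg at hja   -- j < a, hence j' ≥ 1
      have hj'1 : 1 ≤ j' := by omega
      have ppZ : Prime (p:ℤ) := Nat.prime_iff_prime_int.mp pp
      have hp2 : p ≠ 2 := by
        rintro rfl
        have := NN_odd n
        obtain ⟨t, ht⟩ := hpN
        omega
      have hnotboth : ¬ ((p:ℤ) ∣ v₀ ∧ (p:ℤ) ∣ w₀) := by
        rintro ⟨h1, h4⟩
        have hα : (p:ℤ) ∣ 2*α' := by
          have : 2*α' = v₀ + w₀ := by rw [hv₀def, hw₀def]; ring
          rw [this]; exact dvd_add h1 h4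
        have hγ : (p:ℤ) ∣ 2*(n:ℤ)*γ' := by
          have : 2*(n:ℤ)*γ' = w₀ - v₀ := by rw [hv₀def, hw₀def]; ring
          rw [this]; exact dvd_sub h4 h1
        have hα2 : (p:ℤ) ∣ α' := by
          rcases ppZ.dvd_mul.mp hα with h5 | h5
          · exfalso
            have h5' : (p:ℤ) ∣ ((2:ℕ):ℤ) := by exact_mod_cast h5
            exact hp2 ((Nat.prime_dvd_prime_iff_eq pp Nat.prime_two).mp
              (Int.natCast_dvd_natCast.mp h5'))
          · exact h5
        have hγ2 : (p:ℤ) ∣ γ' := by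
          rcases ppZ.dvd_mul.mp hγ with h5 | h5
          · exfalso
            have h6 : (p:ℤ) ∣ ((2*n : ℕ):ℤ) := by push_cast; exact h5
            exact prime_ne29_not_dvd_2n n pp hpN hp29 (Int.natCast_dvd_natCast.mp h6)
          · exact h5
        obtain ⟨u, v, huv⟩ := hcop'
        have : (p:ℤ) ∣ 1 := by
          rw [← huv]; exact dvd_add (hα2.mul_left u) (hγ2.mul_left v)
        exact ppZ.not_unit (isUnit_of_dvd_one this)
      -- establish v₀ ≠ 0 and the exact order of p in v₀
      have hmain : v₀ ≠ 0 ∧ v₀.natAbs.factorization p = j - k := by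
        rcases Nat.lt_or_ge k j with hkltj | hkgej
        · -- k = j' < j : the exact order is j-k
          have hkj' : k = j' := by omega
          have hup : ¬ ((p:ℤ)^(j-k+1) ∣ v₀) := by
            intro hdd
            have h1 : (p:ℤ)^(j-k+1) ∣ 2*(v₀*w₀) := ((hdd.mul_right w₀).mul_left 2)
            rw [hid] at h1
            have h2' : (p:ℤ)^(j-k+1) ∣ (NN n:ℤ)*γ'^2 := by
              have h3 : p^(j-k+1) ∣ NN n :=
                (pp.pow_dvd_iff_le_factorization hN0).mpr (by omega)
              exact (by exact_mod_cast Int.natCast_dvd_natCast.mpr h3 :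
                (p:ℤ)^(j-k+1) ∣ ((NN n:ℕ):ℤ)).mul_right _
            have h4 : (p:ℤ)^(j-k+1) ∣ (M:ℤ) := by
              have he : (M:ℤ) = ((M:ℤ) - (NN n:ℤ)*γ'^2) + (NN n:ℤ)*γ'^2 := by ring
              rw [he]; exact dvd_add h1 h2'
            have h5 : p^(j-k+1) ∣ M := by
              have h6 : ((p^(j-k+1) : ℕ):ℤ) ∣ ((M:ℕ):ℤ) := by exact_mod_cast h4
              exact_mod_cast h6
            have h7 := (pp.pow_dvd_iff_le_factorization hM0).mp h5
            rw [hMfact] at h7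
            omega
          have hne : v₀ ≠ 0 := fun h0 => hup (h0 ▸ dvd_zero _)
          have habs0 : v₀.natAbs ≠ 0 := fun h0 => hne (Int.natAbs_eq_zero.mp h0)
          refine ⟨hne, le_antisymm ?_ ?_⟩
          · by_contra hcon
            push_neg at hcon
            have h8 : p^(j-k+1) ∣ v₀.natAbs :=
              (pp.pow_dvd_iff_le_factorization habs0).mpr (by omega)
            have h8' : ((p^(j-k+1):ℕ):ℤ) ∣ v₀ := Int.natCast_dvd.mpr h8
            exact hup (by exact_mod_cast h8')
          · refine (pp.pow_dvd_iff_le_factorization habs0).mp ?_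
            exact Int.natCast_dvd.mp (by exact_mod_cast hAv₀)
        · -- j = k : p does not divide v₀ at all
          have hkj2 : k = j := by omega
          have hpv₀ : ¬ (p:ℤ) ∣ v₀ := by
            intro h1
            by_cases hjj' : j < j'
            · have hpB : p ∣ B := by
                have := (pp.pow_dvd_iff_le_factorization hB0).mpr
                  (by rw [hBfact]; omega : 1 ≤ B.factorization p)
                rwa [pow_one] at this
              have hpw : (p:ℤ) ∣ w₀ :=
                (Int.natCast_dvd_natCast.mpr hpB : (p:ℤ) ∣ (B:ℤ)).trans hBw'
              exact hnotboth ⟨h1, hpw⟩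
            · have hjj : j' = j := by omega
              have hpM : (p:ℤ) ∣ (M:ℤ) := by
                have hh : (p:ℤ) ∣ 2*(v₀*w₀) := (h1.mul_right w₀).mul_left 2
                rw [hid] at hh
                have hNg : (p:ℤ) ∣ (NN n:ℤ)*γ'^2 :=
                  ((Int.natCast_dvd_natCast.mpr hpN : (p:ℤ) ∣ (NN n:ℤ))).mul_right _
                have he : (M:ℤ) = ((M:ℤ) - (NN n:ℤ)*γ'^2) + (NN n:ℤ)*γ'^2 := by ring
                rw [he]; exact dvd_add hh hNg
              have h5 : p ∣ M := by
                have h6 : ((p:ℕ):ℤ) ∣ ((M:ℕ):ℤ) := hpM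
                exact_mod_cast h6
              have h7 := pp.factorization_pos_of_dvd hM0 h5
              rw [hMfact] at h7
              omega
          have hne : v₀ ≠ 0 := fun h0 => hpv₀ (h0 ▸ dvd_zero _)
          refine ⟨hne, ?_⟩
          have h9 : ¬ p ∣ v₀.natAbs := fun hh => hpv₀ (Int.natCast_dvd.mpr hh)
          rw [Nat.factorization_eq_zero_of_not_dvd h9]
          omega
      obtain ⟨hne, hord⟩ := hmain
      have habs0 : v₀.natAbs ≠ 0 := fun h0 => hne (Int.natAbs_eq_zero.mp h0)
      have hordv : ((f:ℤ)*v₀).natAbs.factorization p = j := by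
        have e7 : (f * v₀.natAbs).factorization p
            = f.factorization p + v₀.natAbs.factorization p := by
          rw [Nat.factorization_mul hf0 habs0]; simp [Finsupp.add_apply]
        rw [Int.natAbs_mul, Int.natAbs_natCast, e7, hord]
        have hkk : f.factorization p = k := rfl
        omega
      by_contra hcon
      push_neg at hcon
      have h10 : p^(j+1) ∣ G := (pp.pow_dvd_iff_le_factorization hG0).mpr (by omega)
      rw [hGdef, phiAux_pow_dvd n _ pp hp29] at h10
      have h11 : (p:ℤ)^(j+1) ∣ (f:ℤ)*v₀ := by
        have h12 : ((p^(j+1):ℕ):ℤ) ∣ (Int.gcd ((f:ℤ)*v₀) (NN n:ℤ) : ℤ) :=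
          Int.natCast_dvd_natCast.mpr h10
        exact_mod_cast h12.trans (Int.gcd_dvd_left _ _)
      have h13 : p^(j+1) ∣ ((f:ℤ)*v₀).natAbs :=
        Int.natCast_dvd.mp (by exact_mod_cast h11)
      have h14 := (pp.pow_dvd_iff_le_factorization
        (fun h0 => hne (by simpa [Int.natAbs_mul, Int.natAbs_eq_zero, hf0] using h0))).mp h13
      omega
  -- conclude G = δ by mutual divisibility
  apply Nat.dvd_antisymm
  · apply nat_dvd_of_prime_pow hG0
    intro p pp pd
    have hp29 : p ≠ 29 := fun h => hG29 (h ▸ pd)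
    calc p^(G.factorization p) ∣ p^(δ.factorization p) :=
          pow_dvd_pow p (claim p pp hp29).2
      _ ∣ δ := Nat.ordProj_dvd δ p
  · apply nat_dvd_of_prime_pow hδ0
    intro p pp pd
    have hp29 : p ≠ 29 := fun h => hδ29 (h ▸ pd)
    exact (claim p pp hp29).1

lemma poly3 (c u : ℤ) (hu : c*(c+1) = 2*u) : polygonal 3 c = u := by
  unfold polygonal
  have h1 : c * ((3 - 2) * c - (3 - 4)) = 2*u := by linear_combination hu
  rw [h1]
  exact Int.mul_ediv_cancel_left u two_ne_zero

section Counting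

variable (n : ℕ)

def Sol : Set (ℤ×ℤ) := {v : ℤ×ℤ | 2*v.1^2 + 29*v.2^2 = (NN n : ℤ)}

lemma Sol_finite : (Sol n).Finite := by
  have hN : (0:ℤ) < (NN n : ℤ) := by exact_mod_cast NN_pos n
  apply Set.Finite.subset (Set.finite_Icc ((-(NN n : ℤ), -(NN n : ℤ)) : ℤ×ℤ)
    ((NN n : ℤ), (NN n : ℤ)))
  rintro ⟨x, y⟩ hv
  simp only [Sol, Set.mem_setOf_eq] at hv
  simp only [Set.mem_Icc, Prod.mk_le_mk]
  constructor
  · constructor <;> nlinarith [sq_nonneg x, sq_nonneg y, sq_nonneg (x+1), sq_nonneg (y+1),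
      sq_nonneg (x - (NN n:ℤ)), sq_nonneg (y - (NN n:ℤ)), sq_nonneg (x + (NN n:ℤ)),
      sq_nonneg (y + (NN n:ℤ))]
  · constructor <;> nlinarith [sq_nonneg x, sq_nonneg y, sq_nonneg (x - (NN n:ℤ)),
      sq_nonneg (y - (NN n:ℤ)), sq_nonneg (x + (NN n:ℤ)), sq_nonneg (y + (NN n:ℤ))]

/-- the sets in the orbit decomposition -/
def PosS : Set (ℤ×ℤ) := {v ∈ Sol n | 0 < v.2}
def PpS : Set (ℤ×ℤ) := {v ∈ Sol n | 0 < v.1 ∧ 0 < v.2}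
def P0S : Set (ℤ×ℤ) := {v ∈ Sol n | v.1 = 0 ∧ 0 < v.2}
def PmS : Set (ℤ×ℤ) := {v ∈ Sol n | v.1 < 0 ∧ 0 < v.2}
def S2S : Set (ℤ×ℤ) := {v ∈ Sol n | 0 ≤ v.1 ∧ 3 ≤ v.2}

lemma main_count : (PosS n).ncard = ((NN n).divisors.filter (fun d => ¬ 29 ∣ d)).card := by
  set D := (NN n).divisors.filter (fun d => ¬ 29 ∣ d) with hD
  have hbij : Set.BijOn (fun v : ℤ×ℤ => PhiAux n (v.1 - n*v.2)) (PosS n) (↑D) := by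
    refine ⟨?_, ?_, ?_⟩
    · rintro ⟨x, y⟩ hv
      simp only [PosS, Sol, Set.mem_setOf_eq] at hv
      simp only [Finset.coe_filter, Set.mem_setOf_eq, Nat.mem_divisors, hD]
      exact ⟨⟨phiAux_dvd n _, (NN_pos n).ne'⟩, phiAux_not29 n _⟩
    · rintro ⟨x, y⟩ hv ⟨x', y'⟩ hv' heq
      simp only [PosS, Sol, Set.mem_setOf_eq] at hv hv'
      have heq' : PhiAux n (x - n*y) = PhiAux n (x' - n*y') := heq
      rcases inj_pm hv.1 hv'.1 heq' with ⟨h1, h2⟩ | ⟨h1, h2⟩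
      · simp [Prod.ext_iff, h1, h2]
      · exfalso; omega
    · rintro δ hδ
      simp only [Finset.coe_filter, Set.mem_setOf_eq, Nat.mem_divisors, hD] at hδ
      obtain ⟨x, y, hsol, hy, hphi⟩ := surj_core n hδ.1.1 hδ.2
      exact ⟨(x, y), ⟨hsol, hy⟩, hphi⟩
  calc (PosS n).ncard = ((fun v : ℤ×ℤ => PhiAux n (v.1 - n*v.2)) '' (PosS n)).ncard :=
        (Set.ncard_image_of_injOn hbij.injOn).symm
    _ = (↑D : Set ℕ).ncard := by rw [hbij.image_eq]
    _ = D.card := Set.ncard_coe_finset D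

lemma Pm_card : (PmS n).ncard = (PpS n).ncard := by
  have himg : PmS n = (fun v : ℤ×ℤ => (-v.1, v.2)) '' (PpS n) := by
    ext ⟨x, y⟩
    simp only [PmS, PpS, Sol, Set.mem_setOf_eq, Set.mem_image, Prod.exists, Prod.ext_iff]
    constructor
    · rintro ⟨hs, hx, hy⟩
      exact ⟨-x, y, ⟨by linear_combination hs, by omega, hy⟩, by simp, rfl⟩
    · rintro ⟨u, w, ⟨hs, hu, hw⟩, h1, h2⟩
      exact ⟨by rw [← h1, ← h2]; linear_combination hs, by omega, by omega⟩
  rw [himg]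
  apply Set.ncard_image_of_injOn
  rintro ⟨x, y⟩ _ ⟨x', y'⟩ _ heq
  simp only [Prod.ext_iff] at heq ⊢
  exact ⟨by omega, heq.2⟩

lemma P0_le_one : (P0S n).ncard ≤ 1 := by
  have hsub : (P0S n).Subsingleton := by
    rintro ⟨x, y⟩ hv ⟨x', y'⟩ hv'
    simp only [P0S, Sol, Set.mem_setOf_eq] at hv hv'
    obtain ⟨hs, hx, hy⟩ := hv
    obtain ⟨hs', hx', hy'⟩ := hv'
    simp only [Prod.ext_iff]
    refine ⟨by omega, ?_⟩
    rw [hx] at hs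
    rw [hx'] at hs'
    have h1 : (y - y')*(y + y') = 0 := by
      have h2 : 29*((y - y')*(y + y')) = 0 := by linear_combination hs - hs'
      linarith
    rcases mul_eq_zero.mp h1 with h | h <;> omega
  rcases hsub.eq_empty_or_singleton with h | ⟨a, h⟩ <;> simp [h]

lemma Pos_split : (PosS n).ncard = (PpS n).ncard + (P0S n).ncard + (PmS n).ncard := by
  have hfinP : (PpS n).Finite := (Sol_finite n).subset (fun v hv => hv.1)
  have hfin0 : (P0S n).Finite := (Sol_finite n).subset (fun v hv => hv.1)
  have hfinM : (PmS n).Finite := (Sol_finite n).subset (fun v hv => hv.1)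
  have heq : PosS n = (PpS n ∪ P0S n) ∪ PmS n := by
    ext ⟨x, y⟩
    simp only [PosS, PpS, P0S, PmS, Sol, Set.mem_setOf_eq, Set.mem_union]
    constructor
    · rintro ⟨hs, hy⟩
      rcases lt_trichotomy x 0 with h | h | h
      · exact Or.inr ⟨hs, h, hy⟩
      · exact Or.inl (Or.inr ⟨hs, h, hy⟩)
      · exact Or.inl (Or.inl ⟨hs, h, hy⟩)
    · rintro ((⟨hs, _, hy⟩ | ⟨hs, _, hy⟩) | ⟨hs, _, hy⟩) <;> exact ⟨hs, hy⟩
  have hd1 : Disjoint (PpS n ∪ P0S n) (PmS n) := by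
    rw [Set.disjoint_left]
    intro v h1 h2
    simp only [PpS, P0S, PmS, Sol, Set.mem_setOf_eq, Set.mem_union] at h1 h2
    rcases h1 with ⟨_, hx, _⟩ | ⟨_, hx, _⟩ <;> omega
  have hd2 : Disjoint (PpS n) (P0S n) := by
    rw [Set.disjoint_left]
    intro v h1 h2
    simp only [PpS, P0S, Sol, Set.mem_setOf_eq] at h1 h2
    omega
  rw [heq, Set.ncard_union_eq hd1 ((hfinP.union hfin0)) hfinM,
    Set.ncard_union_eq hd2 hfinP hfin0]

lemma nonneg_split (hn : 0 < n) :
    (PpS n).ncard + (P0S n).ncard = (S2S n).ncard + 1 := by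
  have hbase : ((n:ℤ), (1:ℤ)) ∈ Sol n := by
    simp only [Sol, Set.mem_setOf_eq]
    unfold NN; push_cast; ring
  have hfinS : (S2S n).Finite := (Sol_finite n).subset (fun v hv => hv.1)
  have heq : PpS n ∪ P0S n = S2S n ∪ {((n:ℤ), (1:ℤ))} := by
    ext ⟨x, y⟩
    simp only [PpS, P0S, S2S, Sol, Set.mem_setOf_eq, Set.mem_union, Set.mem_singleton_iff,
      Prod.ext_iff]
    constructor
    · rintro (⟨hs, hx, hy⟩ | ⟨hs, hx, hy⟩)
      · obtain ⟨t, ht⟩ := sol_y_odd hs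
        rcases Nat.lt_or_ge 2 y.toNat with h3 | h3
        · exact Or.inl ⟨hs, by omega, by omega⟩
        · -- y = 1
          have hy1 : y = 1 := by omega
          rw [hy1] at hs
          exact Or.inr ⟨sol_y_one (by omega) hs, hy1⟩
      · obtain ⟨t, ht⟩ := sol_y_odd hs
        rcases Nat.lt_or_ge 2 y.toNat with h3 | h3
        · exact Or.inl ⟨hs, by omega, by omega⟩
        · have hy1 : y = 1 := by omega
          rw [hy1] at hs
          have := sol_y_one (by omega : (0:ℤ) ≤ x) hs
          omega
    · rintro (⟨hs, hx, hy⟩ | ⟨h1, h2⟩)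
      · rcases eq_or_lt_of_le hx with h | h
        · exact Or.inr ⟨hs, h.symm, by omega⟩
        · exact Or.inl ⟨hs, h, by omega⟩
      · rw [h1, h2]
        left
        exact ⟨hbase, by exact_mod_cast hn, one_pos⟩
  have hdisj : Disjoint (S2S n) ({((n:ℤ), (1:ℤ))} : Set (ℤ×ℤ)) := by
    rw [Set.disjoint_left]
    rintro ⟨x, y⟩ ⟨_, _, hy⟩ h
    simp only [Set.mem_singleton_iff, Prod.ext_iff] at h
    omega
  have hd2 : Disjoint (PpS n) (P0S n) := by
    rw [Set.disjoint_left]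
    intro v h1 h2
    simp only [PpS, P0S, Sol, Set.mem_setOf_eq] at h1 h2
    omega
  calc (PpS n).ncard + (P0S n).ncard
      = (PpS n ∪ P0S n).ncard := by
        rw [Set.ncard_union_eq hd2 ((Sol_finite n).subset (fun v hv => hv.1))
          ((Sol_finite n).subset (fun v hv => hv.1))]
    _ = (S2S n ∪ {((n:ℤ), (1:ℤ))}).ncard := by rw [heq]
    _ = (S2S n).ncard + 1 := by
        rw [Set.ncard_union_eq hdisj hfinS (Set.finite_singleton _), Set.ncard_singleton]

lemma Pp_pos (hn : 0 < n) : 1 ≤ (PpS n).ncard := by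
  have hbase : ((n:ℤ), (1:ℤ)) ∈ PpS n := by
    simp only [PpS, Sol, Set.mem_setOf_eq]
    refine ⟨?_, by exact_mod_cast hn, one_pos⟩
    unfold NN; push_cast; ring
  have hfinP : (PpS n).Finite := (Sol_finite n).subset (fun v hv => hv.1)
  exact (Set.ncard_pos hfinP).mpr ⟨_, hbase⟩

end Counting

lemma rmt_eq (n : ℕ) (hn : 0 < n) : rmt 3 29 n = (S2S n).ncard := by
  have hNZ : (NN n : ℤ) = 2*(n:ℤ)^2 + 29 := by unfold NN; push_cast; ring
  unfold rmt
  set g : ℤ×ℤ → ℕ×ℕ := fun v => ((n - v.1.toNat)/2, (n + v.1.toNat)/2) with hg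
  have hbij : Set.BijOn g (S2S n) {p : ℕ × ℕ | 0 < p.1 ∧ p.1 ≤ p.2 ∧ p.1 + p.2 = n ∧
      ∃ c : ℤ, (((3:ℕ) = 3 ∨ (3:ℕ) = 4) → 0 < c) ∧
        (p.1 : ℤ) * p.2 = ((29:ℕ):ℤ) * polygonal ((3:ℕ):ℤ) c} := by
    refine ⟨?_, ?_, ?_⟩
    · rintro ⟨x, y⟩ hv
      simp only [S2S, Sol, Set.mem_setOf_eq] at hv
      obtain ⟨hs, hx, hy3⟩ := hv
      obtain ⟨c, hc⟩ := sol_y_odd hs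
      have hc1 : 1 ≤ c := by omega
      obtain ⟨t, ht⟩ := sol_sub_even hs
      have hxn : x < (n:ℤ) := by nlinarith [hs, hNZ]
      have hx'cast : ((x.toNat : ℕ) : ℤ) = x := Int.toNat_of_nonneg hx
      simp only [Set.mem_setOf_eq, hg]
      have h2a : (((n - x.toNat)/2 : ℕ) : ℤ) * 2 = (n:ℤ) - x := by omega
      have h2b : (((n + x.toNat)/2 : ℕ) : ℤ) * 2 = (n:ℤ) + x := by omega
      refine ⟨by omega, by omega, by omega, c, fun _ => by omega, ?_⟩
      obtain ⟨u, hu'⟩ := Int.even_mul_succ_self c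
      have hu : c*(c+1) = 2*u := by omega
      have e1 : 4*((((n - x.toNat)/2 : ℕ) : ℤ) * (((n + x.toNat)/2 : ℕ) : ℤ))
          = (n:ℤ)^2 - x^2 := by
        linear_combination (2*(((n + x.toNat)/2 : ℕ) : ℤ))*h2a + ((n:ℤ)-x)*h2b
      rw [hNZ] at hs
      have e3 : y^2 = 8*u+1 := by rw [hc]; linear_combination 4*hu
      rw [show ((3:ℕ):ℤ) = 3 from by norm_num, show ((29:ℕ):ℤ) = 29 from by norm_num,
        poly3 c u hu]
      linarith [e1, hs, e3]
    · rintro ⟨x, y⟩ hv ⟨x', y'⟩ hv' heq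
      simp only [S2S, Sol, Set.mem_setOf_eq] at hv hv'
      obtain ⟨hs, hx, hy3⟩ := hv
      obtain ⟨hs', hx', hy3'⟩ := hv'
      simp only [hg, Prod.ext_iff] at heq
      obtain ⟨e1, e2⟩ := heq
      obtain ⟨t, ht⟩ := sol_sub_even hs
      obtain ⟨t', ht'⟩ := sol_sub_even hs'
      have hxx : x = x' := by omega
      rw [hxx] at hs
      have h1 : (y - y')*(y + y') = 0 := by
        have h2 : 29*((y - y')*(y + y')) = 0 := by linear_combination hs - hs'
        linarith
      have : y = y' := by rcases mul_eq_zero.mp h1 with h | h <;> omega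
      simp [Prod.ext_iff, hxx, this]
    · rintro ⟨a, b⟩ hab
      simp only [Set.mem_setOf_eq] at hab
      obtain ⟨ha0, hle, hsum, c, hcpos, heq⟩ := hab
      have hc1 : 0 < c := hcpos (by norm_num)
      obtain ⟨u, hu'⟩ := Int.even_mul_succ_self c
      have hu : c*(c+1) = 2*u := by omega
      rw [show ((3:ℕ):ℤ) = 3 from by norm_num, poly3 c u hu] at heq
      have heq' : (a:ℤ)*b = 29*u := by exact_mod_cast heq
      have hs2 : (a:ℤ) + b = n := by exact_mod_cast hsum
      refine ⟨((b:ℤ) - a, 2*c+1), ?_, ?_⟩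
      · simp only [S2S, Sol, Set.mem_setOf_eq]
        refine ⟨?_, by push_cast; omega, by omega⟩
        rw [hNZ]
        linear_combination 2*((a:ℤ)+(b:ℤ)+n)*hs2 + (-8)*heq' + 116*hu
      · simp only [hg, Prod.ext_iff]
        exact ⟨by omega, by omega⟩
  rw [← hbij.image_eq, Set.ncard_image_of_injOn hbij.injOn]

theorem stmt_17' (n : ℕ) (hn : 0 < n) :
    rmt 3 29 n = (dA {29} (2 * n ^ 2 + 29) - 1) / 2 := by
  have hdA : dA {29} (2 * n ^ 2 + 29)
      = ((NN n).divisors.filter (fun d => ¬ 29 ∣ d)).card := by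
    unfold dA NN
    congr 1
    apply Finset.filter_congr
    intro x _
    simp
  have h1 := main_count n
  have h2 := Pos_split n
  have h3 := Pm_card n
  have h4 := P0_le_one n
  have h5 := nonneg_split n hn
  have h6 := Pp_pos n hn
  have h7 := rmt_eq n hn
  omega

theorem stmt_17 (n : ℕ) (hn : 0 < n) :
    rmt 3 29 n = (dA {29} (2 * n ^ 2 + 29) - 1) / 2 := by
  exact stmt_17' n hn
end

section
/- For every positive integer n, r_{3,2}(n) = 0 if and only if n² + 1 is a prime number. -/
open Zsqrtd GaussianInt

local notation "GI" => GaussianInt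

section Aux

lemma sq_mod_two (k : ℕ) : k ^ 2 % 2 = k % 2 := by
  rw [Nat.pow_mod]
  rcases Nat.mod_two_eq_zero_or_one k with h | h <;> simp [h]

lemma prime_not_sq {q : ℕ} (hq : q.Prime) (k : ℤ) : k ^ 2 ≠ (q : ℤ) := by
  intro h
  have hk : k.natAbs * k.natAbs = q := by
    have := congrArg Int.natAbs h
    simpa [Int.natAbs_mul, Int.natAbs_pow, sq] using this
  rcases hq.eq_one_or_self_of_dvd k.natAbs ⟨k.natAbs, hk.symm⟩ with h1 | h1
  · rw [h1] at hk; simp at hk; exact hq.one_lt.ne' hk.symm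
  · rw [h1] at hk
    have := hq.one_lt
    nlinarith

lemma norm_mk (x y : ℤ) : (⟨x, y⟩ : GI).norm = x ^ 2 + y ^ 2 := by
  simp [Zsqrtd.norm_def]; ring

set_option synthInstance.maxHeartbeats 1000000 in
set_option maxHeartbeats 1000000 in
lemma prime_of_norm_prime {z : GI} (h : Nat.Prime z.norm.natAbs) : Prime z := by
  have hi : Irreducible z := by
    constructor
    · intro hu
      rw [← Zsqrtd.norm_eq_one_iff] at hu
      exact h.one_lt.ne' hu
    · intro s t hst
      have hn : z.norm.natAbs = s.norm.natAbs * t.norm.natAbs := by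
        rw [hst, Zsqrtd.norm_mul, Int.natAbs_mul]
      rcases h.eq_one_or_self_of_dvd s.norm.natAbs ⟨t.norm.natAbs, hn⟩ with h1 | h1
      · exact Or.inl (Zsqrtd.norm_eq_one_iff.mp h1)
      · right
        apply Zsqrtd.norm_eq_one_iff.mp
        have hpos := h.pos
        rw [h1] at hn
        have : t.norm.natAbs = 1 := by
          rcases Nat.eq_zero_or_pos s.norm.natAbs with h0 | h0
          · omega
          · nlinarith
        exact this
  exact irreducible_iff_prime.mp hi

lemma factor_N (n : ℕ) : ((n ^ 2 + 1 : ℕ) : GI) = ⟨(n : ℤ), 1⟩ * ⟨(n : ℤ), -1⟩ := by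
  have h2 : (⟨(n : ℤ), 1⟩ * ⟨(n : ℤ), -1⟩ : GI) = ⟨(n : ℤ) ^ 2 + 1, 0⟩ := by
    ext <;> simp [Zsqrtd.re_mul, Zsqrtd.im_mul] <;> ring
  rw [h2]
  ext <;>
    simp [pow_two, Zsqrtd.re_mul, Zsqrtd.im_mul, Zsqrtd.re_natCast, Zsqrtd.im_natCast] <;>
    push_cast <;> ring

/-- If `n²+1` is prime, there is no representation with even `X` and odd `Y ≥ 3`. -/
lemma no_rep_of_prime {n : ℕ} (hp : (n ^ 2 + 1).Prime) {X Y : ℤ}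
    (hX : X % 2 = 0) (hY : 3 ≤ Y) (hXY : X ^ 2 + Y ^ 2 = (n : ℤ) ^ 2 + 1) : False := by
  set z : GI := ⟨X, Y⟩ with hz
  have hnorm : z.norm = ((n ^ 2 + 1 : ℕ) : ℤ) := by
    rw [hz, norm_mk, hXY]; push_cast; ring
  have hzp : Prime z := by
    apply prime_of_norm_prime
    rw [hnorm]
    rw [Int.natAbs_natCast]; exact hp
  have hdvd : z ∣ (⟨(n : ℤ), 1⟩ : GI) * ⟨(n : ℤ), -1⟩ := by
    rw [← factor_N]
    refine ⟨star z, ?_⟩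
    have := Zsqrtd.norm_eq_mul_conj z
    rw [hnorm] at this
    rw [← this]
    push_cast
    rfl
  have key : ∀ ε : ℤ, ε = 1 ∨ ε = -1 → z ∣ (⟨(n : ℤ), ε⟩ : GI) → False := by
    intro ε hε ⟨w, hw⟩
    have hnw : w.norm = 1 := by
      have h1 : (⟨(n : ℤ), ε⟩ : GI).norm = z.norm * w.norm := by rw [hw, Zsqrtd.norm_mul]
      rw [norm_mk, hnorm] at h1
      have hε2 : ε ^ 2 = 1 := by rcases hε with h | h <;> rw [h] <;> ring
      rw [hε2] at h1
      have hpos : (0 : ℤ) < ((n ^ 2 + 1 : ℕ) : ℤ) := by positivity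
      have : ((n ^ 2 + 1 : ℕ) : ℤ) * 1 = ((n ^ 2 + 1 : ℕ) : ℤ) * w.norm := by
        rw [mul_one]
        rw [← h1]; push_cast; ring
      exact (mul_left_cancel₀ hpos.ne' this).symm
  -- components
    have hre : (n : ℤ) = X * w.re - Y * w.im := by
      have := congrArg Zsqrtd.re hw
      simp [hz, Zsqrtd.re_mul] at this
      linarith
    have him : ε = X * w.im + Y * w.re := by
      have := congrArg Zsqrtd.im hw
      simp [hz, Zsqrtd.im_mul] at this
      linarith
    have hn1 : w.re ^ 2 + w.im ^ 2 = 1 := by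
      have := Zsqrtd.norm_def w
      rw [hnw] at this
      nlinarith [this]
    have he1 : w.re ≤ 1 := by nlinarith [sq_nonneg w.im]
    have he2 : -1 ≤ w.re := by nlinarith [sq_nonneg w.im]
    have hf1 : w.im ≤ 1 := by nlinarith [sq_nonneg w.re]
    have hf2 : -1 ≤ w.im := by nlinarith [sq_nonneg w.re]
    interval_cases w.re <;> interval_cases w.im <;> rcases hε with h | h <;> subst h <;>
      omega
  rcases hzp.2.2 _ _ hdvd with h | h
  · exact key 1 (Or.inl rfl) h
  · exact key (-1) (Or.inr rfl) h

set_option synthInstance.maxHeartbeats 1000000 in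
set_option maxHeartbeats 1000000 in
/-- If `n` is even and `n²+1` is composite, there is a nontrivial representation. -/
lemma rep_of_not_prime {n : ℕ} (hn : 0 < n) (hn2 : n % 2 = 0) (hp : ¬(n ^ 2 + 1).Prime) :
    ∃ x y : ℕ, x ^ 2 + y ^ 2 = n ^ 2 + 1 ∧ x % 2 = 0 ∧ 3 ≤ y ∧ y % 2 = 1 ∧ x < n := by
  -- basic facts about N = n^2+1
  set N := n ^ 2 + 1 with hN
  have hn2' : 2 ≤ n := by omega
  have hNodd : N % 2 = 1 := by have := sq_mod_two n; omega
  have hN5 : 5 ≤ N := by nlinarith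
  set q := N.minFac with hqdef
  have hq : q.Prime := Nat.minFac_prime (by omega)
  have hqdvd : q ∣ N := Nat.minFac_dvd N
  have hqodd : q % 2 = 1 := by
    rcases hq.eq_two_or_odd with h | h
    · exfalso; rw [h] at hqdvd; omega
    · exact h
  have hqN : q ≠ N := by
    intro h
    exact hp (by rw [Nat.prime_def_minFac]; exact ⟨by omega, h⟩)
  -- q is a sum of two squares
  haveI : Fact q.Prime := ⟨hq⟩
  have hq4 : q % 4 ≠ 3 := by
    apply ZMod.exists_sq_eq_neg_one_iff.mp
    refine ⟨(n : ZMod q), ?_⟩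
    have h0 : ((N : ℕ) : ZMod q) = 0 := by
      exact_mod_cast (ZMod.natCast_eq_zero_iff N q).mpr hqdvd
    have : ((n : ZMod q) ^ 2 + 1 : ZMod q) = 0 := by
      rw [← h0, hN]; push_cast; ring
    linear_combination -this
  have hqnp : ¬ Prime (q : GI) := by
    rw [GaussianInt.prime_iff_mod_four_eq_three_of_nat_prime q]
    exact hq4
  have hqni : ¬ Irreducible (q : GI) := fun h => hqnp (irreducible_iff_prime.mp h)
  obtain ⟨a, b, hab⟩ := GaussianInt.sq_add_sq_of_nat_prime_of_not_irreducible q hqni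
  -- the Gaussian prime β₀ over q
  set β₀ : GI := ⟨a, b⟩ with hβ₀
  have hnβ₀ : β₀.norm = (q : ℤ) := by rw [hβ₀, norm_mk]; exact_mod_cast hab
  have hβ₀p : Prime β₀ := prime_of_norm_prime (by rw [hnβ₀]; simpa using hq)
  have hβ₀q : β₀ ∣ (q : GI) := by
    refine ⟨star β₀, ?_⟩
    have := Zsqrtd.norm_eq_mul_conj β₀
    rw [hnβ₀] at this
    rw [← this]; push_cast; rfl
  have hqdvdN : (q : GI) ∣ ((N : ℕ) : GI) := by exact_mod_cast Nat.cast_dvd_cast (α := GI) hqdvd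
  have hβ₀N : β₀ ∣ (⟨(n : ℤ), 1⟩ : GI) * ⟨(n : ℤ), -1⟩ := by
    rw [← factor_N]
    exact hβ₀q.trans hqdvdN
  -- get β with norm q dividing ⟨n, 1⟩
  have hβ : ∃ β : GI, β.norm = (q : ℤ) ∧ β ∣ (⟨(n : ℤ), 1⟩ : GI) := by
    rcases hβ₀p.2.2 _ _ hβ₀N with h | h
    · exact ⟨β₀, hnβ₀, h⟩
    · refine ⟨star β₀, by rw [Zsqrtd.norm_conj, hnβ₀], ?_⟩
      obtain ⟨w, hw⟩ := h
      refine ⟨star w, ?_⟩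
      have := congrArg star hw
      simp only [star_mul'] at this
      rw [← this]
      rfl
  obtain ⟨β, hnβ, γ, hγ⟩ := hβ
  -- the cofactor γ with norm m
  set m : ℤ := γ.norm with hm
  have hβne : β ≠ 0 := by
    intro h
    rw [h] at hnβ
    have hq0 : (q : ℤ) = 0 := by simpa using hnβ.symm
    have hq0' : q = 0 := by exact_mod_cast hq0
    have := hq.two_le
    omega
  have hqm : (q : ℤ) * m = (N : ℤ) := by
    have h1 : (⟨(n : ℤ), 1⟩ : GI).norm = β.norm * γ.norm := by rw [hγ, Zsqrtd.norm_mul]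
    rw [norm_mk, hnβ, ← hm] at h1
    rw [← h1, hN]; push_cast; ring
  have hmodd : m % 2 = 1 := by
    rw [← Int.odd_iff]
    rcases Int.even_or_odd m with he | ho
    · exfalso
      have h1 : Even ((N : ℕ) : ℤ) := by rw [← hqm]; exact he.mul_left _
      have h2 : Even N := by exact_mod_cast h1
      rw [Nat.even_iff] at h2
      omega
    · exact ho
  have hm2 : 3 ≤ m := by
    have hmpos : 0 ≤ m := Zsqrtd.norm_nonneg (by norm_num) γ
    have hm1 : m ≠ 1 := by
      intro h
      rw [h, mul_one] at hqm
      exact hqN (by exact_mod_cast hqm)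
    have hm0 : m ≠ 0 := by
      intro h
      rw [h, mul_zero] at hqm
      omega
    omega
  -- the new representation z = star β * γ
  set z : GI := star β * γ with hzdef
  set X : ℤ := z.re with hX
  set Y : ℤ := z.im with hY
  have hznorm : X ^ 2 + Y ^ 2 = (n : ℤ) ^ 2 + 1 := by
    have h1 : z.norm = (q : ℤ) * m := by
      rw [hzdef, Zsqrtd.norm_mul, Zsqrtd.norm_conj, hnβ, hm]
    have h2 := Zsqrtd.norm_def z
    rw [h1] at h2
    have : (q : ℤ) * m = X * X - (-1) * Y * Y := h2
    rw [hqm] at this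
    rw [hN] at this
    push_cast at this
    linarith [this]
  -- the key component identity E2
  have hstar : (⟨(n : ℤ), -1⟩ : GI) = star β * star γ := by
    have h := congrArg star hγ
    rw [star_mul', Zsqrtd.star_mk] at h
    exact h
  have key : z * ⟨(n : ℤ), -1⟩ = star β * star β * ((m : ℤ) : GI) := by
    rw [hzdef, hstar]
    rw [hm, Zsqrtd.norm_eq_mul_conj]
    ring
  have E2 : Y * (n : ℤ) - X = -2 * β.re * β.im * m := by
    have := congrArg Zsqrtd.im key
    simp [Zsqrtd.im_mul, Zsqrtd.re_mul] at this
    linarith [this]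
  have habq : β.re ^ 2 + β.im ^ 2 = (q : ℤ) := by
    have := Zsqrtd.norm_def β
    rw [hnβ] at this
    nlinarith [this]
  -- rule out the trivial representations
  have hA : ¬(X ^ 2 = (n : ℤ) ^ 2 ∧ Y ^ 2 = 1) := by
    rintro ⟨h1, h2⟩
    have hX' : X = n ∨ X = -n := by
      have : (X - n) * (X + n) = 0 := by linear_combination h1
      rcases mul_eq_zero.mp this with h | h
      · left; linarith
      · right; linarith
    have hY' : Y = 1 ∨ Y = -1 := by
      have : (Y - 1) * (Y + 1) = 0 := by linear_combination h2
      rcases mul_eq_zero.mp this with h | h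
      · left; linarith
      · right; linarith
    have hNint : (q : ℤ) * m = (n : ℤ) ^ 2 + 1 := by rw [hqm, hN]; push_cast; ring
    rcases hX' with hx | hx <;> rcases hY' with hy | hy
    · -- X = n, Y = 1 : a'b'm = 0
      rw [hx, hy] at E2
      have h0 : β.re * β.im * m = 0 := by linarith
      rcases mul_eq_zero.mp h0 with h | h
      · rcases mul_eq_zero.mp h with h' | h'
        · exact prime_not_sq hq β.im (by rw [← habq, h']; ring)
        · exact prime_not_sq hq β.re (by rw [← habq, h']; ring)
      · omega
    · -- X = n, Y = -1 : β.re*β.im*m = n, so m ∣ 1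
      rw [hx, hy] at E2
      have hprod : β.re * β.im * m = (n : ℤ) := by linarith
      have hdvd1 : m ∣ 1 := ⟨(q : ℤ) - β.re * β.im * (β.re * β.im) * m, by
        linear_combination (β.re * β.im * m + (n : ℤ)) * hprod - hNint⟩
      have := Int.le_of_dvd one_pos hdvd1
      omega
    · -- X = -n, Y = 1 : β.re*β.im*m = -n
      rw [hx, hy] at E2
      have hprod : β.re * β.im * m = -(n : ℤ) := by linarith
      have hdvd1 : m ∣ 1 := ⟨(q : ℤ) - β.re * β.im * (β.re * β.im) * m, by
        linear_combination (β.re * β.im * m - (n : ℤ)) * hprod - hNint⟩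
      have := Int.le_of_dvd one_pos hdvd1
      omega
    · -- X = -n, Y = -1 : a'b'm = 0
      rw [hx, hy] at E2
      have h0 : β.re * β.im * m = 0 := by linarith
      rcases mul_eq_zero.mp h0 with h | h
      · rcases mul_eq_zero.mp h with h' | h'
        · exact prime_not_sq hq β.im (by rw [← habq, h']; ring)
        · exact prime_not_sq hq β.re (by rw [← habq, h']; ring)
      · omega
  have hB : ¬(X ^ 2 = 1 ∧ Y ^ 2 = (n : ℤ) ^ 2) := by
    rintro ⟨h1, h2⟩
    have hX' : X = 1 ∨ X = -1 := by
      have : (X - 1) * (X + 1) = 0 := by linear_combination h1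
      rcases mul_eq_zero.mp this with h | h
      · left; linarith
      · right; linarith
    have hY' : Y = n ∨ Y = -n := by
      have : (Y - n) * (Y + n) = 0 := by linear_combination h2
      rcases mul_eq_zero.mp this with h | h
      · left; linarith
      · right; linarith
    have hNint : (q : ℤ) * m = (n : ℤ) ^ 2 + 1 := by rw [hqm, hN]; push_cast; ring
    rcases hX' with hx | hx <;> rcases hY' with hy | hy
    · -- X = 1, Y = n : m ∣ 2
      rw [hx, hy] at E2
      have hdvd2 : m ∣ 2 := ⟨(q : ℤ) + 2 * (β.re * β.im), by
        linear_combination -hNint - E2⟩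
      have := Int.le_of_dvd two_pos hdvd2
      omega
    · -- X = 1, Y = -n : q = 2 a b, even, contra
      rw [hx, hy] at E2
      have hq2 : (q : ℤ) * m = 2 * (β.re * β.im) * m := by linear_combination hNint - E2
      have hmne : m ≠ 0 := by omega
      have hq2' : (q : ℤ) = 2 * (β.re * β.im) := mul_right_cancel₀ hmne hq2
      have h2 : (2 : ℤ) ∣ (q : ℤ) := ⟨β.re * β.im, by linarith⟩
      have h2' : (2 : ℕ) ∣ q := by exact_mod_cast h2
      omega
    · -- X = -1, Y = n : q = -2 a b, even, contra
      rw [hx, hy] at E2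
      have hq2 : (q : ℤ) * m = -2 * (β.re * β.im) * m := by linear_combination hNint + E2
      have hmne : m ≠ 0 := by omega
      have hq2' : (q : ℤ) = -2 * (β.re * β.im) := mul_right_cancel₀ hmne hq2
      have h2 : (2 : ℤ) ∣ (q : ℤ) := ⟨-(β.re * β.im), by linarith⟩
      have h2' : (2 : ℕ) ∣ q := by exact_mod_cast h2
      omega
    · -- X = -1, Y = -n : m ∣ 2
      rw [hx, hy] at E2
      have hdvd2 : m ∣ 2 := ⟨(q : ℤ) - 2 * (β.re * β.im), by
        linear_combination E2 - hNint⟩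
      have := Int.le_of_dvd two_pos hdvd2
      omega
  -- extract natural number data
  set x0 := X.natAbs with hx0
  set y0 := Y.natAbs with hy0
  have hx0sq : (x0 : ℤ) ^ 2 = X ^ 2 := by rw [hx0]; exact_mod_cast Int.natAbs_sq X
  have hy0sq : (y0 : ℤ) ^ 2 = Y ^ 2 := by rw [hy0]; exact_mod_cast Int.natAbs_sq Y
  have hsum : x0 ^ 2 + y0 ^ 2 = n ^ 2 + 1 := by
    have : (x0 : ℤ) ^ 2 + (y0 : ℤ) ^ 2 = (n : ℤ) ^ 2 + 1 := by rw [hx0sq, hy0sq]; exact hznorm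
    exact_mod_cast this
  have hA' : ¬(x0 = n ∧ y0 = 1) := by
    rintro ⟨h1, h2⟩
    exact hA ⟨by rw [← hx0sq, h1], by rw [← hy0sq, h2]; norm_num⟩
  have hB' : ¬(x0 = 1 ∧ y0 = n) := by
    rintro ⟨h1, h2⟩
    exact hB ⟨by rw [← hx0sq, h1]; norm_num, by rw [← hy0sq, h2]⟩
  have hpar : x0 ^ 2 % 2 = x0 % 2 := sq_mod_two x0
  have hpar' : y0 ^ 2 % 2 = y0 % 2 := sq_mod_two y0
  have hnpar : n ^ 2 % 2 = n % 2 := sq_mod_two n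
  -- exactly one of x0, y0 is odd
  have hone : (x0 % 2 = 0 ∧ y0 % 2 = 1) ∨ (x0 % 2 = 1 ∧ y0 % 2 = 0) := by omega
  have main : ∀ x y : ℕ, x ^ 2 + y ^ 2 = n ^ 2 + 1 → x % 2 = 0 → y % 2 = 1 →
      ¬(x = n ∧ y = 1) → ∃ x' y' : ℕ, x' ^ 2 + y' ^ 2 = n ^ 2 + 1 ∧ x' % 2 = 0 ∧ 3 ≤ y' ∧
        y' % 2 = 1 ∧ x' < n := by
    intro x y hxy hx2 hy2 hxn
    have hy1 : y ≠ 1 := by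
      intro h
      rw [h] at hxy
      have : x ^ 2 = n ^ 2 := by omega
      have : x = n := by nlinarith [Nat.le_total x n]
      exact hxn ⟨this, h⟩
    have hy3 : 3 ≤ y := by omega
    have hxn' : x < n := by nlinarith [Nat.le_total x n]
    exact ⟨x, y, hxy, hx2, hy3, hy2, hxn'⟩
  rcases hone with ⟨h1, h2⟩ | ⟨h1, h2⟩
  · exact main x0 y0 hsum h1 h2 hA'
  · apply main y0 x0 (by omega) h2 h1
    rintro ⟨h3, h4⟩
    exact hB' ⟨h4, h3⟩

/-- From a nontrivial representation, construct a member of the defining set. -/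
lemma mem_of_rep {n x y : ℕ} (hx2 : x % 2 = 0) (hn2 : n % 2 = 0)
    (hy3 : 3 ≤ y) (hy2 : y % 2 = 1) (hxy : x ^ 2 + y ^ 2 = n ^ 2 + 1) (hxn : x < n) :
    ∃ a b : ℕ, 0 < a ∧ a ≤ b ∧ a + b = n ∧ ∃ c : ℤ, 0 < c ∧ (a : ℤ) * b = c * (c + 1) := by
  obtain ⟨a, ha⟩ : ∃ a, 2 * a + x = n := ⟨(n - x) / 2, by omega⟩
  obtain ⟨b, hb⟩ : ∃ b, 2 * b = n + x := ⟨(n + x) / 2, by omega⟩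
  obtain ⟨c, hc⟩ : ∃ c, 2 * c + 1 = y := ⟨(y - 1) / 2, by omega⟩
  have h2a : (2 : ℤ) * a + x = n := by exact_mod_cast ha
  have h2b : (2 : ℤ) * b = n + x := by exact_mod_cast hb
  have hcy : (2 : ℤ) * c + 1 = y := by exact_mod_cast hc
  have hxyz : (x : ℤ) ^ 2 + (y : ℤ) ^ 2 = (n : ℤ) ^ 2 + 1 := by exact_mod_cast hxy
  refine ⟨a, b, by omega, by omega, by omega, (c : ℤ), by exact_mod_cast Nat.pos_of_ne_zero (by omega), ?_⟩
  have key : (4 : ℤ) * ((a : ℤ) * b) = 4 * ((c : ℤ) * (c + 1)) := by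
    linear_combination (2 * (a : ℤ)) * h2b + ((n : ℤ) + x) * h2a - hxyz -
      ((y : ℤ) + 2 * c + 1) * hcy
  have h4 : (4 : ℤ) ≠ 0 := by norm_num
  exact mul_left_cancel₀ h4 key

end Aux

theorem stmt_18 (n : ℕ) (hn : 0 < n) :
    rmt 3 2 n = 0 ↔ (n ^ 2 + 1).Prime := by
  classical
  have hpoly : ∀ c : ℤ, ((2 : ℕ) : ℤ) * polygonal ((3 : ℕ) : ℤ) c = c * (c + 1) := by
    intro c
    have h1 : polygonal ((3 : ℕ) : ℤ) c = c * (c + 1) / 2 := by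
      unfold polygonal; norm_num
    rw [h1]
    push_cast
    exact Int.mul_ediv_cancel' (even_iff_two_dvd.mp (Int.even_mul_succ_self c))
  set S : Set (ℕ × ℕ) := {p : ℕ × ℕ | 0 < p.1 ∧ p.1 ≤ p.2 ∧ p.1 + p.2 = n ∧
    ∃ c : ℤ, 0 < c ∧ (p.1 : ℤ) * p.2 = c * (c + 1)} with hS
  have hrmt : rmt 3 2 n = S.ncard := by
    unfold rmt
    apply congrArg
    ext p
    simp only [hS, Set.mem_setOf_eq]
    constructor
    · rintro ⟨h1, h2, h3, c, hc, he⟩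
      exact ⟨h1, h2, h3, c, hc (Or.inl trivial), by rw [← hpoly c]; exact he⟩
    · rintro ⟨h1, h2, h3, c, hc, he⟩
      exact ⟨h1, h2, h3, c, fun _ => hc, by rw [hpoly c]; exact he⟩
  have hfin : S.Finite := by
    apply Set.Finite.subset (Set.finite_Iic ((n, n) : ℕ × ℕ))
    rintro ⟨a, b⟩ ⟨h1, h2, h3, -⟩
    simp only [Set.mem_Iic, Prod.mk_le_mk]
    omega
  rw [hrmt, Set.ncard_eq_zero hfin]
  constructor
  · -- empty → prime
    intro hS0
    by_contra hp
    rcases Nat.even_or_odd n with he | ho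
    · -- n even : composite gives a representation, hence a member
      obtain ⟨x, y, hxy, hx2, hy3, hy2, hxn⟩ := rep_of_not_prime hn (Nat.even_iff.mp he) hp
      obtain ⟨a, b, h1, h2, h3, hc⟩ := mem_of_rep hx2 (Nat.even_iff.mp he) hy3 hy2 hxy hxn
      have : ((a, b) : ℕ × ℕ) ∈ S := ⟨h1, h2, h3, hc⟩
      rw [hS0] at this
      exact Set.notMem_empty _ this
    · -- n odd
      rcases Nat.lt_or_ge n 3 with hlt | hge
      · -- n = 1 : n² + 1 = 2 is prime
        have hn1 : n = 1 := by rcases ho with ⟨k, hk⟩; omega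
        rw [hn1] at hp
        norm_num at hp
      · -- n odd ≥ 3 : the member (a, a+1) with 2a+1 = n
        obtain ⟨a, ha⟩ : ∃ a, 2 * a + 1 = n := by rcases ho with ⟨k, hk⟩; exact ⟨k, by omega⟩
        have : ((a, a + 1) : ℕ × ℕ) ∈ S := by
          refine ⟨by omega, by omega, by omega, (a : ℤ), by exact_mod_cast Nat.pos_of_ne_zero (by omega), ?_⟩
          push_cast
          ring
        rw [hS0] at this
        exact Set.notMem_empty _ this
  · -- prime → empty
    intro hp
    rw [Set.eq_empty_iff_forall_notMem]
    rintro ⟨a, b⟩ ⟨h1, h2, h3, c, hc, he⟩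
    have h3' : (a : ℤ) + b = n := by exact_mod_cast h3
    rcases Nat.even_or_odd n with hev | ho
    · -- n even : contradiction with no_rep_of_prime
      have hna : n % 2 = 0 := Nat.even_iff.mp hev
      refine no_rep_of_prime hp (X := (b : ℤ) - a) (Y := 2 * c + 1) ?_ (by omega) ?_
      · omega
      · linear_combination (-4 : ℤ) * he + ((a : ℤ) + b + n) * h3'
    · -- n odd : then n² + 1 is even, so equals 2, so n = 1, impossible
      have hsq := sq_mod_two n
      rw [Nat.odd_iff] at ho
      have h2d : 2 ∣ n ^ 2 + 1 := by omega
      have h2e : n ^ 2 + 1 = 2 :=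
        ((hp.eq_one_or_self_of_dvd 2 h2d).resolve_left (by norm_num)).symm
      have hn1 : n = 1 := by nlinarith
      omega
end

section
/- For every positive integer n, r_{7,1}(n) = 0 if and only if 10n² + 9 is either a prime number or 9 times a prime number. -/
/-! ### Auxiliary machinery -/

def isF1 (m : ℕ) : Prop := ∃ a b : ℤ, (m:ℤ) = a^2 + 10*b^2
def isF2 (m : ℕ) : Prop := ∃ a b : ℤ, (m:ℤ) = 2*a^2 + 5*b^2

lemma mod3_lemma : ∀ a b : ZMod 3, a^2+10*b^2 = 0 → a = 0 ∧ b = 0 := by decide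
lemma mod7_lemma : ∀ a b : ZMod 7, a^2+10*b^2 = 0 → a = 2*b ∨ a = -(2*b) := by decide
lemma mod8_lemma : ∀ u v w : ZMod 8, 2*u^2+5*v^2 ≠ 10*w^2+9 := by decide

lemma even_of_sq (x : ℤ) (h : Even (x^2)) : Even x := by
  simpa using (Int.even_pow.mp h).1

lemma dvd3_of (x y c : ℤ) (h : x^2 + 10*y^2 = 3*c) : (3:ℤ) ∣ x ∧ (3:ℤ) ∣ y := by
  have hc : ((x:ZMod 3))^2 + 10*((y:ZMod 3))^2 = 0 := by
    have h2 : ((x^2+10*y^2 : ℤ) : ZMod 3) = ((3*c : ℤ) : ZMod 3) := by rw [h]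
    push_cast at h2
    rw [h2, show (3:ZMod 3) = 0 by decide]; ring
  obtain ⟨h1, h2⟩ := mod3_lemma _ _ hc
  exact ⟨(ZMod.intCast_zmod_eq_zero_iff_dvd x 3).mp h1,
         (ZMod.intCast_zmod_eq_zero_iff_dvd y 3).mp h2⟩

lemma dvd7_of (x y c : ℤ) (h : x^2 + 10*y^2 = 7*c) :
    (7:ℤ) ∣ x - 2*y ∨ (7:ℤ) ∣ x + 2*y := by
  have hc : ((x:ZMod 7))^2 + 10*((y:ZMod 7))^2 = 0 := by
    have h2 : ((x^2+10*y^2 : ℤ) : ZMod 7) = ((7*c : ℤ) : ZMod 7) := by rw [h]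
    push_cast at h2
    rw [h2, show (7:ZMod 7) = 0 by decide]; ring
  rcases mod7_lemma _ _ hc with h1 | h1
  · left
    have : ((x - 2*y : ℤ) : ZMod 7) = 0 := by push_cast; rw [h1]; ring
    exact (ZMod.intCast_zmod_eq_zero_iff_dvd _ 7).mp this
  · right
    have : ((x + 2*y : ℤ) : ZMod 7) = 0 := by push_cast; rw [h1]; ring
    exact (ZMod.intCast_zmod_eq_zero_iff_dvd _ 7).mp this

lemma q_eq_3 (q : ℕ) (hq : q.Prime) (h : (3:ℤ) ∣ (q:ℤ)) : q = 3 := by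
  have h3 : (3:ℕ) ∣ q := by exact_mod_cast h
  exact ((Nat.prime_dvd_prime_iff_eq Nat.prime_three hq).mp h3).symm

lemma descent (q : ℕ) (hq : q.Prime) (hq3 : q ≠ 3)
    (k : ℤ) (hk1 : 1 ≤ k) (hk10 : k ≤ 10) (x y : ℤ) (h : x^2 + 10*y^2 = k*q) :
    isF1 q ∨ isF2 q := by
  have hq0 : (0:ℤ) < q := by exact_mod_cast hq.pos
  interval_cases k
  · exact Or.inl ⟨x, y, by linarith⟩
  · -- k = 2
    obtain ⟨x₁, rfl⟩ : Even x := even_of_sq x ⟨(q:ℤ) - 5*y^2, by linear_combination h⟩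
    refine Or.inr ⟨x₁, y, mul_left_cancel₀ (by norm_num : (2:ℤ) ≠ 0) ?_⟩
    linear_combination -h
  · -- k = 3
    obtain ⟨⟨a, rfl⟩, ⟨b, rfl⟩⟩ := dvd3_of x y q h
    exact absurd (q_eq_3 q hq ⟨a^2+10*b^2, mul_left_cancel₀ (by norm_num : (3:ℤ) ≠ 0)
      (by linear_combination -h)⟩) hq3
  · -- k = 4
    obtain ⟨x₁, rfl⟩ : Even x := even_of_sq x ⟨2*(q:ℤ) - 5*y^2, by linear_combination h⟩
    obtain ⟨y₁, rfl⟩ : Even y := by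
      have h10 : 5*y^2 = 2*((q:ℤ) - x₁^2) :=
        mul_left_cancel₀ (by norm_num : (2:ℤ) ≠ 0) (by linear_combination h)
      have h5y : Even (5*y^2) := ⟨(q:ℤ) - x₁^2, by linarith⟩
      exact even_of_sq y ((Int.even_mul.mp h5y).resolve_left (by decide))
    refine Or.inl ⟨x₁, y₁, mul_left_cancel₀ (by norm_num : (4:ℤ) ≠ 0) ?_⟩
    linear_combination -h
  · -- k = 5
    obtain ⟨x₁, rfl⟩ : (5:ℤ) ∣ x := by
      refine (by norm_num : Prime (5:ℤ)).dvd_of_dvd_pow (n := 2) ⟨(q:ℤ) - 2*y^2, by linear_combination h⟩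
    refine Or.inr ⟨y, x₁, mul_left_cancel₀ (by norm_num : (5:ℤ) ≠ 0) ?_⟩
    linear_combination -h
  · -- k = 6
    obtain ⟨⟨a, rfl⟩, ⟨b, rfl⟩⟩ := dvd3_of x y (2*q) (by linarith)
    have h3 : (3:ℤ) ∣ 2*(q:ℤ) := ⟨a^2+10*b^2, mul_left_cancel₀ (by norm_num : (3:ℤ) ≠ 0)
      (by linear_combination -h)⟩
    have : (3:ℤ) ∣ (q:ℤ) :=
      ((Int.Prime.dvd_mul' Nat.prime_three h3).resolve_left (by decide))
    exact absurd (q_eq_3 q hq this) hq3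
  · -- k = 7
    rcases dvd7_of x y q h with ⟨v, hv⟩ | ⟨v, hv⟩
    · have hu : (7:ℤ) ∣ x + 5*y := ⟨v + y, by linarith⟩
      obtain ⟨u, hu⟩ := hu
      have hy : y = u - v := by linarith
      have hx : x = 2*u + 5*v := by linarith
      subst hy hx
      refine Or.inr ⟨u, v, mul_left_cancel₀ (by norm_num : (7:ℤ) ≠ 0) ?_⟩
      linear_combination -h
    · have hu : (7:ℤ) ∣ x - 5*y := ⟨v - y, by linarith⟩
      obtain ⟨u, hu⟩ := hu
      have hy : y = v - u := by linarith
      have hx : x = 2*u + 5*v := by linarith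
      subst hy hx
      refine Or.inr ⟨u, v, mul_left_cancel₀ (by norm_num : (7:ℤ) ≠ 0) ?_⟩
      linear_combination -h
  · -- k = 8
    obtain ⟨x₁, rfl⟩ : Even x := even_of_sq x ⟨4*(q:ℤ) - 5*y^2, by linear_combination h⟩
    obtain ⟨y₁, rfl⟩ : Even y := by
      have h10 : 5*y^2 = 2*(2*(q:ℤ) - x₁^2) :=
        mul_left_cancel₀ (by norm_num : (2:ℤ) ≠ 0) (by linear_combination h)
      have h5y : Even (5*y^2) := ⟨2*(q:ℤ) - x₁^2, by linarith⟩
      exact even_of_sq y ((Int.even_mul.mp h5y).resolve_left (by decide))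
    obtain ⟨x₂, rfl⟩ : Even x₁ := by
      have h4 : x₁^2 = 2*((q:ℤ) - 5*y₁^2) :=
        mul_left_cancel₀ (by norm_num : (4:ℤ) ≠ 0) (by linear_combination h)
      exact even_of_sq x₁ ⟨(q:ℤ) - 5*y₁^2, by linarith⟩
    refine Or.inr ⟨x₂, y₁, mul_left_cancel₀ (by norm_num : (8:ℤ) ≠ 0) ?_⟩
    linear_combination -h
  · -- k = 9
    obtain ⟨⟨a, rfl⟩, ⟨b, rfl⟩⟩ := dvd3_of x y (3*q) (by linarith)
    refine Or.inl ⟨a, b, mul_left_cancel₀ (by norm_num : (9:ℤ) ≠ 0) ?_⟩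
    linear_combination -h
  · -- k = 10
    have h2 : Even x := even_of_sq x ⟨5*(q:ℤ) - 5*y^2, by linear_combination h⟩
    have h5 : (5:ℤ) ∣ x :=
      (by norm_num : Prime (5:ℤ)).dvd_of_dvd_pow (n := 2) ⟨2*(q:ℤ) - 2*y^2, by linear_combination h⟩
    obtain ⟨x₁, rfl⟩ := h2
    obtain ⟨x₂, rfl⟩ : (5:ℤ) ∣ x₁ :=
      (Int.Prime.dvd_mul' (by norm_num : Nat.Prime 5) (by rw [show (2:ℤ)*x₁ = x₁ + x₁ by ring]; exact h5)).resolve_left (by decide)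
    refine Or.inl ⟨y, x₂, mul_left_cancel₀ (by norm_num : (10:ℤ) ≠ 0) ?_⟩
    linear_combination -h

lemma thue (p : ℕ) (hp : p.Prime) (t : ZMod p) :
    ∃ x y : ℤ, ¬(x = 0 ∧ y = 0) ∧ x^2 ≤ (p:ℤ) - 1 ∧ y^2 ≤ (p:ℤ) - 1 ∧
      (x : ZMod p) = t * (y : ZMod p) := by
  haveI : Fact p.Prime := ⟨hp⟩
  set r := Nat.sqrt (p-1) with hr
  have hp1 : 1 ≤ p := hp.one_lt.le
  have hrle : r^2 ≤ p - 1 := Nat.sqrt_le' (p-1)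
  have hrleZ : (r:ℤ)^2 ≤ (p:ℤ) - 1 := by
    have := hrle; zify [hp1] at this; exact_mod_cast this
  have hrp : p < (r+1)^2 := by
    have h1 : p - 1 < (r+1)^2 := by
      have := Nat.lt_succ_sqrt' (p-1); simpa [hr] using this
    rcases Nat.lt_or_ge p ((r+1)^2) with h | h
    · exact h
    · have : p = (r+1)^2 := by omega
      exact absurd (this ▸ hp.prime.not_isSquare) (by simp [IsSquare]; exact ⟨r+1, by ring⟩)
  have hcard : (Finset.univ : Finset (ZMod p)).card <
      ((Finset.range (r+1)) ×ˢ (Finset.range (r+1))).card := by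
    simp only [Finset.card_product, Finset.card_range, Finset.card_univ, ZMod.card p]
    calc p < (r+1)^2 := hrp
    _ = (r+1)*(r+1) := by ring
  obtain ⟨⟨a₁, b₁⟩, h₁, ⟨a₂, b₂⟩, h₂, hne, heq⟩ :=
    Finset.exists_ne_map_eq_of_card_lt_of_maps_to hcard
      (f := fun q : ℕ × ℕ => (q.1 : ZMod p) - t * (q.2 : ZMod p))
      (fun q _ => Finset.mem_univ _)
  simp only [Finset.mem_product, Finset.mem_range] at h₁ h₂
  refine ⟨(a₁:ℤ) - a₂, (b₁:ℤ) - b₂, ?_, ?_, ?_, ?_⟩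
  · rintro ⟨hx, hy⟩
    apply hne
    have e1 : a₁ = a₂ := by omega
    have e2 : b₁ = b₂ := by omega
    simp [e1, e2]
  · have h1 : ((a₁:ℤ) - a₂)^2 ≤ (r:ℤ)^2 := by
      have := h₁.1; have := h₂.1
      nlinarith [sq_nonneg ((a₁:ℤ) + a₂ - r)]
    linarith
  · have h1 : ((b₁:ℤ) - b₂)^2 ≤ (r:ℤ)^2 := by
      have := h₁.2; have := h₂.2
      nlinarith [sq_nonneg ((b₁:ℤ) + b₂ - r)]
    linarith
  · push_cast
    linear_combination heq

lemma prime_rep (q n : ℕ) (hq : q.Prime) (hq3 : q ≠ 3) (hdvd : q ∣ 10*n^2+9) :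
    isF1 q ∨ isF2 q := by
  haveI : Fact q.Prime := ⟨hq⟩
  have h30 : (3 : ZMod q) ≠ 0 := by
    intro h
    have h3 : q ∣ 3 := by
      have := (ZMod.natCast_eq_zero_iff 3 q).mp (by exact_mod_cast h)
      exact this
    exact hq3 ((Nat.prime_dvd_prime_iff_eq hq Nat.prime_three).mp h3)
  have hN0 : ((10*n^2+9 : ℕ) : ZMod q) = 0 := (ZMod.natCast_eq_zero_iff _ q).mpr hdvd
  push_cast at hN0
  set t : ZMod q := 10*(n:ZMod q) * (3:ZMod q)⁻¹ with htdef
  have ht3 : t*3 = 10*(n:ZMod q) := by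
    calc t*3 = 10*(n:ZMod q)*((3:ZMod q)⁻¹*3) := by rw [htdef]; ring
    _ = 10*(n:ZMod q) := by rw [inv_mul_cancel₀ h30, mul_one]
  have h9 : (9 : ZMod q) ≠ 0 := by
    rw [show (9:ZMod q) = 3*3 by norm_num]; exact mul_ne_zero h30 h30
  have ht : t^2 = -10 := by
    have key2 : t^2*9 = -90 := by
      rw [show t^2*9 = (t*3)^2 by ring, ht3]; linear_combination 10*hN0
    have h0 : (t^2 + 10)*9 = 0 := by linear_combination key2
    rcases mul_eq_zero.mp h0 with h | h
    · linear_combination h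
    · exact absurd h h9
  obtain ⟨x, y, hxy0, hxb, hyb, hxy⟩ := thue q hq t
  have hq0 : (0:ℤ) < q := by exact_mod_cast hq.pos
  have hqx : (q:ℤ) ∣ x^2+10*y^2 := by
    have hz : ((x^2+10*y^2 : ℤ) : ZMod q) = 0 := by
      push_cast
      rw [hxy]
      linear_combination ((y:ZMod q))^2 * ht
    exact_mod_cast (ZMod.intCast_zmod_eq_zero_iff_dvd _ q).mp hz
  obtain ⟨k, hk⟩ := hqx
  have hpos : 0 < x^2 + 10*y^2 := by
    rcases not_and_or.mp hxy0 with hx | hy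
    · have : 0 < x^2 := by positivity
      nlinarith [sq_nonneg y]
    · have : 0 < y^2 := by positivity
      nlinarith [sq_nonneg x]
  have hk1 : 1 ≤ k := by nlinarith
  have hk10 : k ≤ 10 := by
    have h11 : (q:ℤ)*k < (q:ℤ)*11 := by nlinarith
    have := (mul_lt_mul_iff_right₀ hq0).mp h11
    omega
  exact descent q hq hq3 k hk1 hk10 x y (by linarith [hk])

lemma mul_rep (a b : ℕ) (ha : isF1 a ∨ isF2 a) (hb : isF1 b ∨ isF2 b) :
    isF1 (a*b) ∨ isF2 (a*b) := by
  rcases ha with ⟨x,y,hx⟩ | ⟨x,y,hx⟩ <;> rcases hb with ⟨z,w,hz⟩ | ⟨z,w,hz⟩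
  · exact Or.inl ⟨x*z-10*y*w, x*w+y*z, by push_cast; rw [hx, hz]; ring⟩
  · exact Or.inr ⟨z*x+5*w*y, w*x-2*z*y, by push_cast; rw [hx, hz]; ring⟩
  · exact Or.inr ⟨x*z+5*y*w, y*z-2*x*w, by push_cast; rw [hx, hz]; ring⟩
  · exact Or.inl ⟨2*x*z+5*y*w, x*w-y*z, by push_cast; rw [hx, hz]; ring⟩

lemma times9 (d : ℕ) (h : isF1 d ∨ isF2 d) : isF1 (9*d) ∨ isF2 (9*d) := by
  rcases h with ⟨x,y,hx⟩ | ⟨x,y,hx⟩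
  · exact Or.inl ⟨3*x, 3*y, by push_cast; rw [hx]; ring⟩
  · exact Or.inr ⟨3*x, 3*y, by push_cast; rw [hx]; ring⟩

lemma divisor_rep (n : ℕ) : ∀ d : ℕ, d ≠ 0 → ¬(3 ∣ d) → d ∣ 10*n^2+9 → isF1 d ∨ isF2 d := by
  intro d
  induction d using Nat.strong_induction_on with
  | _ d ih =>
    intro hd0 h3 hdvd
    rcases eq_or_ne d 1 with rfl | hd1
    · exact Or.inl ⟨1, 0, by norm_num⟩
    · have hq := Nat.minFac_prime hd1
      have hqd : d.minFac ∣ d := Nat.minFac_dvd d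
      have hq3 : d.minFac ≠ 3 := fun h => h3 (h ▸ hqd)
      have hrep_q := prime_rep d.minFac n hq hq3 (hqd.trans hdvd)
      have hdq : d / d.minFac ∣ d := ⟨d.minFac, by rw [Nat.div_mul_cancel hqd]⟩
      have hlt : d / d.minFac < d := Nat.div_lt_self (Nat.pos_of_ne_zero hd0) hq.one_lt
      have hne : d / d.minFac ≠ 0 := by
        have h1 : d.minFac ≤ d := Nat.le_of_dvd (Nat.pos_of_ne_zero hd0) hqd
        have h2 := Nat.div_pos h1 hq.pos
        omega
      have hrep_m := ih _ hlt hne (fun h => h3 (h.trans hdq)) (hdq.trans hdvd)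
      have hd : d = d.minFac * (d / d.minFac) := (Nat.mul_div_cancel' hqd).symm
      rw [hd]
      exact mul_rep _ _ hrep_q hrep_m

/-! ### Bridge between `rmt 7 1 n` and representations -/

lemma polygonal_seven (c : ℤ) : polygonal 7 c = c*(5*c-3)/2 := by
  unfold polygonal; norm_num

lemma sq4_even (u : ZMod 4) : (u+u)^2 = 0 := by revert u; decide
lemma sq4_odd (u : ZMod 4) : (2*u+1)^2 = 1 := by revert u; decide

lemma parity4 (s x m : ℕ) (h : s^2 + 10*x^2 = 10*m^2+9) : x % 2 = m % 2 := by
  have hz : ((s:ZMod 4))^2 + 10*((x:ZMod 4))^2 = 10*((m:ZMod 4))^2 + 9 := by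
    exact_mod_cast congrArg (fun t : ℕ => (t : ZMod 4)) h
  rcases Nat.even_or_odd x with ⟨u, hu⟩ | ⟨u, hu⟩ <;>
    rcases Nat.even_or_odd m with ⟨v, hv⟩ | ⟨v, hv⟩ <;>
    subst hu hv <;>
    [skip; exfalso; exfalso; skip] <;>
    [omega; skip; skip; omega] <;>
    push_cast at hz <;>
    rcases Nat.even_or_odd s with ⟨w, hw⟩ | ⟨w, hw⟩ <;> subst hw <;> push_cast at hz
  · rw [sq4_even, sq4_even, sq4_odd] at hz
    exact absurd hz (by decide)
  · rw [sq4_odd, sq4_even, sq4_odd] at hz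
    exact absurd hz (by decide)
  · rw [sq4_even, sq4_odd, sq4_even] at hz
    exact absurd hz (by decide)
  · rw [sq4_odd, sq4_odd, sq4_even] at hz
    exact absurd hz (by decide)

lemma pair_to_rep (n a b : ℕ) (ha : 0 < a) (hab : a ≤ b) (hsum : a + b = n)
    (c : ℤ) (hc : (a:ℤ)*b = c*(5*c-3)/2) :
    ∃ s x : ℕ, s^2 + 10*x^2 = 10*n^2+9 ∧ x < n := by
  have h2 : (2:ℤ) ∣ c*(5*c-3) := by
    rcases Int.even_or_odd c with ⟨j, hj⟩ | ⟨j, hj⟩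
    · exact ⟨j*(5*c-3), by rw [hj]; ring⟩
    · exact ⟨c*(5*j+1), by rw [hj]; ring⟩
  have hcc : c*(5*c-3) = 2*((a:ℤ)*b) := by
    rw [hc]; exact (Int.mul_ediv_cancel' h2).symm
  refine ⟨(10*c-3).natAbs, b - a, ?_, by omega⟩
  have key : ((10*c-3).natAbs : ℤ)^2 + 10*((b - a : ℕ) : ℤ)^2 = 10*(n:ℤ)^2+9 := by
    rw [Int.natAbs_sq]
    have hba : ((b - a : ℕ) : ℤ) = (b:ℤ) - a := by
      push_cast [hab]; ring
    rw [hba]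
    have hn : (n:ℤ) = a + b := by exact_mod_cast hsum.symm
    rw [hn]
    linear_combination 20*hcc
  exact_mod_cast key

lemma rep_to_pair (n s x : ℕ) (hn : 0 < n) (h : s^2+10*x^2 = 10*n^2+9) (hx : x < n) :
    ∃ a b : ℕ, 0 < a ∧ a ≤ b ∧ a + b = n ∧ ∃ c : ℤ, (a:ℤ)*b = c*(5*c-3)/2 := by
  have hpar := parity4 s x n h
  have hs10 : s^2 % 10 = 9 := by
    have hxn : x^2 ≤ n^2 := Nat.pow_le_pow_left (le_of_lt hx) 2
    omega
  have hsm : s % 10 = 3 ∨ s % 10 = 7 := by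
    have := Nat.pow_mod s 2 10
    have h10 : s % 10 < 10 := Nat.mod_lt _ (by norm_num)
    interval_cases h' : s % 10 <;> omega
  obtain ⟨c, hc⟩ : ∃ c : ℤ, (10*c-3)^2 = (s:ℤ)^2 := by
    rcases hsm with hr | hr
    · obtain ⟨w, hw⟩ : ∃ w, s = 10*w + 3 := ⟨s/10, by omega⟩
      exact ⟨-(w:ℤ), by rw [hw]; push_cast; ring⟩
    · obtain ⟨w, hw⟩ : ∃ w, s = 10*w + 7 := ⟨s/10, by omega⟩
      exact ⟨(w:ℤ)+1, by rw [hw]; push_cast; ring⟩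
  refine ⟨(n-x)/2, (n+x)/2, by omega, by omega, by omega, c, ?_⟩
  have h2a : ((n-x)/2 : ℕ) * 2 = n - x := by omega
  have h2b : ((n+x)/2 : ℕ) * 2 = n + x := by omega
  have h2aZ : (((n-x)/2 : ℕ) : ℤ) * 2 = (n:ℤ) - x := by
    have : ((n - x : ℕ) : ℤ) = (n:ℤ) - x := by push_cast [le_of_lt hx]; ring
    rw [← this]; exact_mod_cast h2a
  have h2bZ : (((n+x)/2 : ℕ) : ℤ) * 2 = (n:ℤ) + x := by
    have hnx : ((n + x : ℕ) : ℤ) = (n:ℤ) + x := by push_cast; ring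
    rw [← hnx]; exact_mod_cast h2b
  have hS : (s:ℤ)^2 = 40*((((n-x)/2 : ℕ):ℤ)*(((n+x)/2 : ℕ):ℤ)) + 9 := by
    have hZ : (s:ℤ)^2 + 10*(x:ℤ)^2 = 10*(n:ℤ)^2+9 := by exact_mod_cast h
    linear_combination hZ - 10*((n:ℤ)+x)*h2aZ - 20*(((n-x)/2 : ℕ):ℤ)*h2bZ
  have hcc : c*(5*c-3) = 2*((((n-x)/2 : ℕ):ℤ)*(((n+x)/2 : ℕ):ℤ)) := by
    have h20 : 20*(c*(5*c-3)) = 20*(2*((((n-x)/2 : ℕ):ℤ)*(((n+x)/2 : ℕ):ℤ))) := by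
      linear_combination hc + hS
    exact mul_left_cancel₀ (by norm_num : (20:ℤ) ≠ 0) h20
  rw [hcc]
  exact (Int.mul_ediv_cancel_left _ (by norm_num)).symm

lemma rmt_zero_iff (n : ℕ) (hn : 0 < n) :
    rmt 7 1 n = 0 ↔ ¬ ∃ s x : ℕ, s^2+10*x^2 = 10*n^2+9 ∧ x < n := by
  have hfin : {p : ℕ × ℕ | 0 < p.1 ∧ p.1 ≤ p.2 ∧ p.1 + p.2 = n ∧
      ∃ c : ℤ, (((7:ℕ) = 3 ∨ (7:ℕ) = 4) → 0 < c) ∧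
        (p.1 : ℤ) * p.2 = ((1:ℕ):ℤ) * polygonal ((7:ℕ):ℤ) c}.Finite := by
    apply Set.Finite.subset ((Set.finite_Iic n).prod (Set.finite_Iic n))
    rintro ⟨a,b⟩ ⟨h1,h2,h3,_⟩
    constructor
    · simp only [Set.mem_Iic]; omega
    · simp only [Set.mem_Iic]; omega
  rw [rmt, Set.ncard_eq_zero hfin, Set.eq_empty_iff_forall_notMem]
  constructor
  · rintro hall ⟨s, x, hrep, hx⟩
    obtain ⟨a, b, ha, hab, hsum, c, hc⟩ := rep_to_pair n s x hn hrep hx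
    refine hall (a,b) ⟨ha, hab, hsum, c, fun hcon => absurd hcon (by norm_num), ?_⟩
    rw [show ((7:ℕ):ℤ) = 7 by norm_num, polygonal_seven]
    push_cast
    rw [one_mul]
    exact hc
  · rintro hnone ⟨a,b⟩ ⟨ha, hab, hsum, c, -, hc⟩
    rw [show ((7:ℕ):ℤ) = 7 by norm_num, polygonal_seven] at hc
    push_cast at hc
    rw [one_mul] at hc
    exact hnone (pair_to_rep n a b ha hab hsum c hc)

/-! ### Easy direction -/

set_option maxHeartbeats 1000000 in
lemma no_rep_of_prime_s19 (n : ℕ) (hn : 0 < n) (hp : (10*n^2+9).Prime) :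
    ¬ ∃ s x : ℕ, s^2+10*x^2 = 10*n^2+9 ∧ x < n := by
  rintro ⟨s, x, h, hx⟩
  have hNZ : (s:ℤ)^2 + 10*(x:ℤ)^2 = 10*(n:ℤ)^2+9 := by exact_mod_cast h
  have hn1 : (1:ℤ) ≤ n := by exact_mod_cast hn
  have hxZ : (x:ℤ) < n := by exact_mod_cast hx
  have hs0 : (0:ℤ) ≤ s := Int.natCast_nonneg s
  have hx0 : (0:ℤ) ≤ x := Int.natCast_nonneg x
  have hs4 : (s:ℤ) ≤ 4*n := by nlinarith
  have hId : 10*((3*(x:ℤ) - s*n)*(3*(x:ℤ) + s*n)) = ((10*n^2+9 : ℕ):ℤ)*(9 - (s:ℤ)^2) := by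
    push_cast; linear_combination 9*hNZ
  have hNdvd10 : ((10*n^2+9 : ℕ):ℤ) ∣ 10*((3*(x:ℤ) - s*n)*(3*(x:ℤ) + s*n)) :=
    ⟨9 - (s:ℤ)^2, hId⟩
  have hN2 : 10*n^2+9 ≠ 2 := by omega
  have hN5 : 10*n^2+9 ≠ 5 := by omega
  have hcopN : Nat.Coprime (10*n^2+9) 10 := by
    have h2 : Nat.Coprime (10*n^2+9) 2 := (Nat.coprime_primes hp Nat.prime_two).mpr hN2
    have h5 : Nat.Coprime (10*n^2+9) 5 := (Nat.coprime_primes hp Nat.prime_five).mpr hN5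
    exact (show (10:ℕ) = 2*5 by norm_num) ▸ Nat.Coprime.mul_right h2 h5
  have hcop : IsCoprime ((10*n^2+9 : ℕ):ℤ) ((10:ℕ):ℤ) := Nat.isCoprime_iff_coprime.mpr hcopN
  have hNdvd : ((10*n^2+9:ℕ):ℤ) ∣ (3*(x:ℤ) - s*n)*(3*(x:ℤ) + s*n) := by
    refine (IsCoprime.dvd_of_dvd_mul_left ?_ hNdvd10)
    exact_mod_cast hcop
  have hPZ : Prime ((10*n^2+9:ℕ):ℤ) := Nat.prime_iff_prime_int.mp hp
  have hNbig : ((10*n^2+9:ℕ):ℤ) = 10*(n:ℤ)^2+9 := by push_cast; ring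
  have hN0 : (0:ℤ) < ((10*n^2+9:ℕ):ℤ) := by rw [hNbig]; nlinarith
  rcases hPZ.dvd_or_dvd hNdvd with hD | hD
  · have h0 : 3*(x:ℤ) - s*n = 0 := by
      refine Int.eq_zero_of_abs_lt_dvd hD ?_
      rw [abs_lt, hNbig]
      constructor <;> nlinarith
    have h9 : ((10*n^2+9:ℕ):ℤ)*(9 - (s:ℤ)^2) = 0 := by
      rw [← hId, h0]; ring
    have hs9 : (s:ℤ)^2 = 9 := by
      rcases mul_eq_zero.mp h9 with hcon | hcon
      · exact absurd hcon (by linarith)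
      · linarith
    have hs3 : (s:ℤ) = 3 := by
      have h33 : ((s:ℤ)-3)*((s:ℤ)+3) = 0 := by linear_combination hs9
      rcases mul_eq_zero.mp h33 with hh | hh
      · linarith
      · linarith
    have : (x:ℤ) = n := by rw [hs3] at h0; linarith
    linarith
  · have h0 : 3*(x:ℤ) + s*n = 0 := by
      refine Int.eq_zero_of_abs_lt_dvd hD ?_
      rw [abs_lt, hNbig]
      constructor <;> nlinarith
    have hsn : (s:ℤ)*n = 0 := by nlinarith
    have hs00 : (s:ℤ) = 0 := by
      rcases mul_eq_zero.mp hsn with hh | hh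
      · exact hh
      · linarith
    have hx00 : (x:ℤ) = 0 := by linarith
    rw [hs00, hx00] at hNZ
    nlinarith

set_option maxHeartbeats 1000000 in
lemma no_rep_of_nine (n : ℕ) (hn : 0 < n) (p : ℕ) (hp : p.Prime) (hNp : 10*n^2+9 = 9*p) :
    ¬ ∃ s x : ℕ, s^2+10*x^2 = 10*n^2+9 ∧ x < n := by
  rintro ⟨s, x, h, hx⟩
  -- 3 ∣ n
  obtain ⟨m, rfl⟩ : 3 ∣ n := by
    have h1 : 3 ∣ 10*n^2 := ⟨3*p - 3, by omega⟩
    have h2 : 3 ∣ n^2 := (Nat.Prime.dvd_mul Nat.prime_three).mp h1 |>.resolve_left (by norm_num)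
    exact Nat.Prime.dvd_of_dvd_pow Nat.prime_three h2
  have hm1 : 1 ≤ m := by omega
  have hsq : (3*m)^2 = 9*m^2 := by ring
  have hpm : p = 10*m^2+1 := by omega
  subst hpm
  -- 3 ∣ s and 3 ∣ x
  have hZ : (s:ℤ)^2 + 10*(x:ℤ)^2 = 3*(3*(10*(m:ℤ)^2+1)) := by
    have : (s:ℤ)^2 + 10*(x:ℤ)^2 = 10*((3*m : ℕ):ℤ)^2+9 := by exact_mod_cast h
    push_cast at this
    linarith
  obtain ⟨hds, hdx⟩ := dvd3_of (s:ℤ) (x:ℤ) _ hZ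
  obtain ⟨s₁, rfl⟩ : 3 ∣ s := by exact_mod_cast hds
  obtain ⟨x₁, rfl⟩ : 3 ∣ x := by exact_mod_cast hdx
  have h₁ : s₁^2 + 10*x₁^2 = 10*m^2+1 := by
    have e1 : (3*s₁)^2 = 9*s₁^2 := by ring
    have e2 : (3*x₁)^2 = 9*x₁^2 := by ring
    omega
  have hx₁ : x₁ < m := by omega
  -- now the prime argument for p = 10 m^2 + 1
  have hPZ : Prime (((10*m^2+1 : ℕ)):ℤ) := Nat.prime_iff_prime_int.mp hp
  have hNZ : (s₁:ℤ)^2 + 10*(x₁:ℤ)^2 = 10*(m:ℤ)^2+1 := by exact_mod_cast h₁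
  have hm1Z : (1:ℤ) ≤ m := by exact_mod_cast hm1
  have hxZ : (x₁:ℤ) < m := by exact_mod_cast hx₁
  have hs0 : (0:ℤ) ≤ s₁ := Int.natCast_nonneg s₁
  have hx0 : (0:ℤ) ≤ x₁ := Int.natCast_nonneg x₁
  have hs4 : (s₁:ℤ) ≤ 4*m := by nlinarith
  have hId : 10*(((x₁:ℤ) - s₁*m)*((x₁:ℤ) + s₁*m)) = ((10*m^2+1 : ℕ):ℤ)*(1 - (s₁:ℤ)^2) := by
    push_cast; linear_combination hNZ
  have hNdvd10 : ((10*m^2+1 : ℕ):ℤ) ∣ 10*(((x₁:ℤ) - s₁*m)*((x₁:ℤ) + s₁*m)) :=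
    ⟨1 - (s₁:ℤ)^2, hId⟩
  have hN2 : 10*m^2+1 ≠ 2 := by omega
  have hN5 : 10*m^2+1 ≠ 5 := by omega
  have hcopN : Nat.Coprime (10*m^2+1) 10 := by
    have h2 : Nat.Coprime (10*m^2+1) 2 := (Nat.coprime_primes hp Nat.prime_two).mpr hN2
    have h5 : Nat.Coprime (10*m^2+1) 5 := (Nat.coprime_primes hp Nat.prime_five).mpr hN5
    exact (show (10:ℕ) = 2*5 by norm_num) ▸ Nat.Coprime.mul_right h2 h5
  have hNdvd : ((10*m^2+1:ℕ):ℤ) ∣ ((x₁:ℤ) - s₁*m)*((x₁:ℤ) + s₁*m) := by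
    refine (IsCoprime.dvd_of_dvd_mul_left ?_ hNdvd10)
    exact_mod_cast Nat.isCoprime_iff_coprime.mpr hcopN
  have hNbig : ((10*m^2+1:ℕ):ℤ) = 10*(m:ℤ)^2+1 := by push_cast; ring
  have hN0 : (0:ℤ) < ((10*m^2+1:ℕ):ℤ) := by rw [hNbig]; nlinarith
  rcases hPZ.dvd_or_dvd hNdvd with hD | hD
  · have h0 : (x₁:ℤ) - s₁*m = 0 := by
      refine Int.eq_zero_of_abs_lt_dvd hD ?_
      rw [abs_lt, hNbig]
      constructor <;> nlinarith
    have h9 : ((10*m^2+1:ℕ):ℤ)*(1 - (s₁:ℤ)^2) = 0 := by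
      rw [← hId, h0]; ring
    have hs9 : (s₁:ℤ)^2 = 1 := by
      rcases mul_eq_zero.mp h9 with hcon | hcon
      · exact absurd hcon (by linarith)
      · linarith
    have hs3 : (s₁:ℤ) = 1 := by
      have h33 : ((s₁:ℤ)-1)*((s₁:ℤ)+1) = 0 := by linear_combination hs9
      rcases mul_eq_zero.mp h33 with hh | hh
      · linarith
      · linarith
    have : (x₁:ℤ) = m := by rw [hs3] at h0; linarith
    linarith
  · have h0 : (x₁:ℤ) + s₁*m = 0 := by
      refine Int.eq_zero_of_abs_lt_dvd hD ?_
      rw [abs_lt, hNbig]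
      constructor <;> nlinarith
    have hsn : (s₁:ℤ)*m = 0 := by nlinarith
    have hs00 : (s₁:ℤ) = 0 := by
      rcases mul_eq_zero.mp hsn with hh | hh
      · exact hh
      · linarith
    have hx00 : (x₁:ℤ) = 0 := by linarith
    rw [hs00, hx00] at hNZ
    nlinarith

lemma finish_rep (n : ℕ) (A B : ℤ) (hrep : 10*(n:ℤ)^2+9 = A^2+10*B^2) (hA : A^2 ≠ 9) :
    ∃ s x : ℕ, s^2+10*x^2 = 10*n^2+9 ∧ x < n := by
  refine ⟨A.natAbs, B.natAbs, ?_, ?_⟩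
  · have : ((A.natAbs:ℤ))^2 + 10*((B.natAbs:ℤ))^2 = 10*(n:ℤ)^2+9 := by
      rw [Int.natAbs_sq, Int.natAbs_sq]; linarith
    exact_mod_cast this
  · by_contra hge
    push_neg at hge
    have h1 : A.natAbs^2 + 10*B.natAbs^2 = 10*n^2+9 := by
      have : ((A.natAbs:ℤ))^2 + 10*((B.natAbs:ℤ))^2 = 10*(n:ℤ)^2+9 := by
        rw [Int.natAbs_sq, Int.natAbs_sq]; linarith
      exact_mod_cast this
    have h2 : n^2 ≤ B.natAbs^2 := Nat.pow_le_pow_left hge 2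
    have h3 : A.natAbs^2 ≠ 9 := by
      intro hcon
      apply hA
      rw [← Int.natAbs_sq]
      exact_mod_cast hcon
    omega

lemma nat_sq_three (k : ℕ) (h : k^2 = 3) : False := by
  rcases Nat.lt_or_ge k 2 with hk | hk
  · interval_cases k <;> omega
  · have : 2^2 ≤ k^2 := Nat.pow_le_pow_left hk 2
    omega

lemma combine (n q M : ℕ) (hN : 10*n^2+9 = q*M) (hq : q.Prime)
    (hM2 : 2 ≤ M) (hM9 : M ≠ 9)
    (hqrep : isF1 q ∨ isF2 q) (hMrep : isF1 M ∨ isF2 M) :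
    ∃ s x : ℕ, s^2+10*x^2 = 10*n^2+9 ∧ x < n := by
  have hNZ : 10*(n:ℤ)^2+9 = (q:ℤ)*(M:ℤ) := by exact_mod_cast hN
  rcases hqrep with ⟨a,b,hab⟩ | ⟨a,b,hab⟩ <;> rcases hMrep with ⟨z,w,hzw⟩ | ⟨z,w,hzw⟩
  · -- F1 * F1
    by_cases h1 : (a*z - 10*b*w)^2 = 9
    · by_cases h2 : (a*z + 10*b*w)^2 = 9
      · exfalso
        have h18 : 2*(a*z)^2 + 200*(b*w)^2 = 18 := by linear_combination h1 + h2
        have hbw2 : (b*w)^2 = 0 := by nlinarith [sq_nonneg (a*z), sq_nonneg (b*w)]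
        have hbw : b*w = 0 := by
          exact pow_eq_zero_iff (n := 2) (by norm_num) |>.mp hbw2
        have haz : (a*z)^2 = 9 := by nlinarith
        rcases mul_eq_zero.mp hbw with hb | hw
        · subst hb
          exact (Nat.prime_iff_prime_int.mp hq).not_isSquare
            ⟨a, by rw [show ((q:ℕ):ℤ) = a*a by rw [hab]; ring]⟩
        · subst hw
          have hMz : (M:ℕ) = z.natAbs^2 := by
            have : ((z.natAbs:ℤ))^2 = (M:ℤ) := by rw [Int.natAbs_sq, hzw]; ring
            exact_mod_cast this.symm
          have hknine : (a*z).natAbs^2 = 9 := by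
            have : ((a*z).natAbs:ℤ)^2 = 9 := by rw [Int.natAbs_sq]; exact haz
            exact_mod_cast this
          have hk3 : (a*z).natAbs = 3 := by
            have hle : (a*z).natAbs ≤ 3 := by
              by_contra hcon
              push_neg at hcon
              have : 4^2 ≤ (a*z).natAbs^2 := Nat.pow_le_pow_left hcon 2
              omega
            interval_cases h : (a*z).natAbs <;> omega
          have hz3 : z.natAbs ∣ 3 := by
            refine ⟨a.natAbs, ?_⟩
            rw [← hk3, Int.natAbs_mul, mul_comm]
          rcases (Nat.dvd_prime Nat.prime_three).mp hz3 with hz1 | hz1 <;> rw [hz1] at hMz <;> omega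
      · exact finish_rep n (a*z + 10*b*w) (a*w - b*z)
          (by rw [hNZ, hab, hzw]; ring) h2
    · exact finish_rep n (a*z - 10*b*w) (a*w + b*z)
        (by rw [hNZ, hab, hzw]; ring) h1
  · -- F1 * F2 : impossible mod 8
    exfalso
    have hrep2 : 10*(n:ℤ)^2+9 = 2*(z*a+5*w*b)^2 + 5*(w*a-2*z*b)^2 := by
      rw [hNZ, hab, hzw]; ring
    have hcast : (2*((z*a+5*w*b : ℤ) : ZMod 8)^2 + 5*((w*a-2*z*b : ℤ) : ZMod 8)^2 : ZMod 8)
        = 10*((n:ℕ) : ZMod 8)^2+9 := by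
      have := congrArg (fun t : ℤ => (t : ZMod 8)) hrep2
      push_cast at this ⊢
      linear_combination -this
    exact mod8_lemma _ _ _ hcast
  · -- F2 * F1 : impossible mod 8
    exfalso
    have hrep2 : 10*(n:ℤ)^2+9 = 2*(a*z+5*b*w)^2 + 5*(b*z-2*a*w)^2 := by
      rw [hNZ, hab, hzw]; ring
    have hcast : (2*((a*z+5*b*w : ℤ) : ZMod 8)^2 + 5*((b*z-2*a*w : ℤ) : ZMod 8)^2 : ZMod 8)
        = 10*((n:ℕ) : ZMod 8)^2+9 := by
      have := congrArg (fun t : ℤ => (t : ZMod 8)) hrep2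
      push_cast at this ⊢
      linear_combination -this
    exact mod8_lemma _ _ _ hcast
  · -- F2 * F2
    by_cases h1 : (2*a*z + 5*b*w)^2 = 9
    · by_cases h2 : (2*a*z - 5*b*w)^2 = 9
      · exfalso
        have h18 : 8*(a*z)^2 + 50*(b*w)^2 = 18 := by linear_combination h1 + h2
        have hbw2 : (b*w)^2 = 0 := by nlinarith [sq_nonneg (a*z), sq_nonneg (b*w)]
        have haz : 8*(a*z)^2 = 18 := by nlinarith
        have h80 : (0:ℤ) ≤ (a*z)^2 := sq_nonneg _
        generalize hK : ((a:ℤ)*z)^2 = K at haz h80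
        omega
      · exact finish_rep n (2*a*z - 5*b*w) (a*w + b*z)
          (by rw [hNZ, hab, hzw]; ring) h2
    · exact finish_rep n (2*a*z + 5*b*w) (a*w - b*z)
        (by rw [hNZ, hab, hzw]; ring) h1

lemma hard (n : ℕ) (hn : 0 < n) (hNp : ¬(10*n^2+9).Prime)
    (hN9 : ∀ p : ℕ, p.Prime → 10*n^2+9 ≠ 9*p) :
    ∃ s x : ℕ, s^2+10*x^2 = 10*n^2+9 ∧ x < n := by
  have hn2 : 1 ≤ n^2 := Nat.one_le_pow _ _ hn
  by_cases h3 : 3 ∣ 10*n^2+9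
  · -- N = 9K
    obtain ⟨m, rfl⟩ : 3 ∣ n := by
      obtain ⟨c, hc⟩ := h3
      have h1 : 3 ∣ 10*n^2 := ⟨c - 3, by omega⟩
      have h2 : 3 ∣ n^2 := ((Nat.Prime.dvd_mul Nat.prime_three).mp h1).resolve_left (by norm_num)
      exact Nat.Prime.dvd_of_dvd_pow Nat.prime_three h2
    have hm1 : 1 ≤ m := by omega
    have hm2 : 1 ≤ m^2 := Nat.one_le_pow _ _ hm1
    have hNK : 10*(3*m)^2+9 = 9*(10*m^2+1) := by ring
    have hK1 : 10*m^2+1 ≠ 1 := by omega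
    have hK3 : ¬ 3 ∣ 10*m^2+1 := by
      intro hcon
      have hz : ((10*m^2+1 : ℕ) : ZMod 3) = 0 := (ZMod.natCast_eq_zero_iff _ _).mpr hcon
      push_cast at hz
      exact (by decide : ∀ a : ZMod 3, 10*a^2+1 ≠ 0) _ hz
    have hKp : ¬ (10*m^2+1).Prime := fun h => hN9 _ h hNK
    have hq : (10*m^2+1).minFac.Prime := Nat.minFac_prime hK1
    have hqK : (10*m^2+1).minFac ∣ 10*m^2+1 := Nat.minFac_dvd _
    have hKq : 10*m^2+1 = (10*m^2+1).minFac * ((10*m^2+1)/(10*m^2+1).minFac) :=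
      (Nat.mul_div_cancel' hqK).symm
    have hM01 : (10*m^2+1)/(10*m^2+1).minFac ≠ 1 := by
      intro h; rw [h, mul_one] at hKq; exact hKp (hKq ▸ hq)
    have hM00 : (10*m^2+1)/(10*m^2+1).minFac ≠ 0 := by
      have h1 : (10*m^2+1).minFac ≤ 10*m^2+1 := Nat.le_of_dvd (by omega) hqK
      have := Nat.div_pos h1 hq.pos
      omega
    have hq3 : (10*m^2+1).minFac ≠ 3 := fun h => hK3 (h ▸ hqK)
    have hKdvdN : 10*m^2+1 ∣ 10*(3*m)^2+9 := ⟨9, by rw [hNK]; ring⟩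
    have hMdvdK : (10*m^2+1)/(10*m^2+1).minFac ∣ 10*m^2+1 :=
      ⟨(10*m^2+1).minFac, by rw [Nat.div_mul_cancel hqK]⟩
    have hqrep := prime_rep _ (3*m) hq hq3 (hqK.trans hKdvdN)
    have hM0rep := divisor_rep (3*m) _ hM00 (fun h => hK3 (h.trans hMdvdK))
      (hMdvdK.trans hKdvdN)
    have hMrep := times9 _ hM0rep
    refine combine (3*m) _ (9*((10*m^2+1)/(10*m^2+1).minFac)) ?_ hq (by omega) (by omega)
      hqrep hMrep
    rw [hNK]
    conv_lhs => rw [hKq]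
    ring
  · -- 3 ∤ N
    have hN1 : 10*n^2+9 ≠ 1 := by omega
    have hq : (10*n^2+9).minFac.Prime := Nat.minFac_prime hN1
    have hqN : (10*n^2+9).minFac ∣ 10*n^2+9 := Nat.minFac_dvd _
    have hq3 : (10*n^2+9).minFac ≠ 3 := fun h => h3 (h ▸ hqN)
    set M := (10*n^2+9)/(10*n^2+9).minFac with hMdef
    have hNq : 10*n^2+9 = (10*n^2+9).minFac * M := (Nat.mul_div_cancel' hqN).symm
    have hM1 : M ≠ 1 := by
      intro h; rw [h, mul_one] at hNq; exact hNp (hNq ▸ hq)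
    have hM0 : M ≠ 0 := by
      have h1 : (10*n^2+9).minFac ≤ 10*n^2+9 := Nat.le_of_dvd (by omega) hqN
      have := Nat.div_pos h1 hq.pos
      omega
    have hMdvd : M ∣ 10*n^2+9 := ⟨(10*n^2+9).minFac, by rw [hMdef, Nat.div_mul_cancel hqN]⟩
    have h3M : ¬ 3 ∣ M := fun h => h3 (h.trans hMdvd)
    have hM9 : M ≠ 9 := by
      intro h
      apply h3M
      rw [h]
      norm_num
    have hqrep := prime_rep _ n hq hq3 hqN
    have hMrep := divisor_rep n _ hM0 h3M hMdvd
    have hM2 : 2 ≤ M := lt_of_le_of_ne (Nat.pos_of_ne_zero hM0) (Ne.symm hM1)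
    exact combine n _ _ hNq hq hM2 hM9 hqrep hMrep

theorem stmt_19 (n : ℕ) (hn : 0 < n) :
    rmt 7 1 n = 0 ↔
      (10 * n ^ 2 + 9).Prime ∨ ∃ p : ℕ, p.Prime ∧ 10 * n ^ 2 + 9 = 9 * p := by
  rw [rmt_zero_iff n hn]
  constructor
  · intro h0
    by_contra hcon
    push_neg at hcon
    exact h0 (hard n hn hcon.1 hcon.2)
  · rintro (hp | ⟨p, hp, hN⟩)
    · exact no_rep_of_prime_s19 n hn hp
    · exact no_rep_of_nine n hn p hp hN
end
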